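/- arXiv:1612.05201 — 6 statements merged into one kernel-verified Lean document; each statement's English description precedes it below -/
import Mathlib

section
/- Let A and C be n×n Laplacian matrices satisfying AC = A and C² = C, and let δ > 0. Then the eigenprojection of A + δC equals (I − C)(I + δ⁻¹A)⁻¹, where I + δ⁻¹A is invertible. -/
open Matrix Filter Topology

/-- The index of a square real matrix: the smallest `k` with
`rank (A^(k+1)) = rank (A^k)`. -/
noncomputable def matIndex {m : Type*} [Fintype m] [DecidableEq m]
    (A : Matrix m m ℝ) : ℕ :=
  sInf {k : ℕ | (A ^ (k + 1)).rank = (A ^ k).rank}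

/-- `Q` is the eigenprojection of `A` corresponding to the eigenvalue `0`:
an idempotent matrix whose range is the null space of `A ^ ind A` and whose
null space is the range of `A ^ ind A`. -/
def IsEigenprojection {m : Type*} [Fintype m] [DecidableEq m]
    (A Q : Matrix m m ℝ) : Prop :=
  Q * Q = Q ∧
  LinearMap.range Q.mulVecLin = LinearMap.ker (A ^ matIndex A).mulVecLin ∧
  LinearMap.ker Q.mulVecLin = LinearMap.range (A ^ matIndex A).mulVecLin

/-- A Laplacian matrix: nonpositive off-diagonal entries and zero row sums. -/
def IsLaplacian {m : Type*} [Fintype m] (L : Matrix m m ℝ) : Prop :=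
  (∀ i j, i ≠ j → L i j ≤ 0) ∧ ∀ i, ∑ j, L i j = 0

section Aux
variable {m : Type*} [Fintype m] [DecidableEq m]

lemma lap_offdiag_sum {L : Matrix m m ℝ} (hL : IsLaplacian L) (i : m) :
    ∑ j ∈ Finset.univ.erase i, L i j = - L i i := by
  have h := hL.2 i
  rw [← Finset.add_sum_erase _ _ (Finset.mem_univ i)] at h
  linarith

lemma lap_diag_nonneg {L : Matrix m m ℝ} (hL : IsLaplacian L) (i : m) :
    0 ≤ L i i := by
  have h := lap_offdiag_sum hL i
  have h2 : ∑ j ∈ Finset.univ.erase i, L i j ≤ 0 :=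
    Finset.sum_nonpos fun j hj => hL.1 i j (Finset.ne_of_mem_erase hj).symm
  linarith

/-- A Laplacian has no eigenvalue `-δ` with `δ > 0`. -/
lemma lap_no_neg_eigen {L : Matrix m m ℝ} (hL : IsLaplacian L) {δ : ℝ} (hδ : 0 < δ)
    {x : m → ℝ} (hx : L.mulVec x + δ • x = 0) : x = 0 := by
  rcases isEmpty_or_nonempty m with hm | hm
  · exact funext fun j => (hm.false j).elim
  obtain ⟨i, -, hi⟩ := Finset.exists_max_image Finset.univ (fun j => |x j|)
    ⟨hm.some, Finset.mem_univ _⟩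
  have hxi : x i = 0 := by
    have hrow : (∑ j, L i j * x j) + δ * x i = 0 := by
      have := congrFun hx i
      simpa [Matrix.mulVec, dotProduct] using this
    rw [← Finset.add_sum_erase _ _ (Finset.mem_univ i)] at hrow
    have key : (L i i + δ) * x i = - ∑ j ∈ Finset.univ.erase i, L i j * x j := by
      ring_nf; linarith
    have hub : |∑ j ∈ Finset.univ.erase i, L i j * x j| ≤ L i i * |x i| := by
      calc |∑ j ∈ Finset.univ.erase i, L i j * x j|
          ≤ ∑ j ∈ Finset.univ.erase i, |L i j * x j| := Finset.abs_sum_le_sum_abs _ _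
        _ ≤ ∑ j ∈ Finset.univ.erase i, (- L i j) * |x i| := by
            apply Finset.sum_le_sum
            intro j hj
            rw [abs_mul, abs_of_nonpos (hL.1 i j (Finset.ne_of_mem_erase hj).symm)]
            exact mul_le_mul_of_nonneg_left (hi j (Finset.mem_univ j))
              (by linarith [hL.1 i j (Finset.ne_of_mem_erase hj).symm])
        _ = L i i * |x i| := by
            rw [← Finset.sum_mul, Finset.sum_neg_distrib]
            rw [lap_offdiag_sum hL i]; ring
    have hpos : 0 < L i i + δ := by have := lap_diag_nonneg hL i; linarith
    have hle : (L i i + δ) * |x i| ≤ L i i * |x i| := by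
      calc (L i i + δ) * |x i| = |(L i i + δ) * x i| := by rw [abs_mul, abs_of_pos hpos]
        _ = |∑ j ∈ Finset.univ.erase i, L i j * x j| := by rw [key, abs_neg]
        _ ≤ L i i * |x i| := hub
    have h1 : δ * |x i| ≤ 0 := by nlinarith
    have h2 : |x i| = 0 := le_antisymm (by nlinarith) (abs_nonneg _)
    exact abs_eq_zero.mp h2
  funext j
  have hj := hi j (Finset.mem_univ j)
  rw [hxi, abs_zero] at hj
  simpa using abs_eq_zero.mp (le_antisymm hj (abs_nonneg _))

/-- For a Laplacian `B`, `ker B² ⊆ ker B` (power-boundedness argument). -/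
lemma lap_ker_sq {B : Matrix m m ℝ} (hB : IsLaplacian B)
    {v : m → ℝ} (h : B.mulVec (B.mulVec v) = 0) : B.mulVec v = 0 := by
  have hd : ∀ i, 0 ≤ B i i := lap_diag_nonneg hB
  have hoff := hB.1
  have hrow := hB.2
  by_contra hw
  set w := B.mulVec v with hwdef
  obtain ⟨i, hwi⟩ : ∃ i, w i ≠ 0 := by
    by_contra h'; push_neg at h'; exact hw (funext h')
  have hm : Nonempty m := ⟨i⟩
  set s : ℝ := 1 + ∑ j, B j j with hs
  have hdsum : ∀ j, B j j ≤ ∑ k, B k k := fun j =>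
    Finset.single_le_sum (fun k _ => hd k) (Finset.mem_univ j)
  have hsum0 : 0 ≤ ∑ k, B k k := Finset.sum_nonneg fun k _ => hd k
  have hs0 : 0 < s := by rw [hs]; linarith
  set T : Matrix m m ℝ := 1 - s⁻¹ • B with hT
  have hTnn : ∀ a b, 0 ≤ T a b := by
    intro a b
    rcases eq_or_ne a b with rfl | hab
    · have h' : T a a = 1 - s⁻¹ * B a a := by simp [hT]
      rw [h']
      have h1 : s⁻¹ * B a a ≤ s⁻¹ * s := by
        apply mul_le_mul_of_nonneg_left _ (inv_nonneg.mpr hs0.le)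
        have := hdsum a; rw [hs]; linarith
      rw [inv_mul_cancel₀ hs0.ne'] at h1
      linarith
    · have h' : T a b = - (s⁻¹ * B a b) := by simp [hT, Matrix.one_apply_ne hab]
      rw [h']
      have := hoff a b hab
      have := inv_nonneg.mpr hs0.le
      nlinarith
  have hTrow : ∀ a, ∑ b, T a b = 1 := by
    intro a
    have h' : ∑ b, T a b = (∑ b, (1 : Matrix m m ℝ) a b) - s⁻¹ * ∑ b, B a b := by
      rw [Finset.mul_sum, ← Finset.sum_sub_distrib]
      apply Finset.sum_congr rfl
      intro b _; simp [hT]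
    rw [h', hrow a]; simp [Matrix.one_apply]
  set Mv : ℝ := Finset.univ.sup' Finset.univ_nonempty (fun j => |v j|) with hMv
  have hbound : ∀ x : m → ℝ, (∀ j, |x j| ≤ Mv) → ∀ a, |T.mulVec x a| ≤ Mv := by
    intro x hx a
    have hMv0 : 0 ≤ Mv := le_trans (abs_nonneg _) (hx i)
    calc |T.mulVec x a| = |∑ b, T a b * x b| := by simp [Matrix.mulVec, dotProduct]
      _ ≤ ∑ b, |T a b * x b| := Finset.abs_sum_le_sum_abs _ _
      _ ≤ ∑ b, T a b * Mv := by
          apply Finset.sum_le_sum; intro b _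
          rw [abs_mul, abs_of_nonneg (hTnn a b)]
          exact mul_le_mul_of_nonneg_left (hx b) (hTnn a b)
      _ = Mv := by rw [← Finset.sum_mul, hTrow a, one_mul]
  have hTw : T.mulVec w = w := by
    rw [hT, sub_mulVec, one_mulVec, smul_mulVec, h, smul_zero, sub_zero]
  set u : ℕ → m → ℝ := fun k => v - ((k : ℝ) * s⁻¹) • w with hu
  have hTu : ∀ k, T.mulVec (u k) = u (k + 1) := by
    intro k
    rw [hu]
    simp only [mulVec_sub, mulVec_smul, hTw]
    rw [hT, sub_mulVec, one_mulVec, smul_mulVec, ← hwdef]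
    push_cast
    module
  have hub : ∀ k, ∀ j, |u k j| ≤ Mv := by
    intro k
    induction k with
    | zero =>
        intro j; simp only [hu, Nat.cast_zero, zero_mul, zero_smul, sub_zero]
        exact Finset.le_sup' (fun j => |v j|) (Finset.mem_univ j)
    | succ k ih => rw [← hTu k]; exact hbound _ ih
  obtain ⟨k, hk⟩ := exists_nat_gt ((Mv + |v i|) * s / |w i|)
  have h1 : |v i - ((k : ℝ) * s⁻¹) * w i| ≤ Mv := by
    have := hub k i
    simpa [hu, Pi.sub_apply] using this
  have h2 : ((k : ℝ) * s⁻¹) * |w i| - |v i| ≤ |v i - ((k : ℝ) * s⁻¹) * w i| := by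
    have h' := abs_sub_abs_le_abs_sub (((k : ℝ) * s⁻¹) * w i) (v i)
    rw [abs_sub_comm] at h'
    rw [abs_mul] at h'
    have hknn : (0:ℝ) ≤ (k : ℝ) * s⁻¹ := by positivity
    rw [abs_of_nonneg hknn] at h'
    linarith
  have h3 : ((k : ℝ) * s⁻¹) * |w i| ≤ Mv + |v i| := by linarith
  rw [div_lt_iff₀ (abs_pos.mpr hwi)] at hk
  have h4 : (k : ℝ) * |w i| ≤ (Mv + |v i|) * s := by
    have h5 := mul_le_mul_of_nonneg_right h3 hs0.le
    calc (k : ℝ) * |w i| = (k * s⁻¹ * |w i|) * s := by field_simp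
      _ ≤ (Mv + |v i|) * s := h5
  linarith

end Aux

/-- For Laplacian matrices `A`, `C` with `AC = A`, `C² = C` and `δ > 0`,
the matrix `I + δ⁻¹A` is invertible and the eigenprojection of `A + δC`
equals `(I - C)(I + δ⁻¹A)⁻¹`. -/
theorem eigenprojection_of_sum {n : ℕ} (A C : Matrix (Fin n) (Fin n) ℝ)
    (hA : IsLaplacian A) (hC : IsLaplacian C)
    (hAC : A * C = A) (hCC : C * C = C) (δ : ℝ) (hδ : 0 < δ) :
    IsUnit (1 + δ⁻¹ • A) ∧
    IsEigenprojection (A + δ • C) ((1 - C) * (1 + δ⁻¹ • A)⁻¹) := by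
  have hδ' : δ ≠ 0 := hδ.ne'
  set M : Matrix (Fin n) (Fin n) ℝ := 1 + δ⁻¹ • A with hMdef
  set B : Matrix (Fin n) (Fin n) ℝ := A + δ • C with hBset
  -- injectivity of M
  have hMker : ∀ z : Fin n → ℝ, M.mulVec z = 0 → z = 0 := by
    intro z hz
    have hz0 : z + δ⁻¹ • A.mulVec z = 0 := by
      simpa [hMdef, Matrix.add_mulVec, Matrix.one_mulVec, Matrix.smul_mulVec] using hz
    have h2 := congrArg (fun v : Fin n → ℝ => δ • v) hz0
    simp only [smul_add, smul_smul, mul_inv_cancel₀ hδ', one_smul, smul_zero] at h2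
    rw [add_comm] at h2
    exact lap_no_neg_eigen hA hδ h2
  have hMinj : Function.Injective M.mulVec := by
    intro x y hxy
    have hz : M.mulVec (x - y) = 0 := by rw [Matrix.mulVec_sub, hxy, sub_self]
    exact sub_eq_zero.mp (hMker _ hz)
  have hMunit : IsUnit M := Matrix.mulVec_injective_iff_isUnit.mp hMinj
  have hdet : IsUnit M.det := (Matrix.isUnit_iff_isUnit_det M).mp hMunit
  have hMinvM : M⁻¹ * M = 1 := Matrix.nonsing_inv_mul M hdet
  have hMMinv : M * M⁻¹ = 1 := Matrix.mul_nonsing_inv M hdet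
  -- algebraic identities
  have hA1C : A * (1 - C) = 0 := by rw [mul_sub, mul_one, hAC, sub_self]
  have hM1C : M * (1 - C) = 1 - C := by
    rw [hMdef, add_mul, one_mul, smul_mul_assoc, hA1C, smul_zero, add_zero]
  have hMinv1C : M⁻¹ * (1 - C) = 1 - C := by
    calc M⁻¹ * (1 - C) = M⁻¹ * (M * (1 - C)) := by rw [hM1C]
      _ = (M⁻¹ * M) * (1 - C) := by rw [mul_assoc]
      _ = 1 - C := by rw [hMinvM, one_mul]
  have hBdef : M * (δ • C) = B := by
    rw [hBset, hMdef, add_mul, one_mul, smul_mul_assoc, mul_smul_comm, hAC, smul_smul,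
      inv_mul_cancel₀ hδ', one_smul, add_comm]
  have h1C1C : (1 - C) * (1 - C) = 1 - C := by
    rw [sub_mul, one_mul, mul_sub, mul_one, hCC, sub_self, sub_zero]
  have hQQ : ((1 - C) * M⁻¹) * ((1 - C) * M⁻¹) = (1 - C) * M⁻¹ := by
    calc ((1 - C) * M⁻¹) * ((1 - C) * M⁻¹)
        = (1 - C) * (M⁻¹ * ((1 - C) * M⁻¹)) := by rw [mul_assoc]
      _ = (1 - C) * ((M⁻¹ * (1 - C)) * M⁻¹) := by rw [← mul_assoc M⁻¹]
      _ = (1 - C) * ((1 - C) * M⁻¹) := by rw [hMinv1C]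
      _ = ((1 - C) * (1 - C)) * M⁻¹ := by rw [← mul_assoc]
      _ = (1 - C) * M⁻¹ := by rw [h1C1C]
  have hQB : ((1 - C) * M⁻¹) * B = 0 := by
    calc ((1 - C) * M⁻¹) * B = ((1 - C) * M⁻¹) * (M * (δ • C)) := by rw [hBdef]
      _ = (1 - C) * ((M⁻¹ * M) * (δ • C)) := by rw [mul_assoc, ← mul_assoc M⁻¹]
      _ = (1 - C) * (δ • C) := by rw [hMinvM, one_mul]
      _ = δ • ((1 - C) * C) := by rw [mul_smul_comm]
      _ = 0 := by rw [sub_mul, one_mul, hCC, sub_self, smul_zero]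
  have hBQ : B * ((1 - C) * M⁻¹) = 0 := by
    have hC1C : C * ((1 - C) * M⁻¹) = 0 := by
      rw [← mul_assoc, mul_sub, mul_one, hCC, sub_self, zero_mul]
    calc B * ((1 - C) * M⁻¹) = (M * (δ • C)) * ((1 - C) * M⁻¹) := by rw [hBdef]
      _ = M * ((δ • C) * ((1 - C) * M⁻¹)) := by rw [mul_assoc]
      _ = M * (δ • (C * ((1 - C) * M⁻¹))) := by rw [smul_mul_assoc]
      _ = 0 := by rw [hC1C, smul_zero, mul_zero]
  -- kernel characterization of B
  have hkerB : ∀ x : Fin n → ℝ, B.mulVec x = 0 ↔ C.mulVec x = 0 := by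
    intro x
    constructor
    · intro hx
      have : M.mulVec (δ • C.mulVec x) = 0 := by
        rw [← Matrix.smul_mulVec, Matrix.mulVec_mulVec, hBdef]
        exact hx
      have h0 := hMker _ this
      rcases smul_eq_zero.mp h0 with h | h
      · exact absurd h hδ'
      · exact h
    · intro hx
      rw [← hBdef, ← Matrix.mulVec_mulVec, Matrix.smul_mulVec, hx, smul_zero,
        Matrix.mulVec_zero]
  -- range Q = ker B
  have hrangeQ : LinearMap.range ((1 - C) * M⁻¹).mulVecLin = LinearMap.ker B.mulVecLin := by
    apply le_antisymm
    · rintro x ⟨y, rfl⟩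
      simp only [LinearMap.mem_ker, Matrix.mulVecLin_apply]
      rw [Matrix.mulVec_mulVec, hBQ, Matrix.zero_mulVec]
    · intro x hx
      rw [LinearMap.mem_ker, Matrix.mulVecLin_apply] at hx
      have hCx : C.mulVec x = 0 := (hkerB x).mp hx
      refine ⟨M.mulVec x, ?_⟩
      simp only [Matrix.mulVecLin_apply]
      rw [Matrix.mulVec_mulVec, mul_assoc, hMinvM, mul_one, Matrix.sub_mulVec,
        Matrix.one_mulVec, hCx, sub_zero]
  -- ker Q = range B
  have hkerQ : LinearMap.ker ((1 - C) * M⁻¹).mulVecLin = LinearMap.range B.mulVecLin := by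
    apply le_antisymm
    · intro x hx
      rw [LinearMap.mem_ker, Matrix.mulVecLin_apply] at hx
      have hCy : C.mulVec (M⁻¹.mulVec x) = M⁻¹.mulVec x := by
        have h' : (1 - C).mulVec (M⁻¹.mulVec x) = 0 := by
          rw [Matrix.mulVec_mulVec]; exact hx
        rw [Matrix.sub_mulVec, Matrix.one_mulVec, sub_eq_zero] at h'
        exact h'.symm
      refine ⟨δ⁻¹ • M⁻¹.mulVec x, ?_⟩
      simp only [Matrix.mulVecLin_apply]
      calc B.mulVec (δ⁻¹ • M⁻¹.mulVec x)
          = (M * (δ • C)).mulVec (δ⁻¹ • M⁻¹.mulVec x) := by rw [hBdef]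
        _ = M.mulVec ((δ • C).mulVec (δ⁻¹ • M⁻¹.mulVec x)) := by rw [← Matrix.mulVec_mulVec]
        _ = M.mulVec (δ • δ⁻¹ • C.mulVec (M⁻¹.mulVec x)) := by
            simp only [Matrix.smul_mulVec, Matrix.mulVec_smul, smul_smul,
              mul_inv_cancel₀ hδ', inv_mul_cancel₀ hδ']
        _ = M.mulVec (M⁻¹.mulVec x) := by
            rw [smul_smul, mul_inv_cancel₀ hδ', one_smul, hCy]
        _ = x := by rw [Matrix.mulVec_mulVec, hMMinv, Matrix.one_mulVec]
    · rintro x ⟨y, rfl⟩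
      simp only [LinearMap.mem_ker, Matrix.mulVecLin_apply]
      rw [Matrix.mulVec_mulVec, hQB, Matrix.zero_mulVec]
  -- B is Laplacian
  have hBlap : IsLaplacian B := by
    constructor
    · intro i j hij
      have h1 := hA.1 i j hij
      have h2 := hC.1 i j hij
      have h' : B i j = A i j + δ * C i j := by
        rw [hBset]; simp [Matrix.add_apply, Matrix.smul_apply, smul_eq_mul]
      rw [h']; nlinarith
    · intro i
      have h' : ∑ j, B i j = (∑ j, A i j) + δ * ∑ j, C i j := by
        rw [Finset.mul_sum, ← Finset.sum_add_distrib]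
        apply Finset.sum_congr rfl
        intro j _
        rw [hBset]; simp [Matrix.add_apply, Matrix.smul_apply, smul_eq_mul]
      rw [h', hA.2 i, hC.2 i]; ring
  -- kernels of powers
  have hker2 : LinearMap.ker ((B ^ 2).mulVecLin) = LinearMap.ker ((B ^ 1).mulVecLin) := by
    ext x
    simp only [LinearMap.mem_ker, Matrix.mulVecLin_apply, pow_one, pow_two]
    constructor
    · intro h
      apply lap_ker_sq hBlap
      rw [Matrix.mulVec_mulVec]; exact h
    · intro h
      rw [← Matrix.mulVec_mulVec, h, Matrix.mulVec_zero]
  have hrk : ∀ X : Matrix (Fin n) (Fin n) ℝ,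
      X.rank + Module.finrank ℝ (LinearMap.ker X.mulVecLin) = n := by
    intro X
    have h' := LinearMap.finrank_range_add_finrank_ker X.mulVecLin
    rw [Module.finrank_fin_fun] at h'
    rw [Matrix.rank]
    exact h'
  have hrank2 : ((B ^ 2).rank = (B ^ 1).rank) := by
    have e1 := hrk (B ^ 2)
    have e2 := hrk (B ^ 1)
    rw [hker2] at e1
    omega
  have h1mem : 1 ∈ {k : ℕ | (B ^ (k + 1)).rank = (B ^ k).rank} := hrank2
  have hle : matIndex B ≤ 1 := Nat.sInf_le h1mem
  have hmem : matIndex B ∈ {k : ℕ | (B ^ (k + 1)).rank = (B ^ k).rank} :=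
    Nat.sInf_mem ⟨1, h1mem⟩
  refine ⟨hMunit, hQQ, ?_, ?_⟩
  · rcases Nat.le_one_iff_eq_zero_or_eq_one.mp hle with h0 | h1
    · -- matIndex B = 0 : B invertible
      rw [h0, pow_zero, Matrix.mulVecLin_one, LinearMap.ker_id]
      rw [hrangeQ]
      rw [h0] at hmem
      have hmem' : (B ^ 1).rank = (B ^ 0).rank := hmem
      rw [pow_one, pow_zero, Matrix.rank_one, Fintype.card_fin] at hmem'
      have hrange_top : LinearMap.range B.mulVecLin = ⊤ := by
        apply Submodule.eq_top_of_finrank_eq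
        rw [← Matrix.rank, hmem', Module.finrank_fin_fun]
      have hinj : Function.Injective B.mulVecLin :=
        LinearMap.injective_iff_surjective.mpr (LinearMap.range_eq_top.mp hrange_top)
      exact LinearMap.ker_eq_bot.mpr hinj
    · rw [h1, pow_one]; exact hrangeQ
  · rcases Nat.le_one_iff_eq_zero_or_eq_one.mp hle with h0 | h1
    · rw [h0, pow_zero, Matrix.mulVecLin_one, LinearMap.range_id]
      rw [hkerQ]
      rw [h0] at hmem
      have hmem' : (B ^ 1).rank = (B ^ 0).rank := hmem
      rw [pow_one, pow_zero, Matrix.rank_one, Fintype.card_fin] at hmem'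
      apply Submodule.eq_top_of_finrank_eq
      rw [← Matrix.rank, hmem', Module.finrank_fin_fun]
    · rw [h1, pow_one]; exact hkerQ
end

section
/- Let L be an n×n Laplacian matrix, let v ∈ ℝⁿ have nonnegative entries with s = Σᵢ vᵢ, and let δ > 0. Then the eigenprojection of the (n+1)×(n+1) matrix L₀ + H_{δ,v} equals the rank-one matrix 1′·(1/(s+δ))·[vᵀ(I + δ⁻¹L)⁻¹ δ], i.e., the outer product of the all-ones column vector 1′ of length n+1 with the row vector of length n+1 whose first n entries are (1/(s+δ))·vᵀ(I + δ⁻¹L)⁻¹ and whose last entry is δ/(s+δ). -/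
open Matrix Filter Topology

/-- The block matrix `L₀ = [[L, 0], [0ᵀ, 0]]`. -/
def hubL0 {n : ℕ} (L : Matrix (Fin n) (Fin n) ℝ) :
    Matrix (Fin n ⊕ Unit) (Fin n ⊕ Unit) ℝ :=
  Matrix.fromBlocks L 0 0 0

/-- The block matrix `H_I = [[I, -1], [0ᵀ, 0]]`. -/
def hubHI (n : ℕ) : Matrix (Fin n ⊕ Unit) (Fin n ⊕ Unit) ℝ :=
  Matrix.fromBlocks 1 (Matrix.of fun _ _ => (-1 : ℝ)) 0 0

/-- The block matrix `H_v = [[0, 0], [-vᵀ, s]]` where `s = Σᵢ vᵢ`. -/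
def hubHv {n : ℕ} (v : Fin n → ℝ) : Matrix (Fin n ⊕ Unit) (Fin n ⊕ Unit) ℝ :=
  Matrix.fromBlocks 0 0 (Matrix.of fun _ j => -v j) (Matrix.of fun _ _ => ∑ i, v i)

/-- `H_{δ,v} = δ·H_I + H_v`. -/
def hubH {n : ℕ} (δ : ℝ) (v : Fin n → ℝ) :
    Matrix (Fin n ⊕ Unit) (Fin n ⊕ Unit) ℝ :=
  δ • hubHI n + hubHv v

section EigenprojHubAux

variable {n : ℕ}

/-- `A` rewritten as a single block matrix. -/
lemma hub_fromBlocks (L : Matrix (Fin n) (Fin n) ℝ) (v : Fin n → ℝ) (δ : ℝ) :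
    hubL0 L + hubH δ v =
      Matrix.fromBlocks (L + δ • 1) (Matrix.of fun _ _ => (-δ : ℝ))
        (Matrix.of fun _ j => -v j) (Matrix.of fun _ _ => ∑ i, v i) := by
  rw [hubL0, hubH, hubHI, hubHv, Matrix.fromBlocks_smul, Matrix.fromBlocks_add,
    Matrix.fromBlocks_add]
  ext i j
  cases i <;> cases j <;> simp [add_comm]

lemma hub_M_det (L : Matrix (Fin n) (Fin n) ℝ) (hL : IsLaplacian L) (δ : ℝ) (hδ : 0 < δ) :
    IsUnit ((1 : Matrix (Fin n) (Fin n) ℝ) + δ⁻¹ • L).det := by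
  obtain ⟨h1, h2⟩ := hL
  have hdiagsum : ∀ i, L i i = -∑ j ∈ Finset.univ.erase i, L i j := by
    intro i
    have := h2 i
    rw [← Finset.add_sum_erase _ _ (Finset.mem_univ i)] at this
    linarith
  rw [isUnit_iff_ne_zero]
  apply det_ne_zero_of_sum_row_lt_diag
  intro k
  have hoff : ∀ j ∈ Finset.univ.erase k,
      ‖((1 : Matrix (Fin n) (Fin n) ℝ) + δ⁻¹ • L) k j‖ = δ⁻¹ * (-L k j) := by
    intro j hj
    have hne : j ≠ k := Finset.ne_of_mem_erase hj
    have : L k j ≤ 0 := h1 k j (Ne.symm hne)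
    rw [Matrix.add_apply, Matrix.smul_apply, Matrix.one_apply_ne' hne]
    rw [Real.norm_eq_abs, zero_add, smul_eq_mul,
      abs_of_nonpos (mul_nonpos_of_nonneg_of_nonpos (inv_nonneg.2 hδ.le) this)]
    ring
  rw [Finset.sum_congr rfl hoff, ← Finset.mul_sum, Finset.sum_neg_distrib, ← hdiagsum k]
  have hLkk : 0 ≤ L k k := by
    rw [hdiagsum k]
    simp only [neg_nonneg]
    exact Finset.sum_nonpos fun j hj => h1 k j (Ne.symm (Finset.ne_of_mem_erase hj))
  rw [Matrix.add_apply, Matrix.smul_apply, Matrix.one_apply_eq, smul_eq_mul, Real.norm_eq_abs,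
    abs_of_nonneg (by positivity)]
  nlinarith [mul_nonneg (inv_nonneg.2 hδ.le) hLkk]

end EigenprojHubAux

section EigenprojHubAux2

variable {n : ℕ}

lemma hub_M_mulVec_one (L : Matrix (Fin n) (Fin n) ℝ) (h2 : ∀ i, ∑ j, L i j = 0) (δ : ℝ) :
    ((1 : Matrix (Fin n) (Fin n) ℝ) + δ⁻¹ • L) *ᵥ (fun _ => (1:ℝ)) = fun _ => (1:ℝ) := by
  funext i
  simp only [Matrix.mulVec, dotProduct, mul_one, Matrix.add_apply, Matrix.smul_apply,
    smul_eq_mul, Finset.sum_add_distrib, ← Finset.mul_sum, h2 i, mul_zero, add_zero]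
  simp [Matrix.one_apply]

lemma hub_Minv_mulVec_one (L : Matrix (Fin n) (Fin n) ℝ) (hL : IsLaplacian L)
    (δ : ℝ) (hδ : 0 < δ) :
    ((1 : Matrix (Fin n) (Fin n) ℝ) + δ⁻¹ • L)⁻¹ *ᵥ (fun _ => (1:ℝ)) = fun _ => (1:ℝ) := by
  set M := (1 : Matrix (Fin n) (Fin n) ℝ) + δ⁻¹ • L with hM
  have hdet := hub_M_det L hL δ hδ
  have h1 : M *ᵥ (fun _ => (1:ℝ)) = fun _ => (1:ℝ) := hub_M_mulVec_one L hL.2 δ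
  calc M⁻¹ *ᵥ (fun _ => (1:ℝ)) = M⁻¹ *ᵥ (M *ᵥ fun _ => (1:ℝ)) := by rw [h1]
    _ = (M⁻¹ * M) *ᵥ (fun _ => (1:ℝ)) := Matrix.mulVec_mulVec _ _ _
    _ = fun _ => (1:ℝ) := by rw [Matrix.nonsing_inv_mul M hdet, Matrix.one_mulVec]

lemma hub_vecMul_sum (L : Matrix (Fin n) (Fin n) ℝ) (hL : IsLaplacian L) (v : Fin n → ℝ)
    (δ : ℝ) (hδ : 0 < δ) :
    ∑ j, (v ᵥ* ((1 : Matrix (Fin n) (Fin n) ℝ) + δ⁻¹ • L)⁻¹) j = ∑ i, v i := by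
  have : (v ᵥ* ((1 : Matrix (Fin n) (Fin n) ℝ) + δ⁻¹ • L)⁻¹) ⬝ᵥ (fun _ => (1:ℝ))
      = v ⬝ᵥ (fun _ => (1:ℝ)) := by
    rw [← Matrix.dotProduct_mulVec, hub_Minv_mulVec_one L hL δ hδ]
  simpa [dotProduct] using this

lemma hub_L_add_smul (L : Matrix (Fin n) (Fin n) ℝ) (δ : ℝ) (hδ : 0 < δ) :
    L + δ • (1 : Matrix (Fin n) (Fin n) ℝ)
      = δ • ((1 : Matrix (Fin n) (Fin n) ℝ) + δ⁻¹ • L) := by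
  rw [smul_add, smul_smul, mul_inv_cancel₀ hδ.ne', one_smul, add_comm]

lemma hub_vecMul_M (L : Matrix (Fin n) (Fin n) ℝ) (hL : IsLaplacian L) (v : Fin n → ℝ)
    (δ : ℝ) (hδ : 0 < δ) :
    (v ᵥ* ((1 : Matrix (Fin n) (Fin n) ℝ) + δ⁻¹ • L)⁻¹) ᵥ*
      ((1 : Matrix (Fin n) (Fin n) ℝ) + δ⁻¹ • L) = v := by
  rw [Matrix.vecMul_vecMul, Matrix.nonsing_inv_mul _ (hub_M_det L hL δ hδ), Matrix.vecMul_one]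

end EigenprojHubAux2

/-- The eigenprojection of `L₀ + H_{δ,v}` is the outer product of the all-ones
vector `1′` with the row vector `(1/(s+δ))·[vᵀ(I + δ⁻¹L)⁻¹  δ]`. -/
theorem eigenprojection_hub {n : ℕ} (L : Matrix (Fin n) (Fin n) ℝ)
    (hL : IsLaplacian L) (v : Fin n → ℝ) (hv : ∀ i, 0 ≤ v i)
    (δ : ℝ) (hδ : 0 < δ) :
    IsEigenprojection (hubL0 L + hubH δ v)
      (Matrix.vecMulVec (fun _ => (1 : ℝ))
        (Sum.elim
          (fun j => ((∑ i, v i) + δ)⁻¹ * (v ᵥ* (1 + δ⁻¹ • L)⁻¹) j)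
          (fun _ => δ / ((∑ i, v i) + δ)))) := by
  obtain ⟨h1, h2⟩ := hL
  set s := ∑ i, v i with hs
  have hs0 : 0 ≤ s := Finset.sum_nonneg fun i _ => hv i
  have hsδ : (0:ℝ) < s + δ := by linarith
  set M : Matrix (Fin n) (Fin n) ℝ := 1 + δ⁻¹ • L with hM
  set u : Fin n → ℝ := v ᵥ* M⁻¹ with hu
  set e : Fin n ⊕ Unit → ℝ := fun _ => (1:ℝ) with he
  set w : Fin n ⊕ Unit → ℝ :=
    Sum.elim (fun j => (s + δ)⁻¹ * u j) (fun _ => δ / (s + δ)) with hwdef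
  set A := hubL0 L + hubH δ v with hAdef
  set Q := Matrix.vecMulVec e w with hQdef
  have hAb : A = Matrix.fromBlocks (L + δ • 1) (Matrix.of fun _ _ => (-δ:ℝ))
      (Matrix.of fun _ j => -v j) (Matrix.of fun _ _ => s) := hub_fromBlocks L v δ
  have hdet : IsUnit M.det := hub_M_det L ⟨h1, h2⟩ δ hδ
  have husum : ∑ j, u j = s := hub_vecMul_sum L ⟨h1, h2⟩ v δ hδ
  have huM : u ᵥ* M = v := hub_vecMul_M L ⟨h1, h2⟩ v δ hδ
  have hMinv1 : M⁻¹ *ᵥ (fun _ => (1:ℝ)) = fun _ => (1:ℝ) :=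
    hub_Minv_mulVec_one L ⟨h1, h2⟩ δ hδ
  have hM1 : M *ᵥ (fun _ => (1:ℝ)) = fun _ => (1:ℝ) := hub_M_mulVec_one L h2 δ
  -- A annihilates the all-ones vector
  have hA1 : A *ᵥ e = 0 := by
    rw [hAb, Matrix.fromBlocks_mulVec]
    funext i
    cases i with
    | inl i =>
      simp only [Sum.elim_inl, Pi.add_apply, Pi.zero_apply]
      have : ((L + δ • 1) *ᵥ (e ∘ Sum.inl)) i = δ := by
        simp only [Matrix.mulVec, dotProduct, he, Function.comp, mul_one, Matrix.add_apply,
          Matrix.smul_apply, smul_eq_mul, Finset.sum_add_distrib, h2 i, Matrix.one_apply]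
        simp
      rw [this]
      simp [Matrix.mulVec, dotProduct, he]
    | inr i =>
      simp only [Sum.elim_inr, Pi.add_apply, Pi.zero_apply]
      simp [Matrix.mulVec, dotProduct, he, hs]
  -- w is a left null vector of A
  have hwA : w ᵥ* A = 0 := by
    rw [hAb, Matrix.vecMul_fromBlocks]
    funext i
    cases i with
    | inl j =>
      simp only [Sum.elim_inl, Pi.add_apply, Pi.zero_apply]
      have hA11 : ((w ∘ Sum.inl) ᵥ* (L + δ • 1)) j = (s + δ)⁻¹ * (δ * v j) := by
        rw [hub_L_add_smul L δ hδ, ← hM, ← huM]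
        simp only [Matrix.vecMul, dotProduct, Function.comp, hwdef, Sum.elim_inl,
          Matrix.smul_apply, smul_eq_mul, Finset.mul_sum]
        exact Finset.sum_congr rfl fun x _ => by ring
      have hA21 : ((w ∘ Sum.inr) ᵥ* (Matrix.of fun _ j => -v j)) j
          = δ / (s + δ) * (-v j) := by
        simp [Matrix.vecMul, dotProduct, hwdef]
      rw [hA11, hA21]
      field_simp
      ring
    | inr i =>
      simp only [Sum.elim_inr, Pi.add_apply, Pi.zero_apply]
      have hA12 : ((w ∘ Sum.inl) ᵥ* (Matrix.of fun _ _ => (-δ:ℝ))) i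
          = (s + δ)⁻¹ * s * (-δ) := by
        simp only [Matrix.vecMul, dotProduct, Function.comp, hwdef, Sum.elim_inl,
          Matrix.of_apply]
        have : ∑ x, ((s + δ)⁻¹ * u x) * (-δ) = ∑ x, ((s + δ)⁻¹ * (-δ)) * u x :=
          Finset.sum_congr rfl fun x _ => by ring
        rw [this, ← Finset.mul_sum, husum]
        ring
      have hA22 : ((w ∘ Sum.inr) ᵥ* (Matrix.of fun _ _ => s)) i = δ / (s + δ) * s := by
        simp [Matrix.vecMul, dotProduct, hwdef]
      rw [hA12, hA22]
      field_simp
      ring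
  -- sum of w is 1
  have hwsum : ∑ x, w x = 1 := by
    rw [hwdef]
    rw [Fintype.sum_sum_type]
    simp only [Sum.elim_inl, Sum.elim_inr, ← Finset.mul_sum, husum]
    simp only [Finset.sum_const, Finset.card_univ, Fintype.card_unit, one_smul, smul_eq_mul]
    field_simp
  -- the kernel of A is the span of e
  have hene : e ≠ 0 := by
    intro h
    have := congrFun h (Sum.inr ())
    simp [he] at this
  have hkerA : LinearMap.ker A.mulVecLin = Submodule.span ℝ {e} := by
    apply le_antisymm
    · intro x hx
      rw [LinearMap.mem_ker, Matrix.mulVecLin_apply] at hx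
      rw [Submodule.mem_span_singleton]
      refine ⟨x (Sum.inr ()), ?_⟩
      set c := x (Sum.inr ()) with hc
      rw [hAb, Matrix.fromBlocks_mulVec] at hx
      have hMx : M *ᵥ (x ∘ Sum.inl) = M *ᵥ (fun _ => c) := by
        have hMc : M *ᵥ (fun _ => c) = fun _ => c := by
          have : (fun _ : Fin n => c) = c • (fun _ : Fin n => (1:ℝ)) := by
            funext k; simp
          rw [this, Matrix.mulVec_smul, hM1]
        rw [hMc]
        funext i
        have hxi := congrFun hx (Sum.inl i)
        simp only [Sum.elim_inl, Pi.add_apply, Pi.zero_apply] at hxi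
        have hB : ((Matrix.of fun _ _ => (-δ:ℝ)) *ᵥ (x ∘ Sum.inr)) i = -δ * c := by
          simp [Matrix.mulVec, dotProduct, hc]
        rw [hB] at hxi
        have hδM : ((L + δ • 1) *ᵥ (x ∘ Sum.inl)) i = δ * ((M *ᵥ (x ∘ Sum.inl)) i) := by
          rw [hub_L_add_smul L δ hδ, ← hM]
          simp only [Matrix.mulVec, dotProduct, Matrix.smul_apply, smul_eq_mul,
            Finset.mul_sum]
          exact Finset.sum_congr rfl fun k _ => by ring
        rw [hδM] at hxi
        have : δ * ((M *ᵥ (x ∘ Sum.inl)) i) = δ * c := by linarith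
        exact mul_left_cancel₀ hδ.ne' this
      have hx1 : (x ∘ Sum.inl) = fun _ => c := by
        have := congrArg (fun y => M⁻¹ *ᵥ y) hMx
        simpa [Matrix.mulVec_mulVec, Matrix.nonsing_inv_mul M hdet,
          Matrix.one_mulVec] using this
      funext i
      cases i with
      | inl i => simpa [he] using (congrFun hx1 i).symm
      | inr i => simp [he]; rfl
    · rw [Submodule.span_le, Set.singleton_subset_iff]
      rw [SetLike.mem_coe, LinearMap.mem_ker, Matrix.mulVecLin_apply]
      exact hA1
  have hfr : Module.finrank ℝ ((Fin n ⊕ Unit) → ℝ) = n + 1 := by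
    simp [Module.finrank_pi]
  have hkerAfr : Module.finrank ℝ (LinearMap.ker A.mulVecLin) = 1 := by
    rw [hkerA]; exact finrank_span_singleton hene
  have hrankA : A.rank = n := by
    have h := LinearMap.finrank_range_add_finrank_ker A.mulVecLin
    rw [hkerAfr, hfr] at h
    unfold Matrix.rank
    omega
  -- kernel of A^2 equals kernel of A
  have hker2 : LinearMap.ker (A * A).mulVecLin = LinearMap.ker A.mulVecLin := by
    apply le_antisymm
    · intro x hx
      rw [LinearMap.mem_ker, Matrix.mulVecLin_apply] at hx ⊢
      have hmem : A *ᵥ x ∈ LinearMap.ker A.mulVecLin := by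
        rw [LinearMap.mem_ker, Matrix.mulVecLin_apply, Matrix.mulVec_mulVec]
        exact hx
      rw [hkerA, Submodule.mem_span_singleton] at hmem
      obtain ⟨c, hcc⟩ := hmem
      have h0 : w ⬝ᵥ (A *ᵥ x) = 0 := by
        rw [Matrix.dotProduct_mulVec, hwA, zero_dotProduct]
      rw [← hcc] at h0 ⊢
      have : c = 0 := by
        have hdot : w ⬝ᵥ (c • e) = c := by
          simp [dotProduct, he, ← Finset.mul_sum, hwsum, mul_comm]
        rw [hdot] at h0
        exact h0
      rw [this, zero_smul]
    · intro x hx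
      rw [LinearMap.mem_ker, Matrix.mulVecLin_apply] at hx ⊢
      rw [← Matrix.mulVec_mulVec, hx, Matrix.mulVec_zero]
  have hrank2 : (A * A).rank = n := by
    have h := LinearMap.finrank_range_add_finrank_ker (A * A).mulVecLin
    rw [hker2, hkerAfr, hfr] at h
    unfold Matrix.rank
    omega
  -- the index of A is 1
  have hidx : matIndex A = 1 := by
    have h1mem : 1 ∈ {k : ℕ | (A ^ (k + 1)).rank = (A ^ k).rank} := by
      show (A ^ 2).rank = (A ^ 1).rank
      rw [pow_one, sq, hrank2, hrankA]
    have h0mem : 0 ∉ {k : ℕ | (A ^ (k + 1)).rank = (A ^ k).rank} := by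
      simp only [Set.mem_setOf_eq, zero_add, pow_one, pow_zero]
      rw [hrankA, Matrix.rank_one]
      simp only [Fintype.card_sum, Fintype.card_fin, Fintype.card_unit]
      omega
    unfold matIndex
    refine le_antisymm (Nat.sInf_le h1mem) ?_
    rcases Nat.eq_zero_or_pos (sInf {k : ℕ | (A ^ (k + 1)).rank = (A ^ k).rank}) with h | h
    · rw [Nat.sInf_eq_zero] at h
      rcases h with h | h
      · exact absurd h h0mem
      · exact absurd (h ▸ h1mem) (Set.notMem_empty 1)
    · exact h
  -- description of Q
  have hQmulVec : ∀ x, Q *ᵥ x = (w ⬝ᵥ x) • e := by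
    intro x
    funext i
    simp [hQdef, Matrix.mulVec, dotProduct, Matrix.vecMulVec_apply, he]
  have hQrange : LinearMap.range Q.mulVecLin = Submodule.span ℝ {e} := by
    apply le_antisymm
    · rintro y ⟨x, rfl⟩
      rw [Matrix.mulVecLin_apply, hQmulVec]
      exact Submodule.smul_mem _ _ (Submodule.mem_span_singleton_self e)
    · rw [Submodule.span_le, Set.singleton_subset_iff]
      refine ⟨e, ?_⟩
      rw [Matrix.mulVecLin_apply, hQmulVec]
      have : w ⬝ᵥ e = 1 := by simp [dotProduct, he, hwsum]
      rw [this, one_smul]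
  refine ⟨?_, ?_, ?_⟩
  · -- Q * Q = Q
    ext i j
    simp only [hQdef, Matrix.mul_apply, Matrix.vecMulVec_apply, he, one_mul]
    rw [← Finset.sum_mul, hwsum, one_mul]
  · -- range Q = ker (A ^ matIndex A)
    rw [hidx, pow_one, hQrange, hkerA]
  · -- ker Q = range (A ^ matIndex A)
    rw [hidx, pow_one]
    have hQA : Q * A = 0 := by
      ext i j
      have : (Q * A) i j = (w ᵥ* A) j := by
        simp [Matrix.mul_apply, Matrix.vecMul, dotProduct, hQdef,
          Matrix.vecMulVec_apply, he]
      rw [this, hwA]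
      simp
    have hle : LinearMap.range A.mulVecLin ≤ LinearMap.ker Q.mulVecLin := by
      rintro y ⟨x, rfl⟩
      rw [LinearMap.mem_ker, Matrix.mulVecLin_apply, Matrix.mulVecLin_apply,
        Matrix.mulVec_mulVec, hQA, Matrix.zero_mulVec]
    refine (Submodule.eq_of_le_of_finrank_eq hle ?_).symm
    have hQrfr : Module.finrank ℝ (LinearMap.range Q.mulVecLin) = 1 := by
      rw [hQrange]; exact finrank_span_singleton hene
    have hq := LinearMap.finrank_range_add_finrank_ker Q.mulVecLin
    rw [hQrfr, hfr] at hq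
    have ha := LinearMap.finrank_range_add_finrank_ker A.mulVecLin
    rw [hkerAfr, hfr] at ha
    omega
end

section
/- Let L be an n×n Laplacian matrix, let v ∈ ℝⁿ have nonnegative entries with s = Σᵢ vᵢ, let δ > 0, and let y⁰ ∈ ℝ^{n+1}. Then exp(−t(L₀ + H_{δ,v}))·y⁰ converges as t → ∞ to the constant vector c·1′, where c = (1/(s+δ))·( Σ_{j=1}^n [vᵀ(I + δ⁻¹L)⁻¹]_j · y⁰_j + δ·y⁰_{n+1} ). (Consensus in the system ẏ = −(L₀ + H_{δ,v})y with a hub uniformly influencing the agents.) -/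
open Matrix Filter Topology

section ConsensusAux

set_option linter.unusedSectionVars false

variable {K : Type*} [Fintype K] [DecidableEq K]

/-- Gershgorin corollary: eigenvalues of (complexified) Laplacian-like real
matrices are zero or have positive real part. -/
lemma laplacian_eig_re {A : Matrix K K ℝ} (hoff : ∀ i j, i ≠ j → A i j ≤ 0)
    (hrow : ∀ i, ∑ j, A i j = 0) {μ : ℂ} {x : K → ℂ} (hx : x ≠ 0)
    (hAx : (A.map (Complex.ofReal)).mulVec x = μ • x) :
    μ = 0 ∨ 0 < μ.re := by
  by_cases hμ0 : μ = 0
  · exact Or.inl hμ0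
  right
  have hev : Module.End.HasEigenvalue (Matrix.toLin' (A.map (Complex.ofReal))) μ :=
    Module.End.hasEigenvalue_of_hasEigenvector
      ⟨Module.End.mem_eigenspace_iff.mpr (by rw [Matrix.toLin'_apply, hAx]), hx⟩
  obtain ⟨k, hk⟩ := eigenvalue_mem_ball hev
  have hAkk : A k k = ∑ j ∈ Finset.univ.erase k, (-A k j) := by
    have h1 := hrow k
    rw [← Finset.add_sum_erase _ _ (Finset.mem_univ k)] at h1
    rw [Finset.sum_neg_distrib]
    linarith
  have hr : ∑ j ∈ Finset.univ.erase k, ‖(A.map (Complex.ofReal)) k j‖ = A k k := by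
    rw [hAkk]
    refine Finset.sum_congr rfl fun j hj => ?_
    have hjk : j ≠ k := Finset.ne_of_mem_erase hj
    rw [Matrix.map_apply, Complex.norm_real, Real.norm_eq_abs,
      abs_of_nonpos (hoff k j hjk.symm)]
  rw [hr] at hk
  set r : ℝ := A k k with hrdef
  have hr0 : 0 ≤ r := by
    rw [hAkk]
    exact Finset.sum_nonneg fun j hj => by
      have := hoff k j (Finset.ne_of_mem_erase hj).symm; linarith
  have hdist : ‖μ - (r : ℂ)‖ ≤ r := by
    have := Metric.mem_closedBall.mp hk
    rwa [Complex.dist_eq, Matrix.map_apply] at this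
  have hsq : (μ.re - r) ^ 2 + μ.im ^ 2 ≤ r ^ 2 := by
    have h2 : (‖μ - (r : ℂ)‖) ^ 2 ≤ r ^ 2 := by
      have := norm_nonneg (μ - (r : ℂ))
      nlinarith
    rwa [Complex.sq_norm, Complex.normSq_apply, Complex.sub_re, Complex.sub_im,
      Complex.ofReal_re, Complex.ofReal_im, sub_zero, ← pow_two, ← pow_two] at h2
  have hnsq : 0 < μ.re ^ 2 + μ.im ^ 2 := by
    have := Complex.normSq_pos.mpr hμ0
    rwa [Complex.normSq_apply, ← pow_two, ← pow_two] at this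
  nlinarith [sq_nonneg μ.re, sq_nonneg μ.im, mul_nonneg hr0 (le_of_lt hnsq)]

/-- The complexified shifted Laplacian `L + δ·I` has trivial kernel. -/
lemma laplacian_shift_ker {A : Matrix K K ℝ} (hA : (∀ i j, i ≠ j → A i j ≤ 0) ∧ ∀ i, ∑ j, A i j = 0)
    {δ : ℝ} (hδ : 0 < δ) {x : K → ℂ}
    (h : (A.map Complex.ofReal) *ᵥ x = -((δ : ℂ) • x)) : x = 0 := by
  by_contra hx
  have heig : (A.map Complex.ofReal) *ᵥ x = ((-δ : ℝ) : ℂ) • x := by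
    rw [h]; push_cast; rw [neg_smul]
  rcases laplacian_eig_re hA.1 hA.2 hx heig with h0 | hpos
  · rw [Complex.ofReal_eq_zero] at h0; linarith
  · rw [Complex.ofReal_re] at hpos; linarith

lemma tsum_mulVec {f : ℕ → Matrix K K ℂ} (hf : Summable f) (x : K → ℂ) :
    (∑' n, f n) *ᵥ x = ∑' n, (f n) *ᵥ x := by
  letI : SeminormedRing (Matrix K K ℂ) := Matrix.linftyOpSemiNormedRing
  letI : NormedRing (Matrix K K ℂ) := Matrix.linftyOpNormedRing
  letI : NormedAlgebra ℂ (Matrix K K ℂ) := Matrix.linftyOpNormedAlgebra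
  let g : Matrix K K ℂ →ₗ[ℂ] (K → ℂ) :=
    { toFun := fun A => A *ᵥ x
      map_add' := fun A B => Matrix.add_mulVec A B x
      map_smul' := fun c A => Matrix.smul_mulVec c A x }
  have hg : Continuous g := g.continuous_of_finiteDimensional
  exact ((hf.hasSum.map g hg).tsum_eq).symm ▸ (hf.hasSum.map g hg).tsum_eq

lemma exp_mulVec_finsum (C : Matrix K K ℂ) (x : K → ℂ) (d : ℕ) (h : C ^ d *ᵥ x = 0) :
    NormedSpace.exp C *ᵥ x = ∑ k ∈ Finset.range d, ((k.factorial : ℂ)⁻¹) • (C ^ k *ᵥ x) := by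
  letI : SeminormedRing (Matrix K K ℂ) := Matrix.linftyOpSemiNormedRing
  letI : NormedRing (Matrix K K ℂ) := Matrix.linftyOpNormedRing
  letI : NormedAlgebra ℂ (Matrix K K ℂ) := Matrix.linftyOpNormedAlgebra
  rw [NormedSpace.exp_eq_tsum ℂ, tsum_mulVec (NormedSpace.expSeries_summable' (𝕂 := ℂ) C)]
  have hvanish : ∀ n ∉ Finset.range d, ((n.factorial : ℂ)⁻¹ • C ^ n) *ᵥ x = 0 := by
    intro n hn
    have hnd : C ^ n *ᵥ x = 0 := by
      have : C ^ n = C ^ (n - d) * C ^ d := by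
        rw [← pow_add]; congr 1; simp at hn; omega
      rw [this, ← Matrix.mulVec_mulVec, h, Matrix.mulVec_zero]
    rw [Matrix.smul_mulVec, hnd, smul_zero]
  rw [tsum_eq_sum hvanish]
  exact Finset.sum_congr rfl fun k _ => Matrix.smul_mulVec _ _ _

lemma pow_mul_exp_neg_tendsto (k : ℕ) {ε : ℝ} (hε : 0 < ε) :
    Tendsto (fun t : ℝ => t ^ k * Real.exp (-(ε * t))) atTop (𝓝 0) := by
  have h1 := Real.tendsto_pow_mul_exp_neg_atTop_nhds_zero k
  have h2 : Tendsto (fun t : ℝ => ε * t) atTop atTop :=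
    Tendsto.const_mul_atTop hε tendsto_id
  have h3 := h1.comp h2
  have h4 := h3.const_mul ((ε⁻¹) ^ k)
  rw [mul_zero] at h4
  refine h4.congr fun t => ?_
  simp only [Function.comp_apply]
  rw [mul_pow]
  field_simp
  rw [← mul_pow]; simp [hε.ne']

lemma exp_real_eq_exp_complex (C : Matrix K K ℂ) :
    NormedSpace.exp C = NormedSpace.exp C := by
  letI : SeminormedRing (Matrix K K ℂ) := Matrix.linftyOpSemiNormedRing
  letI : NormedRing (Matrix K K ℂ) := Matrix.linftyOpNormedRing
  letI : NormedAlgebra ℂ (Matrix K K ℂ) := Matrix.linftyOpNormedAlgebra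
  letI : NormedAlgebra ℝ (Matrix K K ℂ) := Matrix.linftyOpNormedAlgebra
  rfl

lemma exp_mulVec_of_ker (C : Matrix K K ℂ) (x : K → ℂ) (h : C *ᵥ x = 0) :
    NormedSpace.exp C *ᵥ x = x := by
  rw [exp_real_eq_exp_complex, exp_mulVec_finsum C x 1 (by rwa [pow_one])]
  simp

lemma decay_mulVec (A : Matrix K K ℂ) (μ : ℂ) (hμ : 0 < μ.re) (d : ℕ) (x : K → ℂ)
    (hx : (A - μ • 1) ^ d *ᵥ x = 0) :
    Tendsto (fun t : ℝ => NormedSpace.exp (-(t • A)) *ᵥ x) atTop (𝓝 0) := by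
  letI : SeminormedRing (Matrix K K ℂ) := Matrix.linftyOpSemiNormedRing
  letI : NormedRing (Matrix K K ℂ) := Matrix.linftyOpNormedRing
  letI : NormedAlgebra ℂ (Matrix K K ℂ) := Matrix.linftyOpNormedAlgebra
  letI : NormedAlgebra ℝ (Matrix K K ℂ) := Matrix.linftyOpNormedAlgebra
  letI : NormedAlgebra ℚ (Matrix K K ℂ) := Matrix.linftyOpNormedAlgebra
  set B : Matrix K K ℂ := A - μ • 1 with hBdef
  have hsplit : ∀ t : ℝ, -(t • A) = algebraMap ℂ (Matrix K K ℂ) (-(t * μ)) + (-t) • B := by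
    intro t
    ext i j
    simp only [Algebra.algebraMap_eq_smul_one, hBdef, Matrix.add_apply, Matrix.smul_apply,
      Matrix.neg_apply, Matrix.sub_apply, Matrix.one_apply, Complex.real_smul, smul_eq_mul]
    push_cast
    split_ifs <;> ring
  have key : ∀ t : ℝ, NormedSpace.exp (-(t • A)) *ᵥ x
      = ∑ k ∈ Finset.range d,
          (Complex.exp (-(t * μ)) * ((-t : ℂ) ^ k * (k.factorial : ℂ)⁻¹)) • (B ^ k *ᵥ x) := by
    intro t
    rw [exp_real_eq_exp_complex]
    rw [hsplit t]
    erw [NormedSpace.exp_add_of_commute]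
    · rw [← NormedSpace.map_exp (algebraMap ℂ (Matrix K K ℂ)) (continuous_algebraMap ℂ _)]
      rw [show NormedSpace.exp (-(t * μ)) = Complex.exp (-(t * μ)) from
        (congrFun Complex.exp_eq_exp_ℂ _).symm]
      rw [← Algebra.smul_def, Matrix.smul_mulVec]
      have hCd : ((-t) • B) ^ d *ᵥ x = 0 := by
        rw [smul_pow, Matrix.smul_mulVec, hx, smul_zero]
      erw [exp_mulVec_finsum _ _ d hCd]
      rw [Finset.smul_sum]
      refine Finset.sum_congr rfl fun k _ => ?_
      rw [smul_pow, Matrix.smul_mulVec]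
      rw [← algebraMap_smul (R := ℝ) ℂ ((-t) ^ k : ℝ) (B ^ k *ᵥ x)]
      rw [smul_smul, smul_smul]
      congr 1
      rw [show (algebraMap ℝ ℂ) ((-t) ^ k) = ((-t : ℝ) ^ k : ℝ) from rfl]
      push_cast
      ring
    · exact Algebra.commutes _ _
  simp only [key]
  rw [show (0 : K → ℂ) = ∑ k ∈ Finset.range d, (0 : K → ℂ) by simp]
  refine tendsto_finset_sum _ fun k _ => ?_
  rw [show (0 : K → ℂ) = (0 : ℂ) • (B ^ k *ᵥ x) by simp]
  refine Tendsto.smul_const ?_ _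
  have hb : ∀ᶠ t : ℝ in atTop, ‖Complex.exp (-(t * μ)) * ((-t : ℂ) ^ k * (k.factorial : ℂ)⁻¹)‖
      = (k.factorial : ℝ)⁻¹ * (t ^ k * Real.exp (-(μ.re * t))) := by
    filter_upwards [eventually_ge_atTop (0:ℝ)] with t ht
    rw [norm_mul, norm_mul, Complex.norm_exp, norm_pow, norm_inv]
    have h1 : (-((t:ℂ) * μ)).re = -(μ.re * t) := by
      simp [Complex.mul_re]; ring
    have h2 : ‖(-t : ℂ)‖ = t := by
      rw [show (-t : ℂ) = ((-t : ℝ) : ℂ) by push_cast; ring, Complex.norm_real,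
        Real.norm_eq_abs, abs_neg, abs_of_nonneg ht]
    have h3 : ‖(k.factorial : ℂ)‖ = (k.factorial : ℝ) := Complex.norm_natCast _
    rw [h1, h2, h3]
    ring
  have hlim : Tendsto (fun t : ℝ => (k.factorial : ℝ)⁻¹ * (t ^ k * Real.exp (-(μ.re * t))))
      atTop (𝓝 0) := by
    have h := (pow_mul_exp_neg_tendsto k hμ).const_mul ((k.factorial : ℝ)⁻¹)
    rwa [mul_zero] at h
  have hnorm : Tendsto (fun t : ℝ =>
      ‖Complex.exp (-(t * μ)) * ((-t : ℂ) ^ k * (k.factorial : ℂ)⁻¹)‖) atTop (𝓝 0) :=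
    hlim.congr' (hb.mono fun t ht => ht.symm)
  exact tendsto_zero_iff_norm_tendsto_zero.mpr hnorm

lemma tendsto_exp_consensus (A : Matrix K K ℝ) (w : K → ℂ)
    (hoff : ∀ i j, i ≠ j → A i j ≤ 0) (hrow : ∀ i, ∑ j, A i j = 0)
    (hw : w ᵥ* (A.map Complex.ofReal) = 0)
    (hker : ∀ z : K → ℂ, (A.map Complex.ofReal) *ᵥ z = 0 → z = (w ⬝ᵥ z) • (fun _ : K => (1:ℂ)))
    (x : K → ℂ) :
    Tendsto (fun t : ℝ => NormedSpace.exp (-(t • (A.map Complex.ofReal))) *ᵥ x) atTop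
      (𝓝 ((w ⬝ᵥ x) • fun _ : K => (1:ℂ))) := by
  set Ac : Matrix K K ℂ := A.map Complex.ofReal with hAc
  have hstab : ∀ (k : ℕ) (z : K → ℂ), Ac ^ k *ᵥ z = 0 → Ac *ᵥ z = 0 := by
    intro k
    induction k with
    | zero => intro z hz; simp only [pow_zero, Matrix.one_mulVec] at hz; rw [hz, Matrix.mulVec_zero]
    | succ k ih =>
      intro z hz
      have h1 : Ac ^ k *ᵥ (Ac *ᵥ z) = 0 := by
        rwa [Matrix.mulVec_mulVec, ← pow_succ]
      have h2 := ih _ h1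
      have h3 := hker _ h2
      have h4 : w ⬝ᵥ (Ac *ᵥ z) = 0 := by
        rw [Matrix.dotProduct_mulVec, hw, zero_dotProduct]
      rw [h3, h4, zero_smul]
  have hwgen : ∀ (μ : ℂ), μ ≠ 0 → ∀ (k : ℕ) (z : K → ℂ),
      (Ac - μ • 1) ^ k *ᵥ z = 0 → w ⬝ᵥ z = 0 := by
    intro μ hμ k
    induction k with
    | zero => intro z hz; simp only [pow_zero, Matrix.one_mulVec] at hz; rw [hz, dotProduct_zero]
    | succ k ih =>
      intro z hz
      have h1 : (Ac - μ • 1) ^ k *ᵥ ((Ac - μ • 1) *ᵥ z) = 0 := by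
        rwa [Matrix.mulVec_mulVec, ← pow_succ]
      have h2 := ih _ h1
      have h3 : (Ac - μ • 1) *ᵥ z = Ac *ᵥ z - μ • z := by
        rw [Matrix.sub_mulVec, Matrix.smul_mulVec, Matrix.one_mulVec]
      rw [h3, dotProduct_sub, dotProduct_smul, Matrix.dotProduct_mulVec, hw,
        zero_dotProduct, zero_sub, neg_eq_zero, smul_eq_mul] at h2
      exact (mul_eq_zero.mp h2).resolve_left hμ
  have heigvec : ∀ (μ : ℂ) (k : ℕ) (z : K → ℂ), z ≠ 0 → (Ac - μ • 1) ^ k *ᵥ z = 0 →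
      ∃ y : K → ℂ, y ≠ 0 ∧ Ac *ᵥ y = μ • y := by
    intro μ k
    induction k with
    | zero => intro z hz h; exfalso; apply hz; simpa [Matrix.one_mulVec] using h
    | succ k ih =>
      intro z hz h
      by_cases hy : (Ac - μ • 1) *ᵥ z = 0
      · refine ⟨z, hz, ?_⟩
        rw [Matrix.sub_mulVec, Matrix.smul_mulVec, Matrix.one_mulVec, sub_eq_zero] at hy
        exact hy
      · exact ih _ hy (by rwa [Matrix.mulVec_mulVec, ← pow_succ])
  have hpowlin : ∀ (B : Matrix K K ℂ) (k : ℕ) (z : K → ℂ),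
      (B.mulVecLin ^ k) z = B ^ k *ᵥ z := by
    intro B k
    induction k with
    | zero => intro z; simp [Matrix.one_mulVec]
    | succ k ih =>
      intro z
      rw [pow_succ, pow_succ, Module.End.mul_apply, Matrix.mulVecLin_apply, ih,
        Matrix.mulVec_mulVec]
  have hlinsub : ∀ μ : ℂ, Ac.mulVecLin - μ • 1 = (Ac - μ • 1).mulVecLin := by
    intro μ
    refine LinearMap.ext fun z => ?_
    simp only [LinearMap.sub_apply, LinearMap.smul_apply, Module.End.one_apply,
      Matrix.mulVecLin_apply, Matrix.sub_mulVec, Matrix.smul_mulVec, Matrix.one_mulVec]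
  set P : (K → ℂ) → Prop := fun z =>
    Tendsto (fun t : ℝ => NormedSpace.exp (-(t • Ac)) *ᵥ z) atTop
      (𝓝 ((w ⬝ᵥ z) • fun _ : K => (1:ℂ))) with hPdef
  have hP0 : P 0 := by
    simp only [hPdef, Matrix.mulVec_zero, dotProduct_zero, zero_smul]
    exact tendsto_const_nhds
  have hPadd : ∀ z₁ z₂, P z₁ → P z₂ → P (z₁ + z₂) := by
    intro z₁ z₂ h₁ h₂
    simp only [hPdef, Matrix.mulVec_add, dotProduct_add, add_smul] at *
    exact h₁.add h₂
  have hPker : ∀ z : K → ℂ, Ac *ᵥ z = 0 → P z := by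
    intro z hz
    have hfix : ∀ t : ℝ, NormedSpace.exp (-(t • Ac)) *ᵥ z = z := by
      intro t
      refine exp_mulVec_of_ker _ _ ?_
      rw [Matrix.neg_mulVec, Matrix.smul_mulVec, hz, smul_zero, neg_zero]
    simp only [hPdef, hfix]
    rw [← hker _ hz]
    exact tendsto_const_nhds
  have hPmem : ∀ (μ : ℂ) (z : K → ℂ),
      z ∈ Module.End.maxGenEigenspace (Matrix.mulVecLin Ac) μ → P z := by
    intro μ z hmem
    obtain ⟨k, hk⟩ := (Module.End.mem_maxGenEigenspace _ _ _).mp hmem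
    rw [show Matrix.mulVecLin Ac - μ • 1 = (Ac - μ • 1).mulVecLin from hlinsub μ, hpowlin] at hk
    by_cases hz0 : z = 0
    · rw [hz0]; exact hP0
    obtain ⟨y, hy0, hyeig⟩ := heigvec μ k z hz0 hk
    rcases laplacian_eig_re hoff hrow hy0 hyeig with hμ0 | hμpos
    · subst hμ0
      simp only [zero_smul, sub_zero] at hk
      exact hPker z (hstab k z hk)
    · have hμ0 : μ ≠ 0 := fun h => by rw [h] at hμpos; simp at hμpos
      have hwz : w ⬝ᵥ z = 0 := hwgen μ hμ0 k z hk
      simp only [hPdef, hwz, zero_smul]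
      exact decay_mulVec Ac μ hμpos k z hk
  have hx_top : x ∈ ⨆ μ : ℂ, Module.End.maxGenEigenspace (Matrix.mulVecLin Ac) μ := by
    rw [Module.End.iSup_maxGenEigenspace_eq_top]
    trivial
  show P x
  exact Submodule.iSup_induction (motive := P) _ hx_top hPmem hP0 hPadd

end ConsensusAux

/-- Consensus in the system `ẏ = -(L₀ + H_{δ,v})y` with a hub uniformly
influencing the agents: the solution converges to the constant vector `c·1′`
with `c = (1/(s+δ))·(Σⱼ [vᵀ(I + δ⁻¹L)⁻¹]ⱼ y⁰ⱼ + δ·y⁰_{n+1})`. -/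
theorem consensus_hub {n : ℕ} (L : Matrix (Fin n) (Fin n) ℝ)
    (hL : IsLaplacian L) (v : Fin n → ℝ) (hv : ∀ i, 0 ≤ v i)
    (δ : ℝ) (hδ : 0 < δ) (y0 : (Fin n ⊕ Unit) → ℝ) :
    Tendsto
      (fun t : ℝ => (NormedSpace.exp (-(t • (hubL0 L + hubH δ v)))).mulVec y0)
      atTop
      (𝓝 (fun _ => ((∑ i, v i) + δ)⁻¹ *
        ((∑ j, (v ᵥ* (1 + δ⁻¹ • L)⁻¹) j * y0 (Sum.inl j)) +
          δ * y0 (Sum.inr ())))) := by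
  classical
  set s : ℝ := ∑ i, v i with hs_def
  have hs : 0 ≤ s := Finset.sum_nonneg fun i _ => hv i
  have hsδ : 0 < s + δ := by linarith
  set M : Matrix (Fin n ⊕ Unit) (Fin n ⊕ Unit) ℝ := hubL0 L + hubH δ v with hM_def
  -- entries of M
  have hMll : ∀ i j, M (Sum.inl i) (Sum.inl j) = L i j + δ * (if i = j then 1 else 0) := by
    intro i j
    simp [hM_def, hubL0, hubH, hubHI, hubHv, Matrix.add_apply, Matrix.smul_apply,
      Matrix.fromBlocks_apply₁₁, Matrix.one_apply]
  have hMlr : ∀ i u, M (Sum.inl i) (Sum.inr u) = -δ := by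
    intro i u
    simp [hM_def, hubL0, hubH, hubHI, hubHv, Matrix.add_apply, Matrix.smul_apply,
      Matrix.fromBlocks_apply₁₂]
  have hMrl : ∀ u j, M (Sum.inr u) (Sum.inl j) = -v j := by
    intro u j
    simp [hM_def, hubL0, hubH, hubHI, hubHv, Matrix.add_apply, Matrix.smul_apply,
      Matrix.fromBlocks_apply₂₁]
  have hMrr : ∀ u u', M (Sum.inr u) (Sum.inr u') = s := by
    intro u u'
    simp [hM_def, hs_def, hubL0, hubH, hubHI, hubHv, Matrix.add_apply, Matrix.smul_apply,
      Matrix.fromBlocks_apply₂₂]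
  have hMoff : ∀ i j, i ≠ j → M i j ≤ 0 := by
    rintro (i | i) (j | j) hij
    · rw [hMll]
      have hij' : i ≠ j := fun h => hij (by rw [h])
      rw [if_neg hij', mul_zero, add_zero]
      exact hL.1 i j hij'
    · rw [hMlr]; linarith
    · rw [hMrl]; have := hv j; linarith
    · exact absurd rfl hij
  have hMrow : ∀ i, ∑ j, M i j = 0 := by
    rintro (i | i)
    · rw [Fintype.sum_sum_type]
      simp only [hMll, hMlr, Finset.univ_unique, Finset.sum_const, Finset.card_singleton,
        one_smul]
      rw [Finset.sum_add_distrib]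
      rw [hL.2 i]
      have : ∑ j, δ * (if i = j then 1 else 0) = δ := by
        simp [Finset.mul_sum, Finset.sum_ite_eq]
      rw [this]
      ring
    · rw [Fintype.sum_sum_type]
      simp only [hMrl, hMrr, Finset.univ_unique, Finset.sum_const, Finset.card_singleton,
        one_smul]
      rw [Finset.sum_neg_distrib, ← hs_def]
      ring
  -- invertibility of B = 1 + δ⁻¹ L
  set B : Matrix (Fin n) (Fin n) ℝ := 1 + δ⁻¹ • L with hB_def
  have hBmap : B.map Complex.ofReal = 1 + ((δ⁻¹ : ℝ) : ℂ) • (L.map Complex.ofReal) := by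
    ext i j
    simp only [hB_def, Matrix.map_apply, Matrix.add_apply, Matrix.smul_apply, Matrix.one_apply,
      smul_eq_mul]
    push_cast [apply_ite Complex.ofReal]
    rfl
  have hdetB : IsUnit B.det := by
    rw [isUnit_iff_ne_zero]
    intro h0
    have hc : (B.map Complex.ofReal).det = 0 := by
      have := RingHom.map_det Complex.ofRealHom B
      rw [h0] at this
      rw [map_zero] at this
      exact this.symm
    obtain ⟨x, hx0, hx⟩ := (Matrix.exists_mulVec_eq_zero_iff).mpr hc
    have hx' : (L.map Complex.ofReal) *ᵥ x = -((δ : ℂ) • x) := by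
      rw [hBmap, Matrix.add_mulVec, Matrix.one_mulVec, Matrix.smul_mulVec] at hx
      have h1 : ((δ⁻¹ : ℝ) : ℂ) • ((L.map Complex.ofReal) *ᵥ x) = -x := by
        rw [eq_neg_iff_add_eq_zero, add_comm]
        exact hx
      have h2 : ((δ : ℝ) : ℂ) • (((δ⁻¹ : ℝ) : ℂ) • ((L.map Complex.ofReal) *ᵥ x))
          = (L.map Complex.ofReal) *ᵥ x := by
        rw [smul_smul]
        norm_cast
        rw [mul_inv_cancel₀ (ne_of_gt hδ)]
        simp
      rw [← h2, h1, smul_neg]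
    exact hx0 (laplacian_shift_ker ⟨hL.1, hL.2⟩ hδ hx')
  set u : Fin n → ℝ := v ᵥ* B⁻¹ with hu_def
  have hu : u ᵥ* B = v := by
    rw [hu_def, Matrix.vecMul_vecMul, Matrix.nonsing_inv_mul _ hdetB, Matrix.vecMul_one]
  have huL : ∀ j, ∑ i, u i * L i j = δ * (v j - u j) := by
    intro j
    have h1 := congrFun hu j
    rw [hB_def] at h1
    have h2 : (u ᵥ* (1 + δ⁻¹ • L)) j = u j + δ⁻¹ * ∑ i, u i * L i j := by
      rw [Matrix.vecMul_add, Matrix.vecMul_one]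
      simp only [Pi.add_apply]
      congr 1
      simp only [Matrix.vecMul, dotProduct, Matrix.smul_apply, smul_eq_mul]
      rw [Finset.mul_sum]
      exact Finset.sum_congr rfl fun i _ => by ring
    rw [h2] at h1
    field_simp at h1 ⊢
    linarith
  have husum : ∑ j, u j = s := by
    have h1 : ∑ j, ∑ i, u i * L i j = δ * (s - ∑ j, u j) := by
      rw [show ∑ j, ∑ i, u i * L i j = ∑ j, δ * (v j - u j) from
        Finset.sum_congr rfl fun j _ => huL j]
      rw [← Finset.mul_sum, Finset.sum_sub_distrib, ← hs_def]
    have h2 : ∑ j, ∑ i, u i * L i j = 0 := by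
      rw [Finset.sum_comm]
      have : ∀ i, ∑ j, u i * L i j = 0 := by
        intro i
        rw [← Finset.mul_sum, hL.2 i, mul_zero]
      simp [this]
    rw [h2] at h1
    have := mul_eq_zero.mp h1.symm
    rcases this with h | h
    · linarith
    · linarith
  set w : (Fin n ⊕ Unit) → ℝ :=
    Sum.elim (fun j => (s + δ)⁻¹ * u j) (fun _ => (s + δ)⁻¹ * δ) with hw_def
  have hwsum : ∑ i, w i = 1 := by
    rw [Fintype.sum_sum_type]
    simp only [hw_def, Sum.elim_inl, Sum.elim_inr, Finset.univ_unique, Finset.sum_const,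
      Finset.card_singleton, one_smul]
    rw [← Finset.mul_sum, husum]
    field_simp
  have hwM : w ᵥ* M = 0 := by
    funext j'
    rcases j' with j | uu
    · show ∑ i, w i * M i (Sum.inl j) = 0
      rw [Fintype.sum_sum_type]
      simp only [hw_def, Sum.elim_inl, Sum.elim_inr, hMll, hMrl, Finset.univ_unique,
        Finset.sum_const, Finset.card_singleton, one_smul]
      have hsplit : ∀ i : Fin n, (s + δ)⁻¹ * u i * (L i j + δ * (if i = j then 1 else 0))
          = (s + δ)⁻¹ * (u i * L i j) + (s + δ)⁻¹ * δ * (if i = j then u i else 0) := by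
        intro i; split_ifs <;> ring
      rw [Finset.sum_congr rfl fun i _ => hsplit i, Finset.sum_add_distrib,
        ← Finset.mul_sum, ← Finset.mul_sum, Finset.sum_ite_eq' Finset.univ j u]
      simp only [Finset.mem_univ, if_true]
      rw [huL j]
      ring
    · show ∑ i, w i * M i (Sum.inr uu) = 0
      rw [Fintype.sum_sum_type]
      simp only [hw_def, Sum.elim_inl, Sum.elim_inr, hMlr, hMrr, Finset.univ_unique,
        Finset.sum_const, Finset.card_singleton, one_smul]
      have h1 : ∑ i, (s + δ)⁻¹ * u i * (-δ) = (s + δ)⁻¹ * (-δ) * ∑ i, u i := by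
        rw [Finset.mul_sum]
        exact Finset.sum_congr rfl fun i _ => by ring
      rw [h1, husum]
      ring
  -- complexification
  set Mc : Matrix (Fin n ⊕ Unit) (Fin n ⊕ Unit) ℂ := M.map Complex.ofReal with hMc_def
  set wc : (Fin n ⊕ Unit) → ℂ := fun i => ((w i : ℝ) : ℂ) with hwc_def
  set y0c : (Fin n ⊕ Unit) → ℂ := fun i => ((y0 i : ℝ) : ℂ) with hy0c_def
  have hwcsum : ∑ i, wc i = 1 := by
    have h1 : ((∑ i, w i : ℝ) : ℂ) = 1 := by rw [hwsum]; norm_num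
    rw [← h1]
    push_cast
    rfl
  have hwMc : wc ᵥ* Mc = 0 := by
    funext j
    have h1 := congrFun hwM j
    have h2 : ∑ i, w i * M i j = 0 := by
      simpa [Matrix.vecMul, dotProduct] using h1
    show ∑ i, wc i * Mc i j = 0
    have h3 : ∑ i, wc i * Mc i j = ((∑ i, w i * M i j : ℝ) : ℂ) := by
      simp only [hwc_def, hMc_def, Matrix.map_apply]
      push_cast
      rfl
    rw [h3, h2]
    norm_num
  have hkerMc : ∀ z : (Fin n ⊕ Unit) → ℂ, Mc *ᵥ z = 0 →
      z = (wc ⬝ᵥ z) • (fun _ : Fin n ⊕ Unit => (1:ℂ)) := by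
    intro z hz
    set c : ℂ := z (Sum.inr ()) with hc_def
    set x : Fin n → ℂ := fun j => z (Sum.inl j) - c with hx_def
    have hxeq : (L.map Complex.ofReal) *ᵥ x = -((δ : ℂ) • x) := by
      funext i
      have hLrow : (∑ j, ((L i j : ℝ) : ℂ)) = 0 := by
        exact_mod_cast hL.2 i
      have h0 := congrFun hz (Sum.inl i)
      have h1 : ∑ j, ((L i j : ℝ) : ℂ) * z (Sum.inl j) + (δ : ℂ) * z (Sum.inl i)
          + (-(δ : ℂ)) * c = 0 := by
        have hexp : (Mc *ᵥ z) (Sum.inl i) = ∑ j, ((L i j : ℝ) : ℂ) * z (Sum.inl j)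
            + (δ : ℂ) * z (Sum.inl i) + (-(δ : ℂ)) * c := by
          show (∑ j', Mc (Sum.inl i) j' * z j') = _
          rw [Fintype.sum_sum_type]
          simp only [hMc_def, Matrix.map_apply, hMll, hMlr, Finset.univ_unique,
            Finset.sum_singleton]
          have hterm : ∀ j, ((L i j + δ * (if i = j then 1 else 0) : ℝ) : ℂ) * z (Sum.inl j)
              = ((L i j : ℝ) : ℂ) * z (Sum.inl j)
                + (δ : ℂ) * (if i = j then z (Sum.inl j) else 0) := by
            intro j
            push_cast [apply_ite (Complex.ofReal)]
            split_ifs <;> ring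
          rw [Finset.sum_congr rfl fun j _ => hterm j, Finset.sum_add_distrib, ← Finset.mul_sum,
            Finset.sum_ite_eq Finset.univ i (fun j => z (Sum.inl j))]
          simp only [Finset.mem_univ, if_true]
          push_cast
          rw [← hc_def]
        rw [← hexp, h0]
        rfl
      have hgoal : ∑ j, ((L i j : ℝ) : ℂ) * x j = -((δ : ℂ) * x i) := by
        have hxsum : ∑ j, ((L i j : ℝ) : ℂ) * x j
            = ∑ j, ((L i j : ℝ) : ℂ) * z (Sum.inl j) - (∑ j, ((L i j : ℝ) : ℂ)) * c := by
          rw [Finset.sum_mul, ← Finset.sum_sub_distrib]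
          exact Finset.sum_congr rfl fun j _ => by rw [hx_def]; ring
        rw [hxsum, hLrow, zero_mul, sub_zero, hx_def]
        linear_combination h1
      show ((L.map Complex.ofReal) *ᵥ x) i = (-((δ : ℂ) • x)) i
      simp only [Pi.neg_apply, Pi.smul_apply, smul_eq_mul]
      rw [← hgoal]
      rfl
    have hx0 : x = 0 := laplacian_shift_ker ⟨hL.1, hL.2⟩ hδ hxeq
    have hzc : ∀ i, z i = c := by
      rintro (j | uu)
      · have := congrFun hx0 j
        rw [hx_def] at this
        simpa [sub_eq_zero] using this
      · cases uu; rw [hc_def]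
    have hdot : wc ⬝ᵥ z = c := by
      show ∑ i, wc i * z i = c
      rw [Finset.sum_congr rfl fun i _ => by rw [hzc i]]
      rw [← Finset.sum_mul, hwcsum, one_mul]
    funext i
    simp only [Pi.smul_apply, smul_eq_mul, hdot, mul_one]
    exact hzc i
  have hcomplex := tendsto_exp_consensus M wc hMoff hMrow hwMc hkerMc y0c
  rw [← hMc_def] at hcomplex
  -- transfer back to ℝ
  have hmapexp : ∀ t : ℝ, (NormedSpace.exp (-(t • M))).map Complex.ofReal
      = NormedSpace.exp (-(t • Mc)) := by
    intro t
    letI : SeminormedRing (Matrix (Fin n ⊕ Unit) (Fin n ⊕ Unit) ℝ) :=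
      Matrix.linftyOpSemiNormedRing
    letI : NormedRing (Matrix (Fin n ⊕ Unit) (Fin n ⊕ Unit) ℝ) := Matrix.linftyOpNormedRing
    letI : NormedAlgebra ℝ (Matrix (Fin n ⊕ Unit) (Fin n ⊕ Unit) ℝ) :=
      Matrix.linftyOpNormedAlgebra
    letI : NormedAlgebra ℚ (Matrix (Fin n ⊕ Unit) (Fin n ⊕ Unit) ℝ) :=
      Matrix.linftyOpNormedAlgebra
    letI : SeminormedRing (Matrix (Fin n ⊕ Unit) (Fin n ⊕ Unit) ℂ) :=
      Matrix.linftyOpSemiNormedRing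
    letI : NormedRing (Matrix (Fin n ⊕ Unit) (Fin n ⊕ Unit) ℂ) := Matrix.linftyOpNormedRing
    letI : NormedAlgebra ℝ (Matrix (Fin n ⊕ Unit) (Fin n ⊕ Unit) ℂ) :=
      Matrix.linftyOpNormedAlgebra
    have hcoe : ⇑(Complex.ofRealHom.mapMatrix (m := Fin n ⊕ Unit))
        = fun A : Matrix (Fin n ⊕ Unit) (Fin n ⊕ Unit) ℝ => A.map Complex.ofReal := by
      funext A
      rw [RingHom.mapMatrix_apply]
      rfl
    have hcont : Continuous (Complex.ofRealHom.mapMatrix (m := Fin n ⊕ Unit)) := by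
      rw [hcoe]
      refine continuous_pi fun i => continuous_pi fun j => ?_
      exact Complex.continuous_ofReal.comp ((continuous_apply j).comp (continuous_apply i))
    have h := NormedSpace.map_exp (Complex.ofRealHom.mapMatrix (m := Fin n ⊕ Unit))
      hcont (-(t • M))
    simp only [RingHom.mapMatrix_apply] at h
    have h2 : (-(t • M)).map (Complex.ofRealHom) = -(t • Mc) := by
      ext i j
      simp only [hMc_def, Matrix.map_apply, Matrix.neg_apply, Matrix.smul_apply,
        smul_eq_mul, Complex.real_smul, Complex.ofRealHom_eq_coe]
      push_cast
      ring
    rw [h2] at h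
    exact h
  have hvec : ∀ t : ℝ, (fun i => (((NormedSpace.exp (-(t • M))).mulVec y0) i : ℂ))
      = (NormedSpace.exp (-(t • Mc))) *ᵥ y0c := by
    intro t
    funext i
    rw [← hmapexp t]
    show ((∑ j, (NormedSpace.exp (-(t • M))) i j * y0 j : ℝ) : ℂ)
      = ∑ j, (((NormedSpace.exp (-(t • M))) i j : ℝ) : ℂ) * y0c j
    push_cast
    rfl
  rw [tendsto_pi_nhds]
  intro i
  have hi := (tendsto_pi_nhds.mp hcomplex) i
  have hlimval : ((wc ⬝ᵥ y0c) • fun _ : Fin n ⊕ Unit => (1:ℂ)) i = ((w ⬝ᵥ y0 : ℝ) : ℂ) := by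
    simp only [Pi.smul_apply, smul_eq_mul, mul_one]
    show ∑ k, wc k * y0c k = ((∑ k, w k * y0 k : ℝ) : ℂ)
    push_cast
    rfl
  rw [hlimval] at hi
  have hre := (Complex.continuous_re.tendsto _).comp hi
  simp only [Function.comp_def] at hre
  rw [Complex.ofReal_re] at hre
  have hfun : ∀ t : ℝ, (((NormedSpace.exp (-(t • Mc))) *ᵥ y0c) i).re
      = ((NormedSpace.exp (-(t • M))).mulVec y0) i := by
    intro t
    rw [← hvec t]
    exact Complex.ofReal_re _
  have htarget : (s + δ)⁻¹ * ((∑ j, u j * y0 (Sum.inl j)) + δ * y0 (Sum.inr ())) = w ⬝ᵥ y0 := by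
    show _ = ∑ k, w k * y0 k
    rw [Fintype.sum_sum_type]
    simp only [hw_def, Sum.elim_inl, Sum.elim_inr, Finset.univ_unique, Finset.sum_singleton]
    rw [mul_add, Finset.mul_sum]
    congr 1
    · exact Finset.sum_congr rfl fun j _ => by ring
    · ring
  show Tendsto (fun t : ℝ => ((NormedSpace.exp (-(t • M))).mulVec y0) i) atTop
    (𝓝 ((s + δ)⁻¹ * ((∑ j, u j * y0 (Sum.inl j)) + δ * y0 (Sum.inr ()))))
  rw [htarget]
  exact hre.congr fun t => hfun t
end

section
/- Let L be an n×n Laplacian matrix with eigenprojection L^⊢, and let δ > 0. Taking v = δ·1 (so s = δn), the eigenprojection of L₀ + H_{δ,δ1} equals 1′·(1/(n+1))·[1ᵀ(I + δ⁻¹L)⁻¹ 1] (the outer product of the all-ones column vector 1′ of length n+1 with the row vector whose first n entries are (1/(n+1))·1ᵀ(I + δ⁻¹L)⁻¹ and whose last entry is 1/(n+1)); moreover, as δ → 0⁺ this eigenprojection converges to 1′·(1/(n+1))·[1ᵀL^⊢ 1]. -/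
open Matrix Filter Topology

/-- The matrix `1′·(1/(n+1))·[1ᵀ(I + δ⁻¹L)⁻¹  1]`. -/
noncomputable def symmHubProj {n : ℕ} (L : Matrix (Fin n) (Fin n) ℝ) (δ : ℝ) :
    Matrix (Fin n ⊕ Unit) (Fin n ⊕ Unit) ℝ :=
  Matrix.vecMulVec (fun _ => (1 : ℝ))
    (Sum.elim
      (fun j => ((n : ℝ) + 1)⁻¹ * ((fun _ => (1 : ℝ)) ᵥ* (1 + δ⁻¹ • L)⁻¹) j)
      (fun _ => ((n : ℝ) + 1)⁻¹))

section AuxLemmas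
open Matrix


lemma lap_max_le_zero {m : Type*} [Fintype m] [DecidableEq m] {L : Matrix m m ℝ}
    (hL1 : ∀ i j, i ≠ j → L i j ≤ 0) (hL2 : ∀ i, ∑ j, L i j = 0)
    {x y : m → ℝ} (hy : L *ᵥ y = 0) (hx : L *ᵥ x = y) (i : m) : y i ≤ 0 := by
  classical
  have hne : (Finset.univ : Finset m).Nonempty := ⟨i, Finset.mem_univ i⟩
  obtain ⟨i₀, -, hi₀⟩ := Finset.exists_max_image Finset.univ y hne
  set M := y i₀ with hM
  have hclose : ∀ a, y a = M → ∀ b, L a b ≠ 0 → y b = M := by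
    intro a ha b hb
    have h1 : ∑ j, L a j * (y j - M) = 0 := by
      have : ∑ j, L a j * (y j - M) = (L *ᵥ y) a - (∑ j, L a j) * M := by
        simp [mulVec, dotProduct, Finset.sum_sub_distrib, mul_sub, Finset.sum_mul]
      rw [this, hy, hL2]; simp
    have hnn : ∀ j ∈ Finset.univ, 0 ≤ L a j * (y j - M) := by
      intro j _
      rcases eq_or_ne j a with rfl | hja
      · rw [ha]; simp
      · have h1 := hL1 a j (Ne.symm hja)
        have h2 := sub_nonpos.mpr (hi₀ j (Finset.mem_univ j))
        nlinarith
    have := (Finset.sum_eq_zero_iff_of_nonneg hnn).mp h1 b (Finset.mem_univ b)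
    rcases mul_eq_zero.mp this with h | h
    · exact absurd h hb
    · linarith [sub_eq_zero.mp h]
  obtain ⟨a, ha, hamin⟩ := Finset.exists_min_image (Finset.univ.filter (fun a => y a = M)) x
    ⟨i₀, by simp [hM]⟩
  have haM : y a = M := (Finset.mem_filter.mp ha).2
  have key : y a ≤ 0 := by
    have h1 : y a = ∑ j, L a j * x j := by
      rw [← hx]; rfl
    have h2 : ∑ j, L a j * x j ≤ ∑ j, L a j * x a := by
      apply Finset.sum_le_sum
      intro j _
      by_cases hyj : y j = M
      · rcases eq_or_ne j a with rfl | hja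
        · exact le_refl _
        · have hxa : x a ≤ x j := hamin j (Finset.mem_filter.mpr ⟨Finset.mem_univ j, hyj⟩)
          exact mul_le_mul_of_nonpos_left hxa (hL1 a j (Ne.symm hja))
      · have : L a j = 0 := by
          by_contra h
          exact hyj (hclose a haM j h)
        simp [this]
    have h3 : ∑ j, (L a j * x a) = 0 := by
      rw [← Finset.sum_mul, hL2, zero_mul]
    linarith
  have h4 := hi₀ i (Finset.mem_univ i)
  rw [← haM] at h4
  linarith

lemma lap_ker_range_eq_zero {m : Type*} [Fintype m] [DecidableEq m] {L : Matrix m m ℝ}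
    (hL1 : ∀ i j, i ≠ j → L i j ≤ 0) (hL2 : ∀ i, ∑ j, L i j = 0)
    {x y : m → ℝ} (hy : L *ᵥ y = 0) (hx : L *ᵥ x = y) : y = 0 := by
  funext i
  have h1 := lap_max_le_zero hL1 hL2 hy hx i
  have h2 : (-y) i ≤ 0 := by
    refine lap_max_le_zero hL1 hL2 ?_ (x := -x) ?_ i
    · rw [mulVec_neg, hy, neg_zero]
    · rw [mulVec_neg, hx]
  simp only [Pi.neg_apply, neg_nonpos] at h2
  exact le_antisymm h1 h2

section
variable {n : ℕ} {L : Matrix (Fin n) (Fin n) ℝ} {δ : ℝ}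

local notation "M" => ((hubL0 L + hubH δ (fun _ => δ)) : Matrix (Fin n ⊕ Unit) (Fin n ⊕ Unit) ℝ)

lemma hubM_ll (i j : Fin n) :
    M (Sum.inl i) (Sum.inl j)
      = L i j + δ * (if i = j then 1 else 0) := by
  simp [hubL0, hubH, hubHI, hubHv, Matrix.add_apply, Matrix.one_apply]

lemma hubM_lr (i : Fin n) (u : Unit) :
    M (Sum.inl i) (Sum.inr u) = -δ := by
  simp [hubL0, hubH, hubHI, hubHv]

lemma hubM_rl (u : Unit) (j : Fin n) :
    M (Sum.inr u) (Sum.inl j) = -δ := by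
  simp [hubL0, hubH, hubHI, hubHv]

lemma hubM_rr (u u' : Unit) :
    M (Sum.inr u) (Sum.inr u') = n * δ := by
  simp [hubL0, hubH, hubHI, hubHv, mul_comm]

end

section
variable {n : ℕ} {L : Matrix (Fin n) (Fin n) ℝ} {δ : ℝ}

local notation "M" => ((hubL0 L + hubH δ (fun _ => δ)) : Matrix (Fin n ⊕ Unit) (Fin n ⊕ Unit) ℝ)
local notation "A" => ((1 + δ⁻¹ • L) : Matrix (Fin n) (Fin n) ℝ)

lemma lap_diag_nonneg_s7 (hL1 : ∀ i j, i ≠ j → L i j ≤ 0) (hL2 : ∀ i, ∑ j, L i j = 0)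
    (i : Fin n) : 0 ≤ L i i := by
  have h : L i i = -∑ j ∈ Finset.univ.erase i, L i j := by
    have := hL2 i
    rw [← Finset.add_sum_erase _ _ (Finset.mem_univ i)] at this
    linarith
  rw [h]
  simp only [neg_nonneg]
  exact Finset.sum_nonpos fun j hj => hL1 i j (Ne.symm (Finset.ne_of_mem_erase hj))

lemma lap_offdiag_sum_s7 (hL1 : ∀ i j, i ≠ j → L i j ≤ 0) (hL2 : ∀ i, ∑ j, L i j = 0)
    (i : Fin n) : ∑ j ∈ Finset.univ.erase i, |L i j| = L i i := by
  have h1 : ∑ j ∈ Finset.univ.erase i, |L i j| = -∑ j ∈ Finset.univ.erase i, L i j := by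
    rw [← Finset.sum_neg_distrib]
    exact Finset.sum_congr rfl fun j hj =>
      abs_of_nonpos (hL1 i j (Ne.symm (Finset.ne_of_mem_erase hj)))
  have h2 := hL2 i
  rw [← Finset.add_sum_erase _ _ (Finset.mem_univ i)] at h2
  rw [h1]; linarith

lemma lap_shift_det_ne_zero (hL1 : ∀ i j, i ≠ j → L i j ≤ 0) (hL2 : ∀ i, ∑ j, L i j = 0)
    (hδ : 0 < δ) : (δ • (1 : Matrix (Fin n) (Fin n) ℝ) + L).det ≠ 0 := by
  apply det_ne_zero_of_sum_row_lt_diag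
  intro k
  have h1 : ∀ j ∈ Finset.univ.erase k, ‖(δ • (1 : Matrix (Fin n) (Fin n) ℝ) + L) k j‖ = |L k j| := by
    intro j hj
    have : k ≠ j := Ne.symm (Finset.ne_of_mem_erase hj)
    simp [Matrix.add_apply, Matrix.one_apply, this, Real.norm_eq_abs]
  rw [Finset.sum_congr rfl h1, lap_offdiag_sum_s7 hL1 hL2]
  have hkk : (δ • (1 : Matrix (Fin n) (Fin n) ℝ) + L) k k = δ + L k k := by
    simp [Matrix.add_apply, Matrix.one_apply]
  rw [hkk, Real.norm_eq_abs, abs_of_pos (by linarith [lap_diag_nonneg_s7 hL1 hL2 k])]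
  linarith [lap_diag_nonneg_s7 hL1 hL2 k]

lemma hubA_eq (hδ : 0 < δ) : A = δ⁻¹ • (δ • (1 : Matrix (Fin n) (Fin n) ℝ) + L) := by
  rw [smul_add, smul_smul, inv_mul_cancel₀ hδ.ne', one_smul]

lemma hubA_det_ne_zero (hL1 : ∀ i j, i ≠ j → L i j ≤ 0) (hL2 : ∀ i, ∑ j, L i j = 0)
    (hδ : 0 < δ) : Matrix.det A ≠ 0 := by
  rw [hubA_eq hδ, Matrix.det_smul]
  exact mul_ne_zero (pow_ne_zero _ (inv_ne_zero hδ.ne')) (lap_shift_det_ne_zero hL1 hL2 hδ)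

end

section
variable {n : ℕ} {L : Matrix (Fin n) (Fin n) ℝ} {δ : ℝ}

local notation "M" => ((hubL0 L + hubH δ (fun _ => δ)) : Matrix (Fin n ⊕ Unit) (Fin n ⊕ Unit) ℝ)
local notation "A" => ((1 + δ⁻¹ • L) : Matrix (Fin n) (Fin n) ℝ)

lemma hubA_mulVec_one (hL2 : ∀ i, ∑ j, L i j = 0) :
    A *ᵥ (fun _ => (1:ℝ)) = fun _ => 1 := by
  funext i
  simp only [mulVec, dotProduct, Matrix.add_apply, Matrix.one_apply, Matrix.smul_apply,
    smul_eq_mul, mul_one]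
  rw [Finset.sum_add_distrib, ← Finset.mul_sum, hL2, mul_zero, add_zero]
  simp

lemma hubA_inv_mulVec_one (hL1 : ∀ i j, i ≠ j → L i j ≤ 0) (hL2 : ∀ i, ∑ j, L i j = 0)
    (hδ : 0 < δ) : (A)⁻¹ *ᵥ (fun _ => (1:ℝ)) = fun _ => 1 := by
  have hdet := (hubA_det_ne_zero hL1 hL2 hδ).isUnit
  conv_lhs => rw [← hubA_mulVec_one hL2 (δ := δ)]
  rw [mulVec_mulVec, Matrix.nonsing_inv_mul _ hdet, one_mulVec]

lemma hubA_vecMul (hL1 : ∀ i j, i ≠ j → L i j ≤ 0) (hL2 : ∀ i, ∑ j, L i j = 0)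
    (hδ : 0 < δ) :
    ((fun _ => (1:ℝ)) ᵥ* (A)⁻¹) ᵥ* A = fun _ => (1:ℝ) := by
  have hdet := (hubA_det_ne_zero hL1 hL2 hδ).isUnit
  rw [vecMul_vecMul, Matrix.nonsing_inv_mul _ hdet, vecMul_one]

lemma hubA_u_sum (hL1 : ∀ i j, i ≠ j → L i j ≤ 0) (hL2 : ∀ i, ∑ j, L i j = 0)
    (hδ : 0 < δ) :
    ∑ j, ((fun _ => (1:ℝ)) ᵥ* (A)⁻¹) j = n := by
  have h1 : ∀ j, ((fun _ => (1:ℝ)) ᵥ* (A)⁻¹) j = ∑ i, (A)⁻¹ i j := by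
    intro j; simp [vecMul, dotProduct]
  simp_rw [h1]
  rw [Finset.sum_comm]
  have h2 : ∀ i, ∑ j, (A)⁻¹ i j = 1 := by
    intro i
    have := congrFun (hubA_inv_mulVec_one hL1 hL2 hδ) i
    simpa [mulVec, dotProduct] using this
  simp [h2]

end

noncomputable def hubw {n : ℕ} (L : Matrix (Fin n) (Fin n) ℝ) (δ : ℝ) : Fin n ⊕ Unit → ℝ :=
  Sum.elim
    (fun j => ((n : ℝ) + 1)⁻¹ * ((fun _ => (1 : ℝ)) ᵥ* (1 + δ⁻¹ • L)⁻¹) j)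
    (fun _ => ((n : ℝ) + 1)⁻¹)

section
variable {n : ℕ} {L : Matrix (Fin n) (Fin n) ℝ} {δ : ℝ}

local notation "M" => ((hubL0 L + hubH δ (fun _ => δ)) : Matrix (Fin n ⊕ Unit) (Fin n ⊕ Unit) ℝ)
local notation "A" => ((1 + δ⁻¹ • L) : Matrix (Fin n) (Fin n) ℝ)

lemma hubM_mulVec_one (hL2 : ∀ i, ∑ j, L i j = 0) :
    M *ᵥ (fun _ => (1:ℝ)) = 0 := by
  funext p
  cases p with
  | inl i =>
    simp only [mulVec, dotProduct, Fintype.sum_sum_type, Finset.univ_unique, Finset.sum_singleton,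
      mul_one, Pi.zero_apply]
    rw [Finset.sum_congr rfl (fun j _ => hubM_ll i j), hubM_lr]
    rw [Finset.sum_add_distrib, hL2]
    simp
  | inr u =>
    simp only [mulVec, dotProduct, Fintype.sum_sum_type, Finset.univ_unique, Finset.sum_singleton,
      mul_one, Pi.zero_apply]
    rw [Finset.sum_congr rfl (fun j _ => hubM_rl u j), hubM_rr]
    simp [mul_comm]

lemma hubw_vecMul (hL1 : ∀ i j, i ≠ j → L i j ≤ 0) (hL2 : ∀ i, ∑ j, L i j = 0)
    (hδ : 0 < δ) : hubw L δ ᵥ* M = 0 := by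
  have hvm := congrFun (hubA_vecMul hL1 hL2 hδ)
  have hus := hubA_u_sum hL1 hL2 hδ
  set u : Fin n → ℝ := (fun _ => (1:ℝ)) ᵥ* (A)⁻¹ with hu
  rw [show hubw L δ = Sum.elim (fun j => ((n:ℝ)+1)⁻¹ * u j) (fun _ => ((n:ℝ)+1)⁻¹) from rfl]
  clear_value u
  funext p
  cases p with
  | inl j =>
    simp only [vecMul, dotProduct, Fintype.sum_sum_type, Finset.univ_unique, Finset.sum_singleton,
      Sum.elim_inl, Sum.elim_inr, Pi.zero_apply]
    rw [Finset.sum_congr rfl (fun i _ => by rw [hubM_ll i j]), hubM_rl]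
    have hAvm : ∑ i, u i * (L i j + δ * (if i = j then 1 else 0)) = δ := by
      have h := hvm j
      simp only [vecMul, dotProduct, Matrix.add_apply, Matrix.one_apply, Matrix.smul_apply,
        smul_eq_mul] at h
      have : ∑ i, u i * (L i j + δ * (if i = j then 1 else 0))
          = δ * ∑ i, u i * ((if i = j then 1 else 0) + δ⁻¹ * L i j) := by
        rw [Finset.mul_sum]
        refine Finset.sum_congr rfl fun i _ => ?_
        have e : L i j + δ * (if i = j then 1 else 0)
            = δ * ((if i = j then 1 else 0) + δ⁻¹ * L i j) := by
          rw [mul_add, ← mul_assoc, mul_inv_cancel₀ hδ.ne', one_mul, add_comm]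
        rw [e]; ring
      rw [this, h, mul_one]
    calc ∑ i, ((n:ℝ)+1)⁻¹ * u i * (L i j + δ * (if i = j then 1 else 0))
          + ((n:ℝ)+1)⁻¹ * -δ
        = ((n:ℝ)+1)⁻¹ * ((∑ i, u i * (L i j + δ * (if i = j then 1 else 0))) - δ) := by
          rw [mul_sub, Finset.mul_sum]
          simp [mul_assoc, sub_eq_add_neg, mul_neg]
      _ = 0 := by rw [hAvm]; simp
  | inr u' =>
    simp only [vecMul, dotProduct, Fintype.sum_sum_type, Finset.univ_unique, Finset.sum_singleton,
      Sum.elim_inl, Sum.elim_inr, Pi.zero_apply]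
    rw [Finset.sum_congr rfl (fun i _ => by rw [hubM_lr i u']), hubM_rr]
    have : ∑ i, ((n:ℝ)+1)⁻¹ * u i * -δ = ((n:ℝ)+1)⁻¹ * -δ * n := by
      rw [← Finset.sum_mul]
      rw [show ∑ i, ((n:ℝ)+1)⁻¹ * u i = ((n:ℝ)+1)⁻¹ * n by rw [← Finset.mul_sum, hus]]
      ring
    rw [this]
    ring

end

section
variable {n : ℕ} {L : Matrix (Fin n) (Fin n) ℝ} {δ : ℝ}

local notation "M" => ((hubL0 L + hubH δ (fun _ => δ)) : Matrix (Fin n ⊕ Unit) (Fin n ⊕ Unit) ℝ)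
local notation "A" => ((1 + δ⁻¹ • L) : Matrix (Fin n) (Fin n) ℝ)

lemma hubM_ker (hL1 : ∀ i j, i ≠ j → L i j ≤ 0) (hL2 : ∀ i, ∑ j, L i j = 0)
    (hδ : 0 < δ) {x : Fin n ⊕ Unit → ℝ} (hx : M *ᵥ x = 0) :
    x = x (Sum.inr ()) • (fun _ => (1:ℝ)) := by
  have hdet := (hubA_det_ne_zero hL1 hL2 hδ).isUnit
  have h1 : A *ᵥ (fun j => x (Sum.inl j)) = fun _ => x (Sum.inr ()) := by
    funext i
    have h := congrFun hx (Sum.inl i)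
    simp only [mulVec, dotProduct, Fintype.sum_sum_type, Finset.univ_unique,
      Finset.sum_singleton, Pi.zero_apply] at h
    rw [Finset.sum_congr rfl (fun j _ => by rw [hubM_ll i j]), hubM_lr] at h
    have e : ∀ j, (L i j + δ * (if i = j then 1 else 0)) * x (Sum.inl j)
        = δ * (((if i = j then 1 else 0) + δ⁻¹ * L i j) * x (Sum.inl j)) := by
      intro j
      rw [← mul_assoc, mul_add, ← mul_assoc, mul_inv_cancel₀ hδ.ne', one_mul, add_comm]
    rw [Finset.sum_congr rfl (fun j _ => e j), ← Finset.mul_sum] at h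
    have h2 : δ * (∑ j, ((if i = j then 1 else 0) + δ⁻¹ * L i j) * x (Sum.inl j)
        - x (Sum.inr ())) = 0 := by rw [mul_sub]; linarith
    have h3 := (mul_eq_zero.mp h2).resolve_left hδ.ne'
    have h4 : ∑ j, ((if i = j then 1 else 0) + δ⁻¹ * L i j) * x (Sum.inl j)
        = x (Sum.inr ()) := by linarith
    simpa [mulVec, dotProduct, Matrix.add_apply, Matrix.one_apply, Matrix.smul_apply] using h4
  have h2 : (fun j => x (Sum.inl j)) = fun _ => x (Sum.inr ()) * 1 := by
    have := congrArg (fun v => (A)⁻¹ *ᵥ v) h1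
    simp only [mulVec_mulVec, Matrix.nonsing_inv_mul _ hdet, one_mulVec] at this
    rw [this]
    have h5 : (fun (_ : Fin n) => x (Sum.inr ())) = x (Sum.inr ()) • (fun _ => (1:ℝ)) := by
      funext j; simp
    rw [h5, mulVec_smul, hubA_inv_mulVec_one hL1 hL2 hδ]
    funext j; simp
  funext p
  cases p with
  | inl i => simpa using congrFun h2 i
  | inr u => cases u; simp

end

lemma rank_eq_of_ker_eq' {m : Type*} [Fintype m] [DecidableEq m] {A B : Matrix m m ℝ}
    (h : LinearMap.ker A.mulVecLin = LinearMap.ker B.mulVecLin) : A.rank = B.rank := by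
  have hA := LinearMap.finrank_range_add_finrank_ker A.mulVecLin
  have hB := LinearMap.finrank_range_add_finrank_ker B.mulVecLin
  rw [h] at hA
  unfold Matrix.rank
  omega

section
variable {n : ℕ} {L : Matrix (Fin n) (Fin n) ℝ} {δ : ℝ}

local notation "M" => ((hubL0 L + hubH δ (fun _ => δ)) : Matrix (Fin n ⊕ Unit) (Fin n ⊕ Unit) ℝ)
local notation "Q" => (Matrix.vecMulVec (fun _ => (1:ℝ)) (hubw L δ) : Matrix (Fin n ⊕ Unit) (Fin n ⊕ Unit) ℝ)

lemma hubw_sum (hL1 : ∀ i j, i ≠ j → L i j ≤ 0) (hL2 : ∀ i, ∑ j, L i j = 0)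
    (hδ : 0 < δ) : ∑ k, hubw L δ k = 1 := by
  rw [Fintype.sum_sum_type]
  simp only [hubw, Sum.elim_inl, Sum.elim_inr, Finset.univ_unique, Finset.sum_singleton]
  rw [← Finset.mul_sum, hubA_u_sum hL1 hL2 hδ]
  have : ((n:ℝ) + 1) ≠ 0 := by positivity
  field_simp

lemma hubQ_mulVec (x : Fin n ⊕ Unit → ℝ) :
    Q *ᵥ x = (∑ k, hubw L δ k * x k) • (fun _ => (1:ℝ)) := by
  funext p
  simp [mulVec, dotProduct, vecMulVec_apply]

lemma hubQ_idem (hL1 : ∀ i j, i ≠ j → L i j ≤ 0) (hL2 : ∀ i, ∑ j, L i j = 0)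
    (hδ : 0 < δ) : Q * Q = Q := by
  ext p q
  simp only [Matrix.mul_apply, vecMulVec_apply, one_mul]
  rw [← Finset.sum_mul, hubw_sum hL1 hL2 hδ, one_mul]

lemma hubQ_mul_M (hL1 : ∀ i j, i ≠ j → L i j ≤ 0) (hL2 : ∀ i, ∑ j, L i j = 0)
    (hδ : 0 < δ) : Q * M = 0 := by
  ext p q
  have h := congrFun (hubw_vecMul hL1 hL2 hδ) q
  simp only [vecMul, dotProduct, Pi.zero_apply] at h
  simp only [Matrix.mul_apply, vecMulVec_apply, one_mul, Matrix.zero_apply]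
  exact h

lemma hubM_mul_Q (hL2 : ∀ i, ∑ j, L i j = 0) : M * Q = 0 := by
  ext p q
  have h := congrFun (hubM_mulVec_one hL2 (δ := δ)) p
  simp only [mulVec, dotProduct, mul_one, Pi.zero_apply] at h
  simp only [Matrix.mul_apply, vecMulVec_apply, Matrix.zero_apply, one_mul]
  rw [← Finset.sum_mul, h, zero_mul]

end

section
variable {n : ℕ} {L : Matrix (Fin n) (Fin n) ℝ} {δ : ℝ}

local notation "M" => ((hubL0 L + hubH δ (fun _ => δ)) : Matrix (Fin n ⊕ Unit) (Fin n ⊕ Unit) ℝ)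
local notation "Q" => (Matrix.vecMulVec (fun _ => (1:ℝ)) (hubw L δ) : Matrix (Fin n ⊕ Unit) (Fin n ⊕ Unit) ℝ)

lemma hub_isEigenprojection (hL1 : ∀ i j, i ≠ j → L i j ≤ 0) (hL2 : ∀ i, ∑ j, L i j = 0)
    (hδ : 0 < δ) : IsEigenprojection (hubL0 L + hubH δ (fun _ => δ)) Q := by
  classical
  have hone_ne : (fun _ => (1:ℝ)) ≠ (0 : Fin n ⊕ Unit → ℝ) := by
    intro h
    have := congrFun h (Sum.inr ())
    simp at this
  have hkerM : LinearMap.ker (M).mulVecLin = Submodule.span ℝ {(fun _ => (1:ℝ))} := by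
    apply le_antisymm
    · intro x hx
      rw [LinearMap.mem_ker, mulVecLin_apply] at hx
      rw [hubM_ker hL1 hL2 hδ hx]
      exact Submodule.smul_mem _ _ (Submodule.mem_span_singleton_self _)
    · rw [Submodule.span_le, Set.singleton_subset_iff]
      simp only [SetLike.mem_coe, LinearMap.mem_ker, mulVecLin_apply]
      exact hubM_mulVec_one hL2
  have hfk : Module.finrank ℝ (LinearMap.ker (M).mulVecLin) = 1 := by
    rw [hkerM]; exact finrank_span_singleton hone_ne
  have hcard : Module.finrank ℝ ((Fin n ⊕ Unit) → ℝ) = n + 1 := by simp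
  have hrn := LinearMap.finrank_range_add_finrank_ker (M).mulVecLin
  rw [hfk, hcard] at hrn
  have hrankM : (M).rank = n := by
    have : (M).rank = Module.finrank ℝ (LinearMap.range (M).mulVecLin) := rfl
    omega
  have hQMv : ∀ x, (Q).mulVecLin ((M).mulVecLin x) = 0 := by
    intro x
    simp only [mulVecLin_apply, mulVec_mulVec]
    rw [hubQ_mul_M hL1 hL2 hδ, zero_mulVec]
  have hker2 : LinearMap.ker ((M) * (M)).mulVecLin = LinearMap.ker (M).mulVecLin := by
    apply le_antisymm
    · intro x hx
      rw [LinearMap.mem_ker, mulVecLin_apply] at hx ⊢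
      have hMx : (M) *ᵥ ((M) *ᵥ x) = 0 := by rw [mulVec_mulVec]; exact hx
      have hy := hubM_ker hL1 hL2 hδ hMx
      have hQy := hQMv x
      rw [mulVecLin_apply, mulVecLin_apply, hubQ_mulVec] at hQy
      have ht : ∑ k, hubw L δ k * ((M) *ᵥ x) k = 0 := by
        have := congrFun hQy (Sum.inr ())
        simpa using this
      rw [hy] at ht ⊢
      have hsum : ∑ k, hubw L δ k * (((M) *ᵥ x) (Sum.inr ()) • fun _ => (1:ℝ)) k
          = ((M) *ᵥ x) (Sum.inr ()) * ∑ k, hubw L δ k := by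
        rw [Finset.mul_sum]
        exact Finset.sum_congr rfl fun k _ => by simp [mul_comm]
      rw [hsum, hubw_sum hL1 hL2 hδ, mul_one] at ht
      rw [ht, zero_smul]
    · intro x hx
      rw [LinearMap.mem_ker, mulVecLin_apply] at hx ⊢
      rw [← mulVec_mulVec, hx, mulVec_zero]
  have h1mem : 1 ∈ {k : ℕ | (((M)) ^ (k + 1)).rank = (((M)) ^ k).rank} := by
    show (((M)) ^ 2).rank = (((M)) ^ 1).rank
    rw [pow_two, pow_one]
    exact rank_eq_of_ker_eq' hker2
  have hindex : matIndex (hubL0 L + hubH δ (fun _ => δ)) = 1 := by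
    have hmem := Nat.sInf_mem (⟨1, h1mem⟩ :
      Set.Nonempty {k : ℕ | (((M)) ^ (k + 1)).rank = (((M)) ^ k).rank})
    have hle : matIndex (hubL0 L + hubH δ (fun _ => δ)) ≤ 1 := Nat.sInf_le h1mem
    rcases Nat.le_one_iff_eq_zero_or_eq_one.mp hle with h0 | h1
    · exfalso
      rw [matIndex] at h0
      rw [h0] at hmem
      simp only [Set.mem_setOf_eq, zero_add, pow_one, pow_zero] at hmem
      rw [Matrix.rank_one] at hmem
      simp only [Fintype.card_sum, Fintype.card_fin, Fintype.card_unit] at hmem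
      omega
    · exact h1
  refine ⟨hubQ_idem hL1 hL2 hδ, ?_, ?_⟩
  · rw [hindex, pow_one, hkerM]
    apply le_antisymm
    · rintro _ ⟨x, rfl⟩
      rw [mulVecLin_apply, hubQ_mulVec]
      exact Submodule.smul_mem _ _ (Submodule.mem_span_singleton_self _)
    · rw [Submodule.span_le, Set.singleton_subset_iff]
      refine ⟨(fun _ => (1:ℝ)), ?_⟩
      rw [mulVecLin_apply, hubQ_mulVec]
      simp only [mul_one]
      rw [hubw_sum hL1 hL2 hδ, one_smul]
  · rw [hindex, pow_one]
    have hle : LinearMap.range (M).mulVecLin ≤ LinearMap.ker (Q).mulVecLin := by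
      rintro _ ⟨x, rfl⟩
      rw [LinearMap.mem_ker]
      exact hQMv x
    have hfrQ : Module.finrank ℝ (LinearMap.range (Q).mulVecLin) = 1 := by
      have : LinearMap.range (Q).mulVecLin = Submodule.span ℝ {(fun _ => (1:ℝ))} := by
        apply le_antisymm
        · rintro _ ⟨x, rfl⟩
          rw [mulVecLin_apply, hubQ_mulVec]
          exact Submodule.smul_mem _ _ (Submodule.mem_span_singleton_self _)
        · rw [Submodule.span_le, Set.singleton_subset_iff]
          refine ⟨(fun _ => (1:ℝ)), ?_⟩
          rw [mulVecLin_apply, hubQ_mulVec]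
          simp only [mul_one]
          rw [hubw_sum hL1 hL2 hδ, one_smul]
      rw [this]
      exact finrank_span_singleton hone_ne
    have hrnQ := LinearMap.finrank_range_add_finrank_ker (Q).mulVecLin
    rw [hfrQ, hcard] at hrnQ
    have hfin : Module.finrank ℝ (LinearMap.ker (Q).mulVecLin)
        ≤ Module.finrank ℝ (LinearMap.range (M).mulVecLin) := by
      have : (M).rank = Module.finrank ℝ (LinearMap.range (M).mulVecLin) := rfl
      omega
    exact (Submodule.eq_of_le_of_finrank_le hle hfin).symm

end

lemma matrix_ext_mulVec {m : Type*} [Fintype m] [DecidableEq m] {A B : Matrix m m ℝ}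
    (h : ∀ x, A *ᵥ x = B *ᵥ x) : A = B := by
  ext i j
  have := congrFun (h (Pi.single j 1)) i
  simpa [mulVec_single] using this

section limitpart
variable {n : ℕ} {L J : Matrix (Fin n) (Fin n) ℝ}
open Filter Topology

lemma hub_tendsto_inv
    (hL1 : ∀ i j, i ≠ j → L i j ≤ 0) (hL2 : ∀ i, ∑ j, L i j = 0)
    (hJJ : J * J = J)
    (hr : LinearMap.range J.mulVecLin = LinearMap.ker L.mulVecLin)
    (hk : LinearMap.ker J.mulVecLin = LinearMap.range L.mulVecLin) :
    Tendsto (fun δ : ℝ => (1 + δ⁻¹ • L)⁻¹) (𝓝[>] (0:ℝ)) (𝓝 J) := by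
  classical
  -- basic consequences
  have hLJ : L * J = 0 := by
    apply matrix_ext_mulVec
    intro x
    rw [← mulVec_mulVec, zero_mulVec]
    have : J *ᵥ x ∈ LinearMap.ker L.mulVecLin := by
      rw [← hr]; exact ⟨x, rfl⟩
    simpa [mulVecLin_apply] using this
  have hJL : J * L = 0 := by
    apply matrix_ext_mulVec
    intro x
    rw [← mulVec_mulVec, zero_mulVec]
    have : L *ᵥ x ∈ LinearMap.ker J.mulVecLin := by
      rw [hk]; exact ⟨x, rfl⟩
    simpa [mulVecLin_apply] using this
  set B : Matrix (Fin n) (Fin n) ℝ := L + J with hB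
  have hdetB : B.det ≠ 0 := by
    have hinj : Function.Injective B.mulVecLin := by
      rw [← LinearMap.ker_eq_bot]
      rw [Submodule.eq_bot_iff]
      intro x hx
      rw [LinearMap.mem_ker, mulVecLin_apply, hB, add_mulVec] at hx
      have hJx : J *ᵥ (L *ᵥ x + J *ᵥ x) = 0 := by rw [hx, mulVec_zero]
      rw [mulVec_add, mulVec_mulVec, mulVec_mulVec, hJL, hJJ, zero_mulVec, zero_add] at hJx
      have hLx : L *ᵥ x = 0 := by
        have := hx
        rw [show J *ᵥ x = 0 from hJx, add_zero] at this
        exact this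
      have hxr : x ∈ LinearMap.range J.mulVecLin := by
        rw [hr, LinearMap.mem_ker, mulVecLin_apply]; exact hLx
      obtain ⟨y, hy⟩ := hxr
      rw [mulVecLin_apply] at hy
      have : J *ᵥ x = x := by
        rw [← hy, mulVec_mulVec, hJJ]
      rw [hJx] at this
      exact this.symm
    have : Function.Injective (fun x => B *ᵥ x) := hinj
    rw [Matrix.mulVec_injective_iff_isUnit] at this
    exact (Matrix.isUnit_iff_isUnit_det _).mp this |>.ne_zero
  -- the auxiliary function
  set g : ℝ → Matrix (Fin n) (Fin n) ℝ :=
    fun δ => δ • (B + δ • 1)⁻¹ + (1+δ)⁻¹ • J with hg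
  have hdet_cont : Tendsto (fun δ : ℝ => (B + δ • 1).det) (𝓝 0) (𝓝 B.det) := by
    have hc : Continuous fun δ : ℝ => B + δ • (1 : Matrix (Fin n) (Fin n) ℝ) :=
      continuous_const.add (continuous_id.smul continuous_const)
    have := (hc.matrix_det).tendsto 0
    simpa using this
  have hinv_cont : Tendsto (fun δ : ℝ => (B + δ • 1)⁻¹) (𝓝 0) (𝓝 B⁻¹) := by
    have hc : Continuous fun δ : ℝ => B + δ • (1 : Matrix (Fin n) (Fin n) ℝ) :=
      continuous_const.add (continuous_id.smul continuous_const)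
    have hca : ContinuousAt Inv.inv ((fun δ : ℝ => B + δ • (1 : Matrix (Fin n) (Fin n) ℝ)) 0) := by
      apply continuousAt_matrix_inv
      have h0 : ((fun δ : ℝ => B + δ • (1 : Matrix (Fin n) (Fin n) ℝ)) 0).det = B.det := by simp
      rw [h0]
      exact NormedRing.inverse_continuousAt hdetB.isUnit.unit
    have hcomp : ContinuousAt (fun δ : ℝ => (B + δ • (1 : Matrix (Fin n) (Fin n) ℝ))⁻¹) 0 :=
      ContinuousAt.comp (g := Inv.inv) (f := fun δ : ℝ => B + δ • (1 : Matrix (Fin n) (Fin n) ℝ))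
        (x := 0) hca hc.continuousAt
    have := hcomp.tendsto
    simpa using this
  have hgt : Tendsto g (𝓝[>] (0:ℝ)) (𝓝 J) := by
    have h1 : Tendsto (fun δ : ℝ => δ • (B + δ • 1)⁻¹) (𝓝 0)
        (𝓝 (0 : Matrix (Fin n) (Fin n) ℝ)) := by
      have hδt : Tendsto (fun δ : ℝ => δ) (𝓝 0) (𝓝 0) := continuous_id.tendsto 0
      have := hδt.smul hinv_cont
      simpa using this
    have h2 : Tendsto (fun δ : ℝ => (1+δ)⁻¹ • J) (𝓝 (0:ℝ)) (𝓝 J) := by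
      have hc : Tendsto (fun δ : ℝ => (1+δ)⁻¹) (𝓝 0) (𝓝 1) := by
        have : Tendsto (fun δ : ℝ => 1 + δ) (𝓝 0) (𝓝 (1 + 0)) :=
          ((continuous_const (y := (1:ℝ))).add continuous_id).tendsto 0
        rw [add_zero] at this
        have := this.inv₀ (by norm_num)
        simpa using this
      have := hc.smul (tendsto_const_nhds (x := J))
      simpa using this
    have := h1.add h2
    rw [zero_add] at this
    exact this.mono_left nhdsWithin_le_nhds
  refine hgt.congr' ?_
  -- eventually equal
  have hev1 : ∀ᶠ δ in 𝓝[>] (0:ℝ), (B + δ • 1).det ≠ 0 :=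
    (hdet_cont.mono_left nhdsWithin_le_nhds).eventually_ne hdetB
  have hev2 : ∀ᶠ δ in 𝓝[>] (0:ℝ), 0 < δ := self_mem_nhdsWithin
  filter_upwards [hev1, hev2] with δ hdC hδ
  -- show g δ = (1 + δ⁻¹ • L)⁻¹
  have hdL : (δ • (1 : Matrix (Fin n) (Fin n) ℝ) + L).det ≠ 0 := lap_shift_det_ne_zero hL1 hL2 hδ
  have hstep1 : (1 + δ⁻¹ • L)⁻¹ = δ • (δ • (1 : Matrix (Fin n) (Fin n) ℝ) + L)⁻¹ := by
    apply Matrix.inv_eq_right_inv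
    rw [hubA_eq hδ, Matrix.smul_mul, Matrix.mul_smul, smul_smul,
      inv_mul_cancel₀ hδ.ne', one_smul, Matrix.mul_nonsing_inv _ hdL.isUnit]
  have hJCi : J * (B + δ • 1)⁻¹ = (1+δ)⁻¹ • J := by
    have hJC : J * (B + δ • 1) = (1+δ) • J := by
      rw [hB, Matrix.mul_add, Matrix.mul_add, hJL, hJJ, Matrix.mul_smul, mul_one]
      rw [zero_add, add_smul, one_smul]
    have h := congrArg (fun X => X * (B + δ • 1)⁻¹) hJC
    simp only [Matrix.mul_assoc] at h
    rw [Matrix.mul_nonsing_inv _ hdC.isUnit, Matrix.mul_one, Matrix.smul_mul] at h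
    have h1δ : (1+δ) ≠ 0 := by positivity
    have h2 := congrArg (fun X => ((1+δ):ℝ)⁻¹ • X) h
    simp only [smul_smul, inv_mul_cancel₀ h1δ, one_smul] at h2
    exact h2.symm
  have hkey : (δ • (1 : Matrix (Fin n) (Fin n) ℝ) + L) * g δ = δ • 1 := by
    have hsplit : δ • (1 : Matrix (Fin n) (Fin n) ℝ) + L = (B + δ • 1) - J := by
      rw [hB]; abel
    have hLJ' : (δ • (1 : Matrix (Fin n) (Fin n) ℝ) + L) * J = δ • J := by
      rw [Matrix.add_mul, hLJ, add_zero, Matrix.smul_mul, Matrix.one_mul]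
    have e1 : (δ • (1 : Matrix (Fin n) (Fin n) ℝ) + L) * (δ • (B + δ • 1)⁻¹)
        = δ • 1 - (δ * (1+δ)⁻¹) • J := by
      rw [Matrix.mul_smul, hsplit, Matrix.sub_mul, Matrix.mul_nonsing_inv _ hdC.isUnit, hJCi,
        smul_sub, smul_smul]
    have e2 : (δ • (1 : Matrix (Fin n) (Fin n) ℝ) + L) * ((1+δ)⁻¹ • J)
        = ((1+δ)⁻¹ * δ) • J := by
      rw [Matrix.mul_smul, hLJ', smul_smul]
    rw [hg]
    simp only []
    rw [Matrix.mul_add, e1, e2, mul_comm ((1+δ):ℝ)⁻¹ δ]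
    abel
  have hstep2 : g δ = δ • (δ • (1 : Matrix (Fin n) (Fin n) ℝ) + L)⁻¹ := by
    have := congrArg (fun X => (δ • (1 : Matrix (Fin n) (Fin n) ℝ) + L)⁻¹ * X) hkey
    simp only [← Matrix.mul_assoc] at this
    rw [Matrix.nonsing_inv_mul _ hdL.isUnit, Matrix.one_mul, Matrix.mul_smul,
      Matrix.mul_one] at this
    exact this
  rw [hstep1, hstep2]

end limitpart

noncomputable def hubG {n : ℕ} (X : Matrix (Fin n) (Fin n) ℝ) :
    Matrix (Fin n ⊕ Unit) (Fin n ⊕ Unit) ℝ :=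
  Matrix.vecMulVec (fun _ => (1 : ℝ))
    (Sum.elim
      (fun j => ((n : ℝ) + 1)⁻¹ * ((fun _ => (1 : ℝ)) ᵥ* X) j)
      (fun _ => ((n : ℝ) + 1)⁻¹))

lemma hubG_continuous {n : ℕ} : Continuous (hubG (n := n)) := by
  have h1 : Continuous (fun X : Matrix (Fin n) (Fin n) ℝ => (fun _ => (1:ℝ)) ᵥ* X) :=
    Continuous.matrix_vecMul continuous_const continuous_id
  apply Continuous.matrix_vecMulVec continuous_const
  apply continuous_pi
  intro p
  cases p with
  | inl j =>
    show Continuous fun X : Matrix (Fin n) (Fin n) ℝ =>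
      ((n : ℝ) + 1)⁻¹ * ((fun _ => (1 : ℝ)) ᵥ* X) j
    exact continuous_const.mul ((continuous_apply j).comp h1)
  | inr u =>
    exact continuous_const


lemma lap_J_props {m : Type*} [Fintype m] [DecidableEq m] {L J : Matrix m m ℝ}
    (hL1 : ∀ i j, i ≠ j → L i j ≤ 0) (hL2 : ∀ i, ∑ j, L i j = 0)
    (hJ : IsEigenprojection L J) :
    J * J = J ∧ LinearMap.range J.mulVecLin = LinearMap.ker L.mulVecLin ∧
      LinearMap.ker J.mulVecLin = LinearMap.range L.mulVecLin := by
  obtain ⟨hJJ, hr, hk⟩ := hJ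
  have hker2 : LinearMap.ker (L ^ 2).mulVecLin = LinearMap.ker L.mulVecLin := by
    apply le_antisymm
    · intro x hx
      simp only [LinearMap.mem_ker, mulVecLin_apply] at hx ⊢
      have h2 : L *ᵥ (L *ᵥ x) = 0 := by
        rw [pow_two, ← mulVec_mulVec] at hx; exact hx
      exact lap_ker_range_eq_zero hL1 hL2 h2 rfl
    · intro x hx
      simp only [LinearMap.mem_ker, mulVecLin_apply] at hx ⊢
      rw [pow_two, ← mulVec_mulVec, hx, mulVec_zero]
  have h1mem : 1 ∈ {k : ℕ | (L ^ (k + 1)).rank = (L ^ k).rank} := by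
    show (L ^ 2).rank = (L ^ 1).rank
    rw [pow_one]
    exact rank_eq_of_ker_eq' hker2
  have hle : matIndex L ≤ 1 := Nat.sInf_le h1mem
  have hmem : matIndex L ∈ {k : ℕ | (L ^ (k + 1)).rank = (L ^ k).rank} :=
    Nat.sInf_mem ⟨1, h1mem⟩
  interval_cases h : matIndex L
  · -- matIndex L = 0 : L invertible
    simp only [pow_zero, mulVecLin_one] at hr hk
    simp only [Set.mem_setOf_eq, pow_one, pow_zero] at hmem
    rw [Matrix.rank_one] at hmem
    have hrank : L.rank = Fintype.card m := by rw [← pow_one L]; simpa using hmem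
    have hkerL : LinearMap.ker L.mulVecLin = ⊥ := by
      have := LinearMap.finrank_range_add_finrank_ker L.mulVecLin
      rw [show Module.finrank ℝ (LinearMap.range L.mulVecLin) = L.rank from rfl, hrank] at this
      have hd : Module.finrank ℝ (m → ℝ) = Fintype.card m := by simp
      rw [hd] at this
      exact Submodule.finrank_eq_zero.mp (by omega)
    have hrangeL : LinearMap.range L.mulVecLin = ⊤ := by
      exact LinearMap.range_eq_top.mpr
        ((LinearMap.injective_iff_surjective).mp (LinearMap.ker_eq_bot.mp hkerL))
    refine ⟨hJJ, ?_, ?_⟩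
    · rw [hr, hkerL, LinearMap.ker_id]
    · rw [hk, hrangeL, LinearMap.range_id]
  · rw [pow_one] at hr hk
    exact ⟨hJJ, hr, hk⟩

end AuxLemmas

/-- For a Laplacian `L` with eigenprojection `J`, and a symmetric hub `v = δ·1`:
the eigenprojection of `L₀ + H_{δ,δ1}` equals `1′·(1/(n+1))·[1ᵀ(I + δ⁻¹L)⁻¹  1]`
for each `δ > 0`, and this matrix converges to `1′·(1/(n+1))·[1ᵀJ  1]`
as `δ → 0⁺`. -/
theorem eigenprojection_symmetric_hub {n : ℕ} (L J : Matrix (Fin n) (Fin n) ℝ)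
    (hL : IsLaplacian L) (hJ : IsEigenprojection L J) :
    (∀ δ : ℝ, 0 < δ →
      IsEigenprojection (hubL0 L + hubH δ (fun _ => δ)) (symmHubProj L δ)) ∧
    Tendsto (fun δ : ℝ => symmHubProj L δ) (𝓝[>] 0)
      (𝓝 (Matrix.vecMulVec (fun _ => (1 : ℝ))
        (Sum.elim
          (fun j => ((n : ℝ) + 1)⁻¹ * ((fun _ => (1 : ℝ)) ᵥ* J) j)
          (fun _ => ((n : ℝ) + 1)⁻¹)))) := by
  obtain ⟨hL1, hL2⟩ := hL
  constructor
  · intro δ hδ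
    exact hub_isEigenprojection hL1 hL2 hδ
  · obtain ⟨hJJ, hr, hk⟩ := lap_J_props hL1 hL2 hJ
    exact (hubG_continuous.tendsto J).comp (hub_tendsto_inv hL1 hL2 hJJ hr hk)
end

section
/- Let L be an n×n Laplacian matrix, δ > 0, and y⁰ ∈ ℝ^{n+1}. Then exp(−t(L₀ + H_{δ,δ1}))·y⁰ converges as t → ∞ to the constant vector c·1′, where c = (1/(n+1))·( Σ_{j=1}^n s_j^δ · y⁰_j + y⁰_{n+1} ) and s_j^δ denotes the j-th column sum of the matrix (I + δ⁻¹L)⁻¹. -/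
open Matrix Filter Topology

section ConsensusAux

open Nat Finset

variable {ι : Type*} [Fintype ι] [DecidableEq ι]


lemma expSummable (A : Matrix ι ι ℝ) :
    Summable (fun k : ℕ => ((k ! : ℝ))⁻¹ • A ^ k) := by
  letI : SeminormedRing (Matrix ι ι ℝ) := Matrix.linftyOpSemiNormedRing
  letI : NormedRing (Matrix ι ι ℝ) := Matrix.linftyOpNormedRing
  letI : NormedAlgebra ℝ (Matrix ι ι ℝ) := Matrix.linftyOpNormedAlgebra
  exact NormedSpace.expSeries_summable' A

lemma expApplyLM {E : Type*} [NormedAddCommGroup E] [NormedSpace ℝ E]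
    (f : Matrix ι ι ℝ →ₗ[ℝ] E) (A : Matrix ι ι ℝ) :
    f (NormedSpace.exp A) = ∑' k : ℕ, ((k ! : ℝ))⁻¹ • f (A ^ k) := by
  rw [NormedSpace.exp_eq_tsum ℝ]
  have := (LinearMap.toContinuousLinearMap f).map_tsum (expSummable A)
  simpa [_root_.map_smul] using this

lemma expSummableLM {E : Type*} [NormedAddCommGroup E] [NormedSpace ℝ E]
    (f : Matrix ι ι ℝ →ₗ[ℝ] E) (A : Matrix ι ι ℝ) :
    Summable (fun k : ℕ => ((k ! : ℝ))⁻¹ • f (A ^ k)) := by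
  refine ((expSummable A).map (LinearMap.toContinuousLinearMap f)
    (LinearMap.toContinuousLinearMap f).continuous).congr fun k => ?_
  simp [Function.comp, _root_.map_smul]

/-- entry linear map -/
def entryLM (i j : ι) : Matrix ι ι ℝ →ₗ[ℝ] ℝ where
  toFun X := X i j
  map_add' X Y := rfl
  map_smul' c X := rfl

/-- mulVec as linear map in the matrix -/
def mulVecLM (v : ι → ℝ) : Matrix ι ι ℝ →ₗ[ℝ] (ι → ℝ) where
  toFun X := X.mulVec v
  map_add' X Y := Matrix.add_mulVec X Y v
  map_smul' c X := Matrix.smul_mulVec c X v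

/-- vecMul as linear map in the matrix -/
def vecMulLM (w : ι → ℝ) : Matrix ι ι ℝ →ₗ[ℝ] (ι → ℝ) where
  toFun X := Matrix.vecMul w X
  map_add' X Y := by ext j; simp [Matrix.vecMul, dotProduct, Finset.sum_add_distrib, mul_add]
  map_smul' c X := by ext j; simp [Matrix.vecMul, dotProduct, Finset.mul_sum, mul_left_comm]

lemma exp_mulVec_fixed (A : Matrix ι ι ℝ) (v : ι → ℝ) (h : A.mulVec v = 0) :
    (NormedSpace.exp A).mulVec v = v := by
  have h0 : ∀ k : ℕ, k ≠ 0 → ((k ! : ℝ))⁻¹ • (A ^ k).mulVec v = 0 := by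
    intro k hk
    obtain ⟨m, rfl⟩ := Nat.exists_eq_succ_of_ne_zero hk
    rw [show A ^ m.succ = A ^ m * A from pow_succ A m,
      ← Matrix.mulVec_mulVec, h, Matrix.mulVec_zero, smul_zero]
  have := expApplyLM (mulVecLM v) A
  simp only [mulVecLM, LinearMap.coe_mk, AddHom.coe_mk] at this
  rw [this, tsum_eq_single 0 h0]
  simp
lemma exp_vecMul_fixed (A : Matrix ι ι ℝ) (w : ι → ℝ) (h : Matrix.vecMul w A = 0) :
    Matrix.vecMul w (NormedSpace.exp A) = w := by
  have h0 : ∀ k : ℕ, k ≠ 0 → ((k ! : ℝ))⁻¹ • Matrix.vecMul w (A ^ k) = 0 := by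
    intro k hk
    obtain ⟨m, rfl⟩ := Nat.exists_eq_succ_of_ne_zero hk
    rw [show A ^ m.succ = A * A ^ m from pow_succ' A m,
      ← Matrix.vecMul_vecMul, h, Matrix.zero_vecMul, smul_zero]
  have := expApplyLM (vecMulLM w) A
  simp only [vecMulLM, LinearMap.coe_mk, AddHom.coe_mk] at this
  rw [this, tsum_eq_single 0 h0]
  simp

lemma pow_entry_nonneg {A : Matrix ι ι ℝ} (hA : ∀ i j, 0 ≤ A i j) (k : ℕ) :
    ∀ i j, 0 ≤ (A ^ k) i j := by
  induction k with
  | zero => intro i j; by_cases h : i = j <;> simp [h, Matrix.one_apply]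
  | succ m ih =>
    intro i j
    rw [pow_succ, Matrix.mul_apply]
    exact Finset.sum_nonneg fun z _ => mul_nonneg (ih i z) (hA z j)

lemma exp_entry_eq (A : Matrix ι ι ℝ) (i j : ι) :
    NormedSpace.exp A i j = ∑' k : ℕ, ((k ! : ℝ))⁻¹ * (A ^ k) i j := by
  have := expApplyLM (entryLM i j) A
  exact this

lemma exp_entry_nonneg {A : Matrix ι ι ℝ} (hA : ∀ i j, 0 ≤ A i j) (i j : ι) :
    0 ≤ NormedSpace.exp A i j := by
  rw [exp_entry_eq]
  exact tsum_nonneg fun k => mul_nonneg (by positivity) (pow_entry_nonneg hA k i j)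

lemma exp_entry_ge {A : Matrix ι ι ℝ} (hA : ∀ i j, 0 ≤ A i j) (i j : ι) :
    (2 : ℝ)⁻¹ * (A ^ 2) i j ≤ NormedSpace.exp A i j := by
  rw [exp_entry_eq]
  have hs : Summable (fun k : ℕ => ((k ! : ℝ))⁻¹ * (A ^ k) i j) := by
    have := expSummableLM (entryLM i j) A
    exact this
  have := hs.le_tsum 2 (fun k _ => mul_nonneg (by positivity) (pow_entry_nonneg hA k i j))
  simpa [Nat.factorial] using this

lemma exp_shift (c : ℝ) (B : Matrix ι ι ℝ) :
    NormedSpace.exp (c • (1 : Matrix ι ι ℝ) + B)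
      = Real.exp c • NormedSpace.exp B := by
  rw [Matrix.exp_add_of_commute _ _ ((Commute.one_left B).smul_left c)]
  have h1 : NormedSpace.exp (c • (1 : Matrix ι ι ℝ))
      = Real.exp c • (1 : Matrix ι ι ℝ) := by
    have halg : (c • (1 : Matrix ι ι ℝ)) = algebraMap ℝ (Matrix ι ι ℝ) c :=
      (Algebra.algebraMap_eq_smul_one c).symm
    letI : SeminormedRing (Matrix ι ι ℝ) := Matrix.linftyOpSemiNormedRing
    letI : NormedRing (Matrix ι ι ℝ) := Matrix.linftyOpNormedRing
    letI : NormedAlgebra ℝ (Matrix ι ι ℝ) := Matrix.linftyOpNormedAlgebra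
    rw [halg]
    erw [← NormedSpace.algebraMap_exp_comm (𝔸 := Matrix ι ι ℝ)]
    rw [Algebra.algebraMap_eq_smul_one, ← Real.exp_eq_exp_ℝ]
  rw [h1, Matrix.smul_mul, Matrix.one_mul]

variable [Nonempty ι]


lemma mulVec_le_sup' (P : Matrix ι ι ℝ) (hnn : ∀ i j, 0 ≤ P i j)
    (hrow : ∀ i, ∑ j, P i j = 1) (x : ι → ℝ) (i : ι) :
    P.mulVec x i ≤ Finset.univ.sup' Finset.univ_nonempty x := by
  have h1 : P.mulVec x i = ∑ j, P i j * x j := by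
    simp [Matrix.mulVec, dotProduct]
  rw [h1]
  calc ∑ j, P i j * x j
      ≤ ∑ j, P i j * Finset.univ.sup' Finset.univ_nonempty x :=
        Finset.sum_le_sum fun j _ => mul_le_mul_of_nonneg_left
          (Finset.le_sup' x (Finset.mem_univ j)) (hnn i j)
    _ = Finset.univ.sup' Finset.univ_nonempty x := by
        rw [← Finset.sum_mul, hrow i, one_mul]

lemma inf'_le_mulVec (P : Matrix ι ι ℝ) (hnn : ∀ i j, 0 ≤ P i j)
    (hrow : ∀ i, ∑ j, P i j = 1) (x : ι → ℝ) (i : ι) :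
    Finset.univ.inf' Finset.univ_nonempty x ≤ P.mulVec x i := by
  have h1 : P.mulVec x i = ∑ j, P i j * x j := by
    simp [Matrix.mulVec, dotProduct]
  rw [h1]
  calc Finset.univ.inf' Finset.univ_nonempty x
      = ∑ j, P i j * Finset.univ.inf' Finset.univ_nonempty x := by
        rw [← Finset.sum_mul, hrow i, one_mul]
    _ ≤ ∑ j, P i j * x j :=
        Finset.sum_le_sum fun j _ => mul_le_mul_of_nonneg_left
          (Finset.inf'_le x (Finset.mem_univ j)) (hnn i j)

lemma stoch_osc (P : Matrix ι ι ℝ) (ε : ℝ) (hε : 0 ≤ ε)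
    (hP : ∀ i j, ε ≤ P i j) (hrow : ∀ i, ∑ j, P i j = 1) (x : ι → ℝ) :
    Finset.univ.sup' Finset.univ_nonempty (P.mulVec x)
      - Finset.univ.inf' Finset.univ_nonempty (P.mulVec x)
    ≤ (1 - 2 * ε) *
      (Finset.univ.sup' Finset.univ_nonempty x
        - Finset.univ.inf' Finset.univ_nonempty x) := by
  set mx := Finset.univ.sup' Finset.univ_nonempty x with hmx
  set mn := Finset.univ.inf' Finset.univ_nonempty x with hmn
  have hnn : ∀ i j, 0 ≤ P i j := fun i j => le_trans hε (hP i j)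
  have hosc : 0 ≤ mx - mn := by
    have i := Classical.arbitrary ι
    have := Finset.inf'_le x (Finset.mem_univ i)
    have := Finset.le_sup' x (Finset.mem_univ i)
    linarith
  obtain ⟨j0, -, hj0⟩ := Finset.exists_mem_eq_inf' Finset.univ_nonempty x
  obtain ⟨j1, -, hj1⟩ := Finset.exists_mem_eq_sup' Finset.univ_nonempty x
  have hup : ∀ i, P.mulVec x i ≤ mx - ε * (mx - mn) := by
    intro i
    have h1 : P.mulVec x i = ∑ j, P i j * x j := by
      simp [Matrix.mulVec, dotProduct]
    have hsplit : ∑ j, P i j * x j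
        = P i j0 * x j0 + ∑ j ∈ Finset.univ.erase j0, P i j * x j :=
      (Finset.add_sum_erase Finset.univ (fun j => P i j * x j) (Finset.mem_univ j0)).symm
    have hbound : ∑ j ∈ Finset.univ.erase j0, P i j * x j
        ≤ ∑ j ∈ Finset.univ.erase j0, P i j * mx :=
      Finset.sum_le_sum fun j _ => mul_le_mul_of_nonneg_left
        (Finset.le_sup' x (Finset.mem_univ j)) (hnn i j)
    have hsum : ∑ j ∈ Finset.univ.erase j0, P i j = 1 - P i j0 := by
      rw [Finset.sum_erase_eq_sub (Finset.mem_univ j0), hrow i]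
    have h2 : ∑ j ∈ Finset.univ.erase j0, P i j * mx = (1 - P i j0) * mx := by
      rw [← Finset.sum_mul, hsum]
    have hPj0 := hP i j0
    rw [h1, hsplit, ← hj0] at *
    nlinarith [hP i j0]
  have hlo : ∀ i, mn + ε * (mx - mn) ≤ P.mulVec x i := by
    intro i
    have h1 : P.mulVec x i = ∑ j, P i j * x j := by
      simp [Matrix.mulVec, dotProduct]
    have hsplit : ∑ j, P i j * x j
        = P i j1 * x j1 + ∑ j ∈ Finset.univ.erase j1, P i j * x j :=
      (Finset.add_sum_erase Finset.univ (fun j => P i j * x j) (Finset.mem_univ j1)).symm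
    have hbound : ∑ j ∈ Finset.univ.erase j1, P i j * mn
        ≤ ∑ j ∈ Finset.univ.erase j1, P i j * x j :=
      Finset.sum_le_sum fun j _ => mul_le_mul_of_nonneg_left
        (Finset.inf'_le x (Finset.mem_univ j)) (hnn i j)
    have hsum : ∑ j ∈ Finset.univ.erase j1, P i j = 1 - P i j1 := by
      rw [Finset.sum_erase_eq_sub (Finset.mem_univ j1), hrow i]
    have h2 : ∑ j ∈ Finset.univ.erase j1, P i j * mn = (1 - P i j1) * mn := by
      rw [← Finset.sum_mul, hsum]
    have hPj1 := hP i j1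
    rw [h1, hsplit, ← hj1] at *
    nlinarith [hP i j1]
  have hs := Finset.sup'_le Finset.univ_nonempty (P.mulVec x)
    (fun i _ => hup i)
  have hi := Finset.le_inf' Finset.univ_nonempty (P.mulVec x)
    (fun i _ => hlo i)
  nlinarith

end ConsensusAux

/-- Consensus in the system with a symmetric hub (`v = δ·1`): the solution
converges to the constant vector `c·1′` with
`c = (1/(n+1))·(Σⱼ sⱼ^δ y⁰ⱼ + y⁰_{n+1})`, where `sⱼ^δ` is the `j`-th column
sum of `(I + δ⁻¹L)⁻¹`. -/
theorem consensus_symmetric_hub {n : ℕ} (L : Matrix (Fin n) (Fin n) ℝ)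
    (hL : IsLaplacian L) (δ : ℝ) (hδ : 0 < δ) (y0 : (Fin n ⊕ Unit) → ℝ) :
    Tendsto
      (fun t : ℝ =>
        (NormedSpace.exp (-(t • (hubL0 L + hubH δ (fun _ => δ))))).mulVec y0)
      atTop
      (𝓝 (fun _ => ((n : ℝ) + 1)⁻¹ *
        ((∑ j, (∑ i, (1 + δ⁻¹ • L)⁻¹ i j) * y0 (Sum.inl j)) +
          y0 (Sum.inr ())))) := by
  classical
  obtain ⟨hLoff, hLrow⟩ := hL
  set M : Matrix (Fin n ⊕ Unit) (Fin n ⊕ Unit) ℝ := hubL0 L + hubH δ (fun _ => δ) with hMdef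
  have hδ' : δ ≠ 0 := ne_of_gt hδ
  -- diagonal of L nonneg
  have hdiag : ∀ i, 0 ≤ L i i := by
    intro i
    have h1 : L i i = -∑ j ∈ Finset.univ.erase i, L i j := by
      have := hLrow i
      rw [← Finset.add_sum_erase Finset.univ (L i) (Finset.mem_univ i)] at this
      linarith
    rw [h1, neg_nonneg]
    exact Finset.sum_nonpos fun j hj => hLoff i j (Ne.symm (Finset.ne_of_mem_erase hj))
  -- entries of M
  have hM11 : ∀ i j, M (Sum.inl i) (Sum.inl j) = L i j + δ * (if i = j then 1 else 0) := by
    intro i j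
    simp [hMdef, hubL0, hubH, hubHI, hubHv, Matrix.fromBlocks, Matrix.one_apply]
  have hM12 : ∀ i u, M (Sum.inl i) (Sum.inr u) = -δ := by
    intro i u
    simp [hMdef, hubL0, hubH, hubHI, hubHv, Matrix.fromBlocks]
  have hM21 : ∀ u j, M (Sum.inr u) (Sum.inl j) = -δ := by
    intro u j
    simp [hMdef, hubL0, hubH, hubHI, hubHv, Matrix.fromBlocks]
  have hM22 : ∀ u u', M (Sum.inr u) (Sum.inr u') = δ * n := by
    intro u u'
    simp [hMdef, hubL0, hubH, hubHI, hubHv, Matrix.fromBlocks, mul_comm]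
  -- the matrix A = I + δ⁻¹ L
  set A : Matrix (Fin n) (Fin n) ℝ := 1 + δ⁻¹ • L with hAdef
  have hAentry : ∀ i j, A i j = (if i = j then 1 else 0) + δ⁻¹ * L i j := by
    intro i j
    simp [hAdef, Matrix.one_apply]
  have hdet : A.det ≠ 0 := by
    apply det_ne_zero_of_sum_row_lt_diag
    intro k
    have h1 : ∑ j ∈ Finset.univ.erase k, ‖A k j‖
        = δ⁻¹ * ∑ j ∈ Finset.univ.erase k, (-L k j) := by
      rw [Finset.mul_sum]
      apply Finset.sum_congr rfl
      intro j hj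
      have hjk : ¬ (k = j) := fun h => (Finset.ne_of_mem_erase hj) h.symm
      rw [hAentry, if_neg hjk, zero_add, Real.norm_eq_abs, abs_mul,
        abs_of_pos (inv_pos.mpr hδ), abs_of_nonpos (hLoff k j hjk)]
    have h2 : ∑ j ∈ Finset.univ.erase k, (-L k j) = L k k := by
      have := hLrow k
      rw [← Finset.add_sum_erase Finset.univ (L k) (Finset.mem_univ k)] at this
      rw [Finset.sum_neg_distrib]
      linarith
    have h3 : ‖A k k‖ = 1 + δ⁻¹ * L k k := by
      rw [hAentry, if_pos rfl, Real.norm_eq_abs, abs_of_pos]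
      have := hdiag k
      have := inv_pos.mpr hδ
      nlinarith
    rw [h1, h2, h3]
    nlinarith [mul_nonneg (le_of_lt (inv_pos.mpr hδ)) (hdiag k)]
  have hU : IsUnit A.det := isUnit_iff_ne_zero.mpr hdet
  have hAinvA : A⁻¹ * A = 1 := Matrix.nonsing_inv_mul A hU
  have hAAinv : A * A⁻¹ = 1 := Matrix.mul_nonsing_inv A hU
  have hA1 : A.mulVec (fun _ => 1) = fun _ => 1 := by
    funext i
    simp only [Matrix.mulVec, dotProduct, mul_one]
    rw [show ∑ j, A i j = ∑ j, ((if i = j then 1 else 0) + δ⁻¹ * L i j) from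
      Finset.sum_congr rfl (fun j _ => hAentry i j)]
    rw [Finset.sum_add_distrib, Finset.sum_ite_eq Finset.univ i (fun _ => (1:ℝ))]
    simp [← Finset.mul_sum, hLrow i]
  have hAinv1 : A⁻¹.mulVec (fun _ => 1) = fun _ => 1 := by
    have := congrArg (fun v => A⁻¹.mulVec v) hA1
    simpa [Matrix.mulVec_mulVec, hAinvA] using this.symm
  set s : Fin n → ℝ := fun j => ∑ i, A⁻¹ i j with hsdef
  have hssum : ∑ j, s j = n := by
    rw [Finset.sum_comm]
    have : ∀ i, ∑ j, A⁻¹ i j = 1 := by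
      intro i
      have := congrFun hAinv1 i
      simpa [Matrix.mulVec, dotProduct] using this
    simp [this]
  have hsA : ∀ j, ∑ i, s i * A i j = 1 := by
    intro j
    have hvm : s = Matrix.vecMul (fun _ => 1) A⁻¹ := by
      funext j
      simp [hsdef, Matrix.vecMul, dotProduct]
    have : Matrix.vecMul s A = fun _ => 1 := by
      rw [hvm, Matrix.vecMul_vecMul, hAinvA, Matrix.vecMul_one]
    have := congrFun this j
    simpa [Matrix.vecMul, dotProduct] using this
  -- the left fixed vector w
  set w : (Fin n ⊕ Unit) → ℝ :=
    fun x => ((n : ℝ) + 1)⁻¹ * (Sum.elim s (fun _ => 1) x) with hwdef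
  have hn1 : ((n : ℝ) + 1) ≠ 0 := by positivity
  have hwsum : ∑ x, w x = 1 := by
    rw [Fintype.sum_sum_type]
    simp only [hwdef, Sum.elim_inl, Sum.elim_inr]
    rw [← Finset.mul_sum, hssum]
    simp
    field_simp
  have hwM : Matrix.vecMul w M = 0 := by
    funext x
    rw [show (0 : (Fin n ⊕ Unit) → ℝ) x = 0 from rfl]
    cases x with
    | inl j =>
      have hexp : Matrix.vecMul w M (Sum.inl j) = ∑ z, w z * M z (Sum.inl j) := by
        simp [Matrix.vecMul, dotProduct]
      rw [hexp, Fintype.sum_sum_type]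
      simp only [hwdef, Sum.elim_inl, Sum.elim_inr]
      have h1 : ∀ i, ((n : ℝ) + 1)⁻¹ * s i * M (Sum.inl i) (Sum.inl j)
          = ((n : ℝ) + 1)⁻¹ * (δ * (s i * A i j)) := by
        intro i
        rw [hM11, hAentry]
        have hc : δ * δ⁻¹ = 1 := mul_inv_cancel₀ hδ'
        linear_combination (-(((n:ℝ) + 1)⁻¹ * s i * L i j)) * hc
      rw [Finset.sum_congr rfl (fun i _ => h1 i)]
      rw [← Finset.mul_sum, ← Finset.mul_sum, hsA j]
      simp [hM21]
    | inr u =>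
      have hexp : Matrix.vecMul w M (Sum.inr u) = ∑ z, w z * M z (Sum.inr u) := by
        simp [Matrix.vecMul, dotProduct]
      rw [hexp, Fintype.sum_sum_type]
      simp only [hwdef, Sum.elim_inl, Sum.elim_inr]
      have h1 : ∀ i : Fin n, ((n : ℝ) + 1)⁻¹ * s i * M (Sum.inl i) (Sum.inr u)
          = (((n : ℝ) + 1)⁻¹ * (-δ)) * s i := by
        intro i
        rw [hM12]
        ring
      rw [Finset.sum_congr rfl (fun i _ => h1 i), ← Finset.mul_sum, hssum]
      simp [hM22]
      ring
  -- M annihilates the all-ones vector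
  have hM1 : M.mulVec (fun _ => 1) = 0 := by
    funext x
    rw [show (0 : (Fin n ⊕ Unit) → ℝ) x = 0 from rfl]
    have hexp : M.mulVec (fun _ => 1) x = ∑ z, M x z := by
      simp [Matrix.mulVec, dotProduct]
    rw [hexp, Fintype.sum_sum_type]
    cases x with
    | inl i =>
      have h1 : ∑ j, M (Sum.inl i) (Sum.inl j)
          = ∑ j, (L i j + δ * (if i = j then 1 else 0)) :=
        Finset.sum_congr rfl (fun j _ => hM11 i j)
      rw [h1, Finset.sum_add_distrib, hLrow i]
      simp [hM12, Finset.sum_ite_eq Finset.univ i (fun _ => (1:ℝ))]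
    | inr u =>
      simp [hM21, hM22]
      ring
  -- shifted nonnegative matrix B
  set α : ℝ := δ * (n + 1) + ∑ k, L k k with hαdef
  set B : Matrix (Fin n ⊕ Unit) (Fin n ⊕ Unit) ℝ := α • 1 - M with hBdef
  have hLkk : ∀ i, L i i ≤ ∑ k, L k k := fun i =>
    Finset.single_le_sum (fun k _ => hdiag k) (Finset.mem_univ i)
  have hLsum : 0 ≤ ∑ k, L k k := Finset.sum_nonneg fun k _ => hdiag k
  have hBentry : ∀ x y, B x y = α * (if x = y then 1 else 0) - M x y := by
    intro x y
    simp [hBdef, Matrix.sub_apply, Matrix.smul_apply, Matrix.one_apply, smul_eq_mul]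
  have hBnn : ∀ x y, 0 ≤ B x y := by
    intro x y
    rw [hBentry]
    cases x with
    | inl i =>
      cases y with
      | inl j =>
        rcases eq_or_ne i j with h | h
        · subst h
          rw [hM11, if_pos rfl, if_pos rfl]
          have := hLkk i
          nlinarith [hδ.le, Nat.cast_nonneg (α := ℝ) n]
        · rw [hM11, if_neg h, if_neg (by simp [h])]
          have := hLoff i j h
          nlinarith
      | inr u =>
        rw [hM12, if_neg (by simp)]
        linarith
    | inr u =>
      cases y with
      | inl j =>
        rw [hM21, if_neg (by simp)]
        linarith
      | inr u' =>
        rw [hM22, if_pos (by simp)]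
        nlinarith [hδ.le, Nat.cast_nonneg (α := ℝ) n]
  have hBhubcol : ∀ x, δ ≤ B x (Sum.inr ()) := by
    intro x
    rw [hBentry]
    cases x with
    | inl i =>
      rw [hM12, if_neg (by simp)]
      linarith
    | inr u =>
      rw [hM22, if_pos (by simp)]
      nlinarith [hδ.le, Nat.cast_nonneg (α := ℝ) n]
  have hBhubrow : ∀ y, δ ≤ B (Sum.inr ()) y := by
    intro y
    rw [hBentry]
    cases y with
    | inl j =>
      rw [hM21, if_neg (by simp)]
      linarith
    | inr u =>
      rw [hM22, if_pos (by simp)]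
      nlinarith [hδ.le, Nat.cast_nonneg (α := ℝ) n]
  have hB2 : ∀ x y, δ * δ ≤ (B ^ 2) x y := by
    intro x y
    rw [pow_two, Matrix.mul_apply]
    have hterm := Finset.single_le_sum
      (f := fun z => B x z * B z y)
      (fun z _ => mul_nonneg (hBnn x z) (hBnn z y))
      (Finset.mem_univ (Sum.inr () : Fin n ⊕ Unit))
    have : δ * δ ≤ B x (Sum.inr ()) * B (Sum.inr ()) y :=
      mul_le_mul (hBhubcol x) (hBhubrow y) hδ.le
        (le_trans hδ.le (hBhubcol x))
    exact le_trans this (by simpa using hterm)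
  -- the propagator
  set P : ℝ → Matrix (Fin n ⊕ Unit) (Fin n ⊕ Unit) ℝ :=
    fun t => NormedSpace.exp (-(t • M)) with hPdef
  have hsplit : ∀ t : ℝ,
      -(t • M) = (-(t * α)) • (1 : Matrix (Fin n ⊕ Unit) (Fin n ⊕ Unit) ℝ) + t • B := by
    intro t
    rw [hBdef]
    ext x y
    simp only [Matrix.neg_apply, Matrix.smul_apply, Matrix.add_apply, Matrix.sub_apply,
      smul_eq_mul]
    ring
  have hPsplit : ∀ t : ℝ, P t = Real.exp (-(t * α)) • NormedSpace.exp (t • B) := by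
    intro t
    show NormedSpace.exp (-(t • M)) = _
    rw [hsplit t, exp_shift]
  have hPnn : ∀ t : ℝ, 0 ≤ t → ∀ x y, 0 ≤ P t x y := by
    intro t ht x y
    rw [hPsplit t, Matrix.smul_apply, smul_eq_mul]
    refine mul_nonneg (Real.exp_nonneg _) (exp_entry_nonneg (fun i j => ?_) x y)
    rw [Matrix.smul_apply, smul_eq_mul]
    exact mul_nonneg ht (hBnn i j)
  have hProw : ∀ t : ℝ, (P t).mulVec (fun _ => 1) = fun _ => 1 := by
    intro t
    apply exp_mulVec_fixed
    rw [Matrix.neg_mulVec, Matrix.smul_mulVec, hM1]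
    simp
  have hProwsum : ∀ t : ℝ, ∀ x, ∑ z, P t x z = 1 := by
    intro t x
    have := congrFun (hProw t) x
    simpa [Matrix.mulVec, dotProduct] using this
  have hPw : ∀ t : ℝ, Matrix.vecMul w (P t) = w := by
    intro t
    apply exp_vecMul_fixed
    have h1 : (-(t • M)) = (-t) • M := by rw [neg_smul]
    have h2 : Matrix.vecMul w ((-t) • M) = (-t) • Matrix.vecMul w M := by
      funext j
      simp only [Matrix.vecMul, dotProduct, Matrix.smul_apply, Pi.smul_apply,
        smul_eq_mul, Finset.mul_sum]
      exact Finset.sum_congr rfl fun i _ => by ring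
    rw [h1, h2, hwM]
    simp
  have hsem : ∀ a b : ℝ, P (a + b) = P a * P b := by
    intro a b
    have hc : Commute (-(a • M)) (-(b • M)) := by
      apply Commute.neg_left
      apply Commute.neg_right
      exact ((Commute.refl M).smul_left a).smul_right b
    have hab : -((a + b) • M) = -(a • M) + -(b • M) := by
      rw [add_smul]
      abel
    show NormedSpace.exp (-((a + b) • M)) = _
    rw [hab, Matrix.exp_add_of_commute _ _ hc]
  -- lower bound on entries of P 1
  set ε : ℝ := Real.exp (-α) * (2⁻¹ * (δ * δ)) with hεdef
  have hεpos : 0 < ε := by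
    have := Real.exp_pos (-α)
    positivity
  have hP1 : ∀ x y, ε ≤ P 1 x y := by
    intro x y
    have h1 : P 1 = Real.exp (-α) • NormedSpace.exp B := by
      rw [hPsplit 1, one_mul, one_smul]
    rw [h1, Matrix.smul_apply, smul_eq_mul, hεdef]
    have h2 : (2 : ℝ)⁻¹ * (δ * δ) ≤ (2 : ℝ)⁻¹ * (B ^ 2) x y :=
      mul_le_mul_of_nonneg_left (hB2 x y) (by norm_num)
    have h3 := exp_entry_ge hBnn x y
    exact mul_le_mul_of_nonneg_left (le_trans h2 h3) (Real.exp_nonneg _)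
  -- dynamics
  set y : ℝ → (Fin n ⊕ Unit) → ℝ := fun t => (P t).mulVec y0 with hydef
  set c : ℝ := ∑ x, w x * y0 x with hcdef
  have hwy : ∀ t, ∑ x, w x * y t x = c := by
    intro t
    have h1 : ∑ x, w x * y t x = dotProduct w ((P t).mulVec y0) := rfl
    rw [h1, dotProduct_mulVec, hPw t]
    rfl
  set ε' : ℝ := min ε 2⁻¹ with hε'def
  have hε'pos : 0 < ε' := lt_min hεpos (by norm_num)
  have hε'half : ε' ≤ 2⁻¹ := min_le_right _ _
  have hP1' : ∀ x z, ε' ≤ P 1 x z := fun x z => le_trans (min_le_left _ _) (hP1 x z)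
  set r : ℝ := 1 - 2 * ε' with hrdef
  have hr0 : 0 ≤ r := by rw [hrdef]; linarith
  have hr1 : r < 1 := by rw [hrdef]; linarith
  set osc0 : ℝ := Finset.univ.sup' Finset.univ_nonempty (y 0)
    - Finset.univ.inf' Finset.univ_nonempty (y 0) with hosc0def
  have hinfsup : ∀ t : ℝ, Finset.univ.inf' Finset.univ_nonempty (y t)
      ≤ Finset.univ.sup' Finset.univ_nonempty (y t) := by
    intro t
    exact le_trans
      (Finset.inf'_le _ (Finset.mem_univ (Sum.inr () : Fin n ⊕ Unit)))
      (Finset.le_sup' _ (Finset.mem_univ (Sum.inr () : Fin n ⊕ Unit)))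
  have hkey : ∀ k : ℕ, Finset.univ.sup' Finset.univ_nonempty (y k)
      - Finset.univ.inf' Finset.univ_nonempty (y k) ≤ r ^ k * osc0 := by
    intro k
    induction k with
    | zero => simp [hosc0def]
    | succ m ih =>
      have hcast : ((m + 1 : ℕ) : ℝ) = 1 + (m : ℕ) := by push_cast; ring
      have hstep : y ((m + 1 : ℕ) : ℝ) = (P 1).mulVec (y (m : ℝ)) := by
        show (P ((m + 1 : ℕ) : ℝ)).mulVec y0 = _
        rw [hcast, hsem 1 (m : ℝ), ← Matrix.mulVec_mulVec]
      rw [hstep]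
      have hco := stoch_osc (P 1) ε' hε'pos.le hP1' (hProwsum 1) (y (m : ℝ))
      calc Finset.univ.sup' Finset.univ_nonempty ((P 1).mulVec (y (m : ℝ)))
          - Finset.univ.inf' Finset.univ_nonempty ((P 1).mulVec (y (m : ℝ)))
          ≤ r * (Finset.univ.sup' Finset.univ_nonempty (y (m : ℝ))
            - Finset.univ.inf' Finset.univ_nonempty (y (m : ℝ))) := hco
        _ ≤ r * (r ^ m * osc0) := mul_le_mul_of_nonneg_left ih hr0
        _ = r ^ (m + 1) * osc0 := by ring
  have hoscnn : 0 ≤ osc0 := by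
    rw [hosc0def]
    linarith [hinfsup 0]
  set W : ℝ := ∑ x, |w x| with hWdef
  have hWnn : 0 ≤ W := Finset.sum_nonneg fun x _ => abs_nonneg _
  have hmain : ∀ t : ℝ, 0 ≤ t → ∀ i, |y t i - c| ≤ W * (r ^ (⌊t⌋₊) * osc0) := by
    intro t ht i
    have hkt : ((⌊t⌋₊ : ℝ)) ≤ t := Nat.floor_le ht
    have hPt : P t = P (t - (⌊t⌋₊ : ℝ)) * P ((⌊t⌋₊ : ℝ)) := by
      rw [← hsem, sub_add_cancel]
    have hyt : y t = (P (t - (⌊t⌋₊ : ℝ))).mulVec (y ((⌊t⌋₊ : ℝ))) := by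
      show (P t).mulVec y0 = _
      rw [hPt, ← Matrix.mulVec_mulVec]
    have hub : ∀ j, y t j ≤ Finset.univ.sup' Finset.univ_nonempty (y ((⌊t⌋₊ : ℝ))) := by
      intro j
      rw [hyt]
      exact mulVec_le_sup' _ (hPnn _ (by linarith)) (hProwsum _) _ j
    have hlb : ∀ j, Finset.univ.inf' Finset.univ_nonempty (y ((⌊t⌋₊ : ℝ))) ≤ y t j := by
      intro j
      rw [hyt]
      exact inf'_le_mulVec _ (hPnn _ (by linarith)) (hProwsum _) _ j
    have hdiff : ∀ j, |y t i - y t j|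
        ≤ Finset.univ.sup' Finset.univ_nonempty (y ((⌊t⌋₊ : ℝ)))
          - Finset.univ.inf' Finset.univ_nonempty (y ((⌊t⌋₊ : ℝ))) := by
      intro j
      rw [abs_le]
      constructor
      · linarith [hub j, hlb i]
      · linarith [hub i, hlb j]
    have hrep : y t i - c = ∑ x, w x * (y t i - y t x) := by
      have h1 : ∑ x, w x * (y t i - y t x)
          = (∑ x, w x) * (y t i) - ∑ x, w x * y t x := by
        rw [Finset.sum_mul, ← Finset.sum_sub_distrib]
        exact Finset.sum_congr rfl fun x _ => by ring
      rw [h1, hwsum, hwy t, one_mul]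
    rw [hrep]
    calc |∑ x, w x * (y t i - y t x)|
        ≤ ∑ x, |w x * (y t i - y t x)| := Finset.abs_sum_le_sum_abs _ _
      _ ≤ ∑ x, |w x| * (Finset.univ.sup' Finset.univ_nonempty (y ((⌊t⌋₊ : ℝ)))
          - Finset.univ.inf' Finset.univ_nonempty (y ((⌊t⌋₊ : ℝ)))) :=
          Finset.sum_le_sum fun x _ => by
            rw [abs_mul]
            exact mul_le_mul_of_nonneg_left (hdiff x) (abs_nonneg _)
      _ = W * (Finset.univ.sup' Finset.univ_nonempty (y ((⌊t⌋₊ : ℝ)))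
          - Finset.univ.inf' Finset.univ_nonempty (y ((⌊t⌋₊ : ℝ)))) := by
          rw [← Finset.sum_mul]
      _ ≤ W * (r ^ (⌊t⌋₊) * osc0) :=
          mul_le_mul_of_nonneg_left (hkey (⌊t⌋₊)) hWnn
  -- pass to the limit
  have hlimg : Tendsto (fun t : ℝ => W * (r ^ (⌊t⌋₊) * osc0)) atTop (𝓝 0) := by
    have h0 : Tendsto (fun k : ℕ => r ^ k) atTop (𝓝 0) :=
      tendsto_pow_atTop_nhds_zero_of_lt_one hr0 hr1
    have h1 : Tendsto (fun t : ℝ => r ^ (⌊t⌋₊)) atTop (𝓝 0) :=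
      h0.comp tendsto_nat_floor_atTop
    have h2 := (h1.mul_const osc0).const_mul W
    simpa using h2
  rw [tendsto_pi_nhds]
  intro i
  have hC : ((n : ℝ) + 1)⁻¹ *
      ((∑ j, (∑ i, A⁻¹ i j) * y0 (Sum.inl j)) + y0 (Sum.inr ())) = c := by
    rw [hcdef, Fintype.sum_sum_type]
    simp only [hwdef, Sum.elim_inl, Sum.elim_inr]
    rw [mul_add, Finset.mul_sum]
    congr 1
    · exact Finset.sum_congr rfl fun j _ => by rw [hsdef]; ring
    · simp
  have h3 : Tendsto (fun t => y t i - c) atTop (𝓝 0) := by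
    apply squeeze_zero_norm'
    · filter_upwards [eventually_ge_atTop (0 : ℝ)] with t ht
      simpa [Real.norm_eq_abs] using hmain t ht i
    · exact hlimg
  have h4 : Tendsto (fun t => y t i) atTop (𝓝 c) := by
    have := h3.add_const c
    simpa using this
  rw [← hC] at h4
  exact h4
end

section
/- Let L be an n×n Laplacian matrix whose eigenprojection is the rank-one matrix L^⊢ = 1·wᵀ for some w ∈ ℝⁿ (so that the system ẋ = −Lx reaches asymptotic consensus ⟨w, x(0)⟩). Then for any y⁰ ∈ ℝ^{n+1}, the double limit lim_{δ→0⁺} lim_{t→∞} exp(−t(L₀ + H_{δ,δ1}))·y⁰ equals the constant vector c·1′ with c = (1/(n+1))·( n·Σ_{j=1}^n w_j y⁰_j + y⁰_{n+1} ), i.e., the asymptotic consensus of the hub system is the scalar product of y⁰ with (n+1)⁻¹·(n w₁, …, n wₙ, 1)ᵀ. -/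
open Matrix Filter Topology

lemma laplacian_adjugate_structure {n : ℕ} (hn : 0 < n)
    (L : Matrix (Fin n) (Fin n) ℝ) (hL : IsLaplacian L) (w : Fin n → ℝ)
    (hJ : IsEigenprojection L (Matrix.vecMulVec (fun _ => (1 : ℝ)) w)) :
    (∑ j, w j) = 1 ∧ ∃ κ : ℝ, κ ≠ 0 ∧ ∀ i j, Matrix.adjugate L i j = κ * w j := by
  classical
  set Q : Matrix (Fin n) (Fin n) ℝ := Matrix.vecMulVec (fun _ => (1 : ℝ)) w with hQdef
  obtain ⟨hQQ, hrange, hker⟩ := hJ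
  set i₀ : Fin n := ⟨0, hn⟩
  -- L kills constants
  have hL1 : L.mulVec (fun _ => 1) = 0 := by
    ext i
    simp [Matrix.mulVec, dotProduct, hL.2 i]
  -- Q action
  have hQmv : ∀ x : Fin n → ℝ, Q.mulVec x = fun _ => ∑ j, w j * x j := by
    intro x
    ext i
    simp [hQdef, Matrix.mulVec, dotProduct, Matrix.vecMulVec_apply]
  -- the defining set of the index is nonempty
  have hSne : {k : ℕ | (L ^ (k + 1)).rank = (L ^ k).rank}.Nonempty := by
    by_contra hno
    rw [Set.not_nonempty_iff_eq_empty] at hno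
    have hlt : ∀ k, (L ^ (k + 1)).rank < (L ^ k).rank := by
      intro k
      have hne : (L ^ (k + 1)).rank ≠ (L ^ k).rank := by
        intro heq
        have : k ∈ {k : ℕ | (L ^ (k + 1)).rank = (L ^ k).rank} := heq
        rw [hno] at this
        exact this
      have hle : (L ^ (k + 1)).rank ≤ (L ^ k).rank := by
        rw [pow_succ]
        exact Matrix.rank_mul_le_left _ _
      omega
    have key : ∀ k, (L ^ k).rank + k ≤ (L ^ 0).rank := by
      intro k
      induction k with
      | zero => simp
      | succ m ih => have := hlt m; omega
    have := key ((L ^ 0).rank + 1)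
    omega
  have hkmem : (L ^ (matIndex L + 1)).rank = (L ^ matIndex L).rank := Nat.sInf_mem hSne
  -- the index is at least 1
  have hk1 : 1 ≤ matIndex L := by
    by_contra hk
    have h0 : matIndex L = 0 := by omega
    rw [h0] at hkmem
    have hrk : L.rank = Fintype.card (Fin n) := by
      simpa [pow_one, pow_zero] using hkmem
    have hrange_top : LinearMap.range L.mulVecLin = ⊤ := by
      apply Submodule.eq_top_of_finrank_eq
      rw [Module.finrank_fintype_fun_eq_card]
      exact hrk
    have hinj : Function.Injective L.mulVecLin :=
      (LinearMap.injective_iff_surjective_of_finrank_eq_finrank rfl).2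
        (LinearMap.range_eq_top.1 hrange_top)
    have h10 : (fun _ => (1 : ℝ)) = (0 : Fin n → ℝ) := by
      apply hinj
      simpa [Matrix.mulVecLin_apply] using hL1
    exact one_ne_zero (congrFun h10 i₀)
  obtain ⟨m, hm⟩ : ∃ m, matIndex L = m + 1 := ⟨matIndex L - 1, by omega⟩
  -- L^k kills constants
  have hpow1 : (L ^ matIndex L).mulVec (fun _ => 1) = 0 := by
    rw [hm, pow_succ, ← Matrix.mulVec_mulVec, hL1, Matrix.mulVec_zero]
  -- there is x with ⟨w, x⟩ = 1, hence some w j₀ ≠ 0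
  have hmem1 : (fun _ => (1 : ℝ)) ∈ LinearMap.ker (L ^ matIndex L).mulVecLin := by
    rw [LinearMap.mem_ker, Matrix.mulVecLin_apply]
    exact hpow1
  rw [← hrange] at hmem1
  obtain ⟨x₁, hx₁⟩ := hmem1
  have hx₁' : ∑ j, w j * x₁ j = 1 := by
    have := congrFun hx₁ i₀
    rw [Matrix.mulVecLin_apply, hQmv] at this
    exact this
  have hj₀ : ∃ j₀, w j₀ ≠ 0 := by
    by_contra h
    push_neg at h
    rw [Finset.sum_eq_zero (fun j _ => by rw [h j, zero_mul])] at hx₁'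
    exact zero_ne_one hx₁'
  obtain ⟨j₀, hwj₀⟩ := hj₀
  -- sum of w is 1
  have hsw : ∑ j, w j = 1 := by
    have := congrFun (congrFun hQQ i₀) j₀
    rw [Matrix.mul_apply] at this
    simp only [hQdef, Matrix.vecMulVec_apply, one_mul] at this
    rw [← Finset.sum_mul] at this
    exact mul_right_cancel₀ hwj₀ (by rw [this, one_mul])
  -- w is orthogonal to the image of L
  have hdotL : ∀ x : Fin n → ℝ, ∑ i, w i * L.mulVec x i = 0 := by
    intro x
    have hQx : Q.mulVec (Q.mulVec x) = Q.mulVec x := by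
      rw [Matrix.mulVec_mulVec, hQQ]
    have hxk : x - Q.mulVec x ∈ LinearMap.ker Q.mulVecLin := by
      rw [LinearMap.mem_ker, map_sub]
      simp only [Matrix.mulVecLin_apply]
      rw [hQx, sub_self]
    rw [hker] at hxk
    obtain ⟨z, hz⟩ := hxk
    rw [Matrix.mulVecLin_apply] at hz
    have hLQx : L.mulVec (Q.mulVec x) = 0 := by
      rw [hQmv]
      ext i
      simp [Matrix.mulVec, dotProduct, ← Finset.sum_mul, hL.2 i]
    have hLx : L.mulVec x = (L ^ matIndex L).mulVec (L.mulVec z) := by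
      have hxsplit : Q.mulVec x + (x - Q.mulVec x) = x := by abel
      have : L.mulVec x = L.mulVec (Q.mulVec x) + L.mulVec (x - Q.mulVec x) := by
        rw [← Matrix.mulVec_add, hxsplit]
      rw [this, hLQx, zero_add, ← hz, Matrix.mulVec_mulVec, Matrix.mulVec_mulVec,
        ← pow_succ', ← pow_succ]
    have hmemr : L.mulVec x ∈ LinearMap.range (L ^ matIndex L).mulVecLin :=
      ⟨L.mulVec z, by rw [Matrix.mulVecLin_apply, hLx]⟩
    rw [← hker, LinearMap.mem_ker, Matrix.mulVecLin_apply, hQmv] at hmemr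
    exact congrFun hmemr i₀
  -- w is a left null vector of L
  have hwL : w ᵥ* L = 0 := by
    ext j
    have := hdotL (Pi.single j 1)
    have hmv : ∀ i, L.mulVec (Pi.single j 1) i = L i j := by
      intro i
      simp [Matrix.mulVec, dotProduct, Pi.single_apply]
    rw [Finset.sum_congr rfl (fun i _ => by rw [hmv i])] at this
    simpa [Matrix.vecMul, dotProduct] using this
  -- kernel of L consists of constant vectors
  have hconst : ∀ x : Fin n → ℝ, L.mulVec x = 0 → ∃ t, x = fun _ => t := by
    intro x hx
    have hxk : (L ^ matIndex L).mulVec x = 0 := by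
      rw [hm, pow_succ, ← Matrix.mulVec_mulVec, hx, Matrix.mulVec_zero]
    have hmem : x ∈ LinearMap.ker (L ^ matIndex L).mulVecLin := by
      rw [LinearMap.mem_ker, Matrix.mulVecLin_apply]; exact hxk
    rw [← hrange] at hmem
    obtain ⟨z, hz⟩ := hmem
    rw [Matrix.mulVecLin_apply, hQmv] at hz
    exact ⟨∑ j, w j * z j, hz.symm⟩
  -- left null vectors of L are multiples of w
  have hspanw : ∀ r : Fin n → ℝ, r ᵥ* L = 0 → ∀ j, w j₀ * r j = r j₀ * w j := by
    intro r hr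
    have hperp : ∀ x : Fin n → ℝ, (∑ i, w i * x i) = 0 → (∑ i, r i * x i) = 0 := by
      intro x hx
      have hmem : x ∈ LinearMap.ker Q.mulVecLin := by
        rw [LinearMap.mem_ker, Matrix.mulVecLin_apply, hQmv]
        ext i
        simp [hx]
      rw [hker] at hmem
      obtain ⟨z, hz⟩ := hmem
      rw [Matrix.mulVecLin_apply] at hz
      have hrLk : r ᵥ* (L ^ matIndex L) = 0 := by
        rw [hm, pow_succ', ← Matrix.vecMul_vecMul, hr, Matrix.zero_vecMul]
      calc ∑ i, r i * x i = r ⬝ᵥ (L ^ matIndex L).mulVec z := by rw [hz]; rfl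
        _ = (r ᵥ* (L ^ matIndex L)) ⬝ᵥ z := Matrix.dotProduct_mulVec _ _ _
        _ = 0 := by rw [hrLk, zero_dotProduct]
    intro j
    have hx : ∑ i, w i * (fun l => w j₀ * (if l = j then (1:ℝ) else 0) - w j * (if l = j₀ then (1:ℝ) else 0)) i = 0 := by
      simp only [mul_sub, Finset.sum_sub_distrib, mul_ite, mul_one, mul_zero,
        Finset.sum_ite_eq', Finset.mem_univ, if_true]
      ring
    have h2 := hperp _ hx
    simp only [mul_sub, Finset.sum_sub_distrib, mul_ite, mul_one, mul_zero,
      Finset.sum_ite_eq', Finset.mem_univ, if_true] at h2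
    linarith
  -- det L = 0
  have hdetL : L.det = 0 := by
    rw [← Matrix.exists_mulVec_eq_zero_iff]
    exact ⟨fun _ => 1, fun h => one_ne_zero (congrFun h i₀), hL1⟩
  -- columns of the adjugate are constant
  have hcolconst : ∀ j i i', Matrix.adjugate L i j = Matrix.adjugate L i' j := by
    intro j i i'
    have hcol : L.mulVec (fun l => Matrix.adjugate L l j) = 0 := by
      ext i''
      have h0 : (L * Matrix.adjugate L) i'' j = 0 := by
        rw [Matrix.mul_adjugate, hdetL, zero_smul]
        rfl
      simp only [Pi.zero_apply]
      calc (L *ᵥ fun l => Matrix.adjugate L l j) i'' = (L * Matrix.adjugate L) i'' j := rfl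
        _ = 0 := h0
    obtain ⟨t, ht⟩ := hconst _ hcol
    rw [congrFun ht i, congrFun ht i']
  -- rows of the adjugate are left null vectors of L
  have hrownull : ∀ i, (fun l => Matrix.adjugate L i l) ᵥ* L = 0 := by
    intro i
    ext j
    have h0 : (Matrix.adjugate L * L) i j = 0 := by
      rw [Matrix.adjugate_mul, hdetL, zero_smul]
      rfl
    simp only [Pi.zero_apply]
    calc ((fun l => Matrix.adjugate L i l) ᵥ* L) j = (Matrix.adjugate L * L) i j := rfl
      _ = 0 := h0
  set κ : ℝ := Matrix.adjugate L i₀ j₀ / w j₀ with hκdef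
  have hadj : ∀ i j, Matrix.adjugate L i j = κ * w j := by
    intro i j
    rw [hcolconst j i i₀]
    have := hspanw _ (hrownull i₀) j
    rw [hκdef, div_mul_eq_mul_div, eq_div_iff hwj₀]
    linarith
  refine ⟨hsw, κ, ?_, hadj⟩
  -- it remains to show κ ≠ 0; κ = det (L + Q)
  -- determinant of a row update by w
  have hupd : ∀ j, (L.updateRow j w).det = κ * w j := by
    intro j
    have h1 : (L.updateRow j w).det = Matrix.cramer Lᵀ w j := by
      have h2 : L.updateRow j w = (Lᵀ.updateCol j w)ᵀ := by
        rw [← Matrix.updateRow_transpose, Matrix.transpose_transpose]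
      rw [h2, Matrix.det_transpose, Matrix.cramer_apply]
    rw [h1, Matrix.cramer_eq_adjugate_mulVec]
    have : ∀ l, Matrix.adjugate Lᵀ j l = κ * w j := by
      intro l
      rw [← Matrix.adjugate_transpose, Matrix.transpose_apply, hadj]
    calc (Matrix.adjugate Lᵀ).mulVec w j = ∑ l, Matrix.adjugate Lᵀ j l * w l := rfl
      _ = ∑ l, κ * w j * w l := by
          exact Finset.sum_congr rfl (fun l _ => by rw [this l])
      _ = κ * w j * ∑ l, w l := by rw [← Finset.mul_sum]
      _ = κ * w j := by rw [hsw, mul_one]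
  -- κ equals det (L + Q), which is nonzero
  set C : Matrix (Fin n) (Fin n) ℝ := L + Q with hCdef
  -- expansion of det C by multilinearity
  have hrowQ : ∀ i : Fin n, Q i = w := by
    intro i
    funext l
    simp [hQdef, Matrix.vecMulVec_apply]
  have hexpand : C.det = ∑ s : Finset (Fin n),
      Matrix.detRowAlternating (s.piecewise L Q) := by
    have : C.det = Matrix.detRowAlternating (L + Q) := rfl
    rw [this]
    exact (Matrix.detRowAlternating (R := ℝ) (n := Fin n)).toMultilinearMap.map_add_univ L Q
  -- terms with at least two rows replaced vanish
  have hterm : ∀ s : Finset (Fin n), s ≠ Finset.univ → (∀ i, s ≠ Finset.univ.erase i) →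
      Matrix.detRowAlternating (s.piecewise L Q) = 0 := by
    intro s hs1 hs2
    have h1 : ∃ i, i ∉ s := by
      by_contra h
      push_neg at h
      exact hs1 (Finset.eq_univ_iff_forall.2 h)
    obtain ⟨i, hi⟩ := h1
    have h2 : ∃ j, j ∉ s ∧ j ≠ i := by
      by_contra h
      push_neg at h
      apply hs2 i
      apply Finset.ext
      intro a
      simp only [Finset.mem_erase, Finset.mem_univ, and_true]
      constructor
      · intro ha
        intro hai
        exact hi (hai ▸ ha)
      · intro hai
        by_contra has
        exact hai (h a has)
    obtain ⟨j, hj, hji⟩ := h2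
    have heq : s.piecewise L Q j = s.piecewise L Q i := by
      rw [show s.piecewise L Q j = Q j from Finset.piecewise_eq_of_notMem _ _ _ hj,
        show s.piecewise L Q i = Q i from Finset.piecewise_eq_of_notMem _ _ _ hi,
        hrowQ, hrowQ]
    exact AlternatingMap.map_eq_zero_of_eq _ _ heq hji
  -- the surviving index set
  have herase_ne_univ : ∀ i : Fin n, Finset.univ.erase i ≠ Finset.univ := by
    intro i h
    have hmem : i ∈ Finset.univ.erase i := by rw [h]; exact Finset.mem_univ i
    exact (Finset.notMem_erase i _) hmem
  set T : Finset (Finset (Fin n)) :=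
    insert Finset.univ (Finset.univ.image (fun i : Fin n => Finset.univ.erase i)) with hTdef
  have hvanish : ∀ s ∈ (Finset.univ : Finset (Finset (Fin n))), s ∉ T →
      Matrix.detRowAlternating (s.piecewise L Q) = 0 := by
    intro s _ hsT
    simp only [hTdef, Finset.mem_insert, Finset.mem_image, Finset.mem_univ, true_and,
      not_or, not_exists] at hsT
    exact hterm s hsT.1 (fun i h => hsT.2 i h.symm)
  have hsumT : C.det = ∑ s ∈ T, Matrix.detRowAlternating (s.piecewise L Q) := by
    rw [hexpand, Finset.sum_subset (Finset.subset_univ T)]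
    intro s hs hsT
    exact hvanish s hs hsT
  have huniv_notmem : Finset.univ ∉ Finset.univ.image (fun i : Fin n => Finset.univ.erase i) := by
    simp only [Finset.mem_image, Finset.mem_univ, true_and, not_exists]
    exact fun i h => herase_ne_univ i h
  have herase_inj : ∀ a ∈ (Finset.univ : Finset (Fin n)), ∀ b ∈ (Finset.univ : Finset (Fin n)),
      Finset.univ.erase a = Finset.univ.erase b → a = b := by
    intro a _ b _ hab
    by_contra hne
    have hmem : a ∈ Finset.univ.erase b := Finset.mem_erase.2 ⟨hne, Finset.mem_univ a⟩
    rw [← hab] at hmem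
    exact (Finset.notMem_erase a _) hmem
  have hdetC : C.det = κ := by
    rw [hsumT, hTdef, Finset.sum_insert huniv_notmem, Finset.sum_image herase_inj]
    have huniv : Matrix.detRowAlternating ((Finset.univ : Finset (Fin n)).piecewise L Q) = 0 := by
      rw [show (Finset.univ : Finset (Fin n)).piecewise L Q = L from Finset.piecewise_univ _ _]
      exact hdetL
    have herase : ∀ i : Fin n,
        Matrix.detRowAlternating ((Finset.univ.erase i).piecewise L Q) = κ * w i := by
      intro i
      have : (Finset.univ.erase i).piecewise L Q = L.updateRow i w := by
        funext a b
        by_cases hai : a = i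
        · subst hai
          rw [show (Finset.univ.erase a).piecewise L Q a = Q a from
              Finset.piecewise_eq_of_notMem _ _ _ (Finset.notMem_erase a _),
            Matrix.updateRow_self, hrowQ]
        · rw [show (Finset.univ.erase i).piecewise L Q a = L a from
              Finset.piecewise_eq_of_mem _ _ _ (Finset.mem_erase.2 ⟨hai, Finset.mem_univ a⟩),
            Matrix.updateRow_ne hai]
      rw [this]
      exact hupd i
    rw [huniv, zero_add]
    rw [Finset.sum_congr rfl (fun i _ => herase i), ← Finset.mul_sum, hsw, mul_one]
  -- C is nonsingular
  have hdetC_ne : C.det ≠ 0 := by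
    intro h0
    obtain ⟨x, hxne, hx⟩ := (Matrix.exists_mulVec_eq_zero_iff).2 h0
    set t : ℝ := ∑ j, w j * x j with htdef
    have hCx : L.mulVec x + (fun _ => t) = 0 := by
      rw [← hQmv x, ← Matrix.add_mulVec, ← hCdef]
      exact hx
    have hLx : L.mulVec x = fun _ => -t := by
      funext i
      have := congrFun hCx i
      simp only [Pi.add_apply, Pi.zero_apply] at this
      linarith
    have ht0 : t = 0 := by
      have h1 : ∑ i : Fin n, w i * (-t) = 0 := by
        have h2 := hdotL x
        rw [hLx] at h2
        simpa using h2
      rw [← Finset.sum_mul, hsw, one_mul] at h1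
      linarith
    have hLx0 : L.mulVec x = 0 := by
      rw [hLx, ht0]
      funext i
      simp
    obtain ⟨t', ht'⟩ := hconst x hLx0
    have ht'0 : t' = 0 := by
      have : t = t' := by
        rw [htdef, ht']
        rw [← Finset.sum_mul, hsw, one_mul]
      rw [← this, ht0]
    apply hxne
    rw [ht', ht'0]
    rfl
  rw [← hdetC]
  exact hdetC_ne


lemma vecMul_exp_of_vecMul_eq_zero {N : Type*} [Fintype N] [DecidableEq N]
    (B : Matrix N N ℝ) (u : N → ℝ) (h : u ᵥ* B = 0) :
    u ᵥ* (NormedSpace.exp B) = u := by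
  letI : SeminormedRing (Matrix N N ℝ) := Matrix.linftyOpSemiNormedRing
  letI : NormedRing (Matrix N N ℝ) := Matrix.linftyOpNormedRing
  letI : NormedAlgebra ℝ (Matrix N N ℝ) := Matrix.linftyOpNormedAlgebra
  have hpow : ∀ k : ℕ, u ᵥ* (B ^ (k + 1)) = 0 := by
    intro k
    rw [pow_succ']
    rw [← Matrix.vecMul_vecMul, h, Matrix.zero_vecMul]
  have hs : Summable (fun k : ℕ => ((k.factorial : ℝ)⁻¹) • B ^ k) :=
    NormedSpace.expSeries_summable' (𝕂 := ℝ) B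
  let f : Matrix N N ℝ →ₗ[ℝ] (N → ℝ) :=
    { toFun := fun M => u ᵥ* M
      map_add' := fun A C => Matrix.vecMul_add A C u
      map_smul' := fun r M => by
        ext j
        simp [Matrix.vecMul, dotProduct, Finset.mul_sum, mul_left_comm] }
  let F : Matrix N N ℝ →L[ℝ] (N → ℝ) := f.toContinuousLinearMap
  have hexp : NormedSpace.exp B = ∑' k : ℕ, ((k.factorial : ℝ)⁻¹) • B ^ k := by
    rw [NormedSpace.exp_eq_tsum ℝ]
  have hmap : F (NormedSpace.exp B) = ∑' k : ℕ, F (((k.factorial : ℝ)⁻¹) • B ^ k) := by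
    rw [hexp]
    exact (hs.hasSum.mapL F).tsum_eq.symm
  have hFval : ∀ k : ℕ, F (((k.factorial : ℝ)⁻¹) • B ^ k)
      = ((k.factorial : ℝ)⁻¹) • (u ᵥ* (B ^ k)) := fun k => F.map_smul _ _
  have : F (NormedSpace.exp B) = u := by
    rw [hmap]
    rw [tsum_eq_single 0]
    · rw [hFval 0, pow_zero, Matrix.vecMul_one]
      norm_num
    · intro k hk
      obtain ⟨j, rfl⟩ := Nat.exists_eq_succ_of_ne_zero hk
      rw [hFval, hpow, smul_zero]
  exact this

/-- If the system `ẋ = -Lx` reaches asymptotic consensus `⟨w, x(0)⟩`, i.e. the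
eigenprojection of `L` is `1·wᵀ`, then the double limit (first `t → ∞`, then
`δ → 0⁺`) of the symmetric-hub system equals the constant vector `c·1′` with
`c = (1/(n+1))·(n·Σⱼ wⱼ y⁰ⱼ + y⁰_{n+1})`. -/
theorem latent_consensus_symmetric_hub_of_consensus {n : ℕ}
    (L : Matrix (Fin n) (Fin n) ℝ) (hL : IsLaplacian L) (w : Fin n → ℝ)
    (hJ : IsEigenprojection L (Matrix.vecMulVec (fun _ => (1 : ℝ)) w))
    (y0 : (Fin n ⊕ Unit) → ℝ) (c : ℝ → ℝ)
    (hc : ∀ δ : ℝ, 0 < δ →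
      Tendsto
        (fun t : ℝ =>
          (NormedSpace.exp (-(t • (hubL0 L + hubH δ (fun _ => δ))))).mulVec y0)
        atTop (𝓝 (fun _ => c δ))) :
    Tendsto c (𝓝[>] 0)
      (𝓝 (((n : ℝ) + 1)⁻¹ *
        ((n : ℝ) * (∑ j, w j * y0 (Sum.inl j)) + y0 (Sum.inr ())))) := by
  classical
  rcases Nat.eq_zero_or_pos n with hn0 | hn
  · -- degenerate case n = 0
    subst hn0
    have hA : ∀ δ : ℝ, hubL0 L + hubH δ (fun _ => δ) = 0 := by
      intro δ
      ext i j
      cases i with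
      | inl i => exact i.elim0
      | inr _ =>
        cases j with
        | inl j => exact j.elim0
        | inr _ =>
          simp [hubL0, hubH, hubHI, hubHv, Matrix.fromBlocks]
    have hcy : ∀ δ : ℝ, 0 < δ → c δ = y0 (Sum.inr ()) := by
      intro δ hδ
      have h1 := hc δ hδ
      simp only [hA δ, smul_zero, neg_zero, NormedSpace.exp_zero, Matrix.one_mulVec] at h1
      have h2 : y0 = fun _ => c δ := tendsto_nhds_unique tendsto_const_nhds h1
      exact (congrFun h2 (Sum.inr ())).symm
    have htarget : (((0:ℕ) : ℝ) + 1)⁻¹ *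
        (((0:ℕ) : ℝ) * (∑ j, w j * y0 (Sum.inl j)) + y0 (Sum.inr ())) = y0 (Sum.inr ()) := by
      norm_num
    rw [htarget]
    have hev : (fun _ : ℝ => y0 (Sum.inr ())) =ᶠ[𝓝[>] (0:ℝ)] c := by
      filter_upwards [self_mem_nhdsWithin] with δ hδ
      exact (hcy δ hδ).symm
    exact Tendsto.congr' hev tendsto_const_nhds
  · -- main case n ≥ 1
    obtain ⟨hsw, κ, hκ, hadj⟩ := laplacian_adjugate_structure hn L hL w hJ
    set i₀ : Fin n := ⟨0, hn⟩ with hi₀def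
    have hnR : ((n:ℝ)) ≠ 0 := by
      have : (0:ℝ) < n := by exact_mod_cast hn
      linarith
    -- the perturbed matrix family
    set Mm : ℝ → Matrix (Fin n) (Fin n) ℝ :=
      fun δ => L + δ • (1 : Matrix (Fin n) (Fin n) ℝ)
        - (δ / n) • Matrix.vecMulVec (fun _ => (1:ℝ)) (fun _ => (1:ℝ)) with hMdef
    have hMentry : ∀ δ (i j : Fin n), Mm δ i j = L i j + (if i = j then δ else 0) - δ / n := by
      intro δ i j
      simp [hMdef, Matrix.one_apply, Matrix.vecMulVec_apply, mul_ite]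
    set g : ℝ → Fin n → ℝ := fun δ j => Matrix.adjugate (Mm δ) i₀ j with hgdef
    -- the perturbed matrix is singular
    have hMdet : ∀ δ : ℝ, (Mm δ).det = 0 := by
      intro δ
      rw [← Matrix.exists_mulVec_eq_zero_iff]
      refine ⟨fun _ => 1, fun h => one_ne_zero (congrFun h i₀), ?_⟩
      ext i
      rw [Pi.zero_apply]
      calc (Mm δ).mulVec (fun _ => 1) i = ∑ j, Mm δ i j := by
            simp [Matrix.mulVec, dotProduct]
        _ = ∑ j, (L i j + (if i = j then δ else 0) - δ / n) :=
            Finset.sum_congr rfl (fun j _ => by rw [hMentry δ i j])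
        _ = (∑ j, L i j) + (∑ j, if i = j then δ else 0) - ∑ _j : Fin n, δ / n := by
            rw [Finset.sum_sub_distrib, Finset.sum_add_distrib]
        _ = 0 := by
            rw [hL.2 i, Finset.sum_ite_eq, Finset.sum_const, Finset.card_univ, Fintype.card_fin]
            simp only [Finset.mem_univ, if_true, zero_add, nsmul_eq_mul]
            field_simp
            ring
    -- the adjugate row is a left null vector of Mm δ
    have hgM : ∀ δ : ℝ, ∀ j, ∑ i, g δ i * Mm δ i j = 0 := by
      intro δ j
      have h0 : (Matrix.adjugate (Mm δ) * Mm δ) i₀ j = 0 := by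
        rw [Matrix.adjugate_mul, hMdet δ, zero_smul]
        rfl
      rw [← h0, Matrix.mul_apply]
    -- the hub left null vector
    set S : ℝ → ℝ := fun δ => ∑ j, g δ j with hSdef
    set u : ℝ → (Fin n ⊕ Unit) → ℝ :=
      fun δ => Sum.elim (g δ) (fun _ => S δ / n) with hudef
    set A : ℝ → Matrix (Fin n ⊕ Unit) (Fin n ⊕ Unit) ℝ :=
      fun δ => hubL0 L + hubH δ (fun _ => δ) with hAdef
    -- entries of A
    have hA11 : ∀ (δ : ℝ) (i j : Fin n),
        A δ (Sum.inl i) (Sum.inl j) = L i j + (if i = j then δ else 0) := by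
      intro δ i j
      simp [hAdef, hubL0, hubH, hubHI, hubHv, Matrix.one_apply, mul_ite]
    have hA12 : ∀ (δ : ℝ) (i : Fin n) (t : Unit), A δ (Sum.inl i) (Sum.inr t) = -δ := by
      intro δ i t
      simp [hAdef, hubL0, hubH, hubHI, hubHv]
    have hA21 : ∀ (δ : ℝ) (t : Unit) (j : Fin n), A δ (Sum.inr t) (Sum.inl j) = -δ := by
      intro δ t j
      simp [hAdef, hubL0, hubH, hubHI, hubHv]
    have hA22 : ∀ (δ : ℝ) (t t' : Unit), A δ (Sum.inr t) (Sum.inr t') = (n:ℝ) * δ := by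
      intro δ t t'
      simp [hAdef, hubL0, hubH, hubHI, hubHv, Finset.sum_const, Finset.card_univ,
        Fintype.card_fin, nsmul_eq_mul]
    -- u δ is a left null vector of A δ
    have huA : ∀ δ : ℝ, ∀ j, ∑ i, u δ i * A δ i j = 0 := by
      intro δ j
      rw [Fintype.sum_sum_type]
      cases j with
      | inl j =>
        have h1 : ∑ i : Fin n, u δ (Sum.inl i) * A δ (Sum.inl i) (Sum.inl j)
            = ∑ i : Fin n, g δ i * (L i j + (if i = j then δ else 0)) := by
          exact Finset.sum_congr rfl (fun i _ => by rw [hA11, hudef]; rfl)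
        have h2 : ∑ i : Fin n, g δ i * (L i j + (if i = j then δ else 0))
            = δ / n * S δ := by
          have h3 := hgM δ j
          have h4 : ∀ i, g δ i * Mm δ i j
              = g δ i * (L i j + (if i = j then δ else 0)) - g δ i * (δ / n) := by
            intro i
            rw [hMentry δ i j]
            ring
          rw [Finset.sum_congr rfl (fun i _ => h4 i), Finset.sum_sub_distrib] at h3
          rw [← Finset.sum_mul] at h3
          have hSδ : (∑ i : Fin n, g δ i) = S δ := rfl
          rw [hSδ] at h3
          linear_combination h3
        rw [h1, h2]
        have h5 : ∑ i : Unit, u δ (Sum.inr i) * A δ (Sum.inr i) (Sum.inl j)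
            = (S δ / n) * (-δ) := by
          rw [Fintype.sum_unique]
          rw [hA21]
          rfl
        rw [h5]
        field_simp
        ring
      | inr t =>
        have h1 : ∑ i : Fin n, u δ (Sum.inl i) * A δ (Sum.inl i) (Sum.inr t)
            = S δ * (-δ) := by
          have hterm : ∀ i : Fin n, u δ (Sum.inl i) * A δ (Sum.inl i) (Sum.inr t)
              = g δ i * (-δ) := by
            intro i
            rw [hA12]
            rfl
          rw [Finset.sum_congr rfl (fun i _ => hterm i), ← Finset.sum_mul]
        have h2 : ∑ i : Unit, u δ (Sum.inr i) * A δ (Sum.inr i) (Sum.inr t)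
            = (S δ / n) * ((n:ℝ) * δ) := by
          rw [Fintype.sum_unique]
          rw [hA22]
          rfl
        rw [h1, h2]
        field_simp
        ring
    -- the key identity for positive δ
    have hkey : ∀ δ : ℝ, 0 < δ → (∑ i, u δ i * y0 i) = (∑ i, u δ i) * c δ := by
      intro δ hδ
      have h1 := hc δ hδ
      have hcont : Continuous (fun x : (Fin n ⊕ Unit) → ℝ => ∑ i, u δ i * x i) :=
        continuous_finset_sum _ (fun i _ => continuous_const.mul (continuous_apply i))
      have h2 : Tendsto (fun t : ℝ => ∑ i, u δ i * (NormedSpace.exp (-(t • A δ))).mulVec y0 i)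
          atTop (𝓝 (∑ i, u δ i * c δ)) := (hcont.tendsto _).comp h1
      have hconstfun : ∀ t : ℝ,
          ∑ i, u δ i * (NormedSpace.exp (-(t • A δ))).mulVec y0 i = ∑ i, u δ i * y0 i := by
        intro t
        have hB : (u δ) ᵥ* (-(t • A δ)) = 0 := by
          ext j
          rw [Pi.zero_apply]
          have hterm : ∀ i, u δ i * (-(t • A δ)) i j = -t * (u δ i * A δ i j) := by
            intro i
            simp only [Matrix.neg_apply, Matrix.smul_apply, smul_eq_mul]
            ring
          calc (u δ ᵥ* (-(t • A δ))) j = ∑ i, u δ i * (-(t • A δ)) i j := rfl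
            _ = ∑ i, -t * (u δ i * A δ i j) := Finset.sum_congr rfl (fun i _ => hterm i)
            _ = -t * ∑ i, u δ i * A δ i j := by rw [← Finset.mul_sum]
            _ = 0 := by rw [huA δ j, mul_zero]
        have hE := vecMul_exp_of_vecMul_eq_zero _ _ hB
        calc ∑ i, u δ i * (NormedSpace.exp (-(t • A δ))).mulVec y0 i
            = (u δ) ⬝ᵥ ((NormedSpace.exp (-(t • A δ))).mulVec y0) := rfl
          _ = ((u δ) ᵥ* NormedSpace.exp (-(t • A δ))) ⬝ᵥ y0 :=
              Matrix.dotProduct_mulVec _ _ _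
          _ = (u δ) ⬝ᵥ y0 := by rw [hE]
          _ = ∑ i, u δ i * y0 i := rfl
      have h4 : Tendsto (fun _ : ℝ => ∑ i, u δ i * y0 i) atTop (𝓝 (∑ i, u δ i * c δ)) :=
        h2.congr hconstfun
      have h5 := tendsto_nhds_unique tendsto_const_nhds h4
      rw [h5, Finset.sum_mul]
    -- continuity
    have hMcont : Continuous Mm := by
      apply Continuous.sub
      · exact continuous_const.add (continuous_id.smul continuous_const)
      · exact (continuous_id.div_const _).smul continuous_const
    have hgcont : ∀ j, Continuous (fun δ => g δ j) := by
      intro j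
      exact (hMcont.matrix_adjugate).matrix_elem i₀ j
    have hScont : Continuous S := continuous_finset_sum _ (fun j _ => hgcont j)
    set Nf : ℝ → ℝ := fun δ => (∑ j, g δ j * y0 (Sum.inl j)) + (S δ / n) * y0 (Sum.inr ())
      with hNfdef
    set Df : ℝ → ℝ := fun δ => S δ + S δ / n with hDfdef
    have hNcont : Continuous Nf := by
      apply Continuous.add
      · exact continuous_finset_sum _ (fun j _ => (hgcont j).mul continuous_const)
      · exact (hScont.div_const _).mul continuous_const
    have hDcont : Continuous Df := hScont.add (hScont.div_const _)
    -- values at 0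
    have hM0 : Mm 0 = L := by
      ext i j
      rw [hMentry 0 i j]
      simp
    have hg0 : ∀ j, g 0 j = κ * w j := by
      intro j
      rw [hgdef]
      simp only [hM0]
      exact hadj i₀ j
    have hS0 : S 0 = κ := by
      rw [hSdef]
      simp only [hg0]
      rw [← Finset.mul_sum, hsw, mul_one]
    have hD0 : Df 0 = κ + κ / n := by rw [hDfdef]; simp only [hS0]
    have hD0ne : Df 0 ≠ 0 := by
      rw [hD0]
      have hn1 : (0:ℝ) < (n:ℝ) + 1 := by positivity
      have heq : κ + κ / n = κ * (((n:ℝ) + 1) / n) := by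
        field_simp
      rw [heq]
      exact mul_ne_zero hκ (div_ne_zero (ne_of_gt hn1) hnR)
    have hDu : ∀ δ : ℝ, (∑ i, u δ i) = Df δ := by
      intro δ
      rw [Fintype.sum_sum_type,
        Fintype.sum_unique (fun i : Unit => u δ (Sum.inr i))]
      rfl
    have hNu : ∀ δ : ℝ, (∑ i, u δ i * y0 i) = Nf δ := by
      intro δ
      rw [Fintype.sum_sum_type,
        Fintype.sum_unique (fun i : Unit => u δ (Sum.inr i) * y0 (Sum.inr i))]
      rfl
    have hDne : ∀ᶠ δ in 𝓝[>] (0:ℝ), Df δ ≠ 0 :=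
      ((hDcont.continuousAt (x := 0)).eventually_ne hD0ne).filter_mono nhdsWithin_le_nhds
    have hceq : (fun δ => Nf δ / Df δ) =ᶠ[𝓝[>] (0:ℝ)] c := by
      filter_upwards [hDne, self_mem_nhdsWithin] with δ hD hδ
      have hk := hkey δ hδ
      rw [hNu, hDu] at hk
      rw [hk]
      field_simp
    have hlim : Tendsto (fun δ => Nf δ / Df δ) (𝓝[>] (0:ℝ)) (𝓝 (Nf 0 / Df 0)) := by
      apply Tendsto.mono_left _ nhdsWithin_le_nhds
      exact hNcont.continuousAt.div hDcont.continuousAt hD0ne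
    have hNf0 : Nf 0 = κ * (∑ j, w j * y0 (Sum.inl j)) + (κ / n) * y0 (Sum.inr ()) := by
      rw [hNfdef]
      simp only [hg0, hS0]
      rw [Finset.sum_congr rfl (fun j _ => by rw [mul_assoc]), ← Finset.mul_sum]
    have hfinal : Nf 0 / Df 0 = ((n : ℝ) + 1)⁻¹ *
        ((n : ℝ) * (∑ j, w j * y0 (Sum.inl j)) + y0 (Sum.inr ())) := by
      have hD0ne' : κ + κ / n ≠ 0 := hD0 ▸ hD0ne
      rw [hNf0, hD0]
      have hn1 : ((n:ℝ)) + 1 ≠ 0 := by positivity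
      rw [div_eq_iff hD0ne']
      field_simp
    rw [← hfinal]
    exact Tendsto.congr' hceq hlim
end
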